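/- arXiv:0910.4224 — 9 statements merged into one kernel-verified Lean document; each statement's English description precedes it below -/
import Mathlib

section
/- For 0 ≤ k ≤ ⌊n/2⌋, the sum Σ_{i=0}^{k} C(n,i) is at most 2^{H(k/n)·n}, where H is the binary entropy function. -/
/-- The binary entropy function `H(p) = -p log₂ p - (1-p) log₂ (1-p)`
(with the convention `log₂ 0 = 0`, so that `H(0) = H(1) = 0`). -/
noncomputable def binH (p : ℝ) : ℝ := -p * Real.logb 2 p - (1 - p) * Real.logb 2 (1 - p)

theorem stmt2 (n k : ℕ) (hn : 0 < n) (hk : k ≤ n / 2) :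
    (∑ i ∈ Finset.range (k + 1), (n.choose i : ℝ)) ≤
      (2 : ℝ) ^ (binH ((k : ℝ) / (n : ℝ)) * (n : ℝ)) := by
  rcases Nat.eq_zero_or_pos k with rfl | hk1
  · simp [binH]
  have hn0 : (0:ℝ) < (n:ℝ) := by exact_mod_cast hn
  set p : ℝ := (k:ℝ)/(n:ℝ) with hpdef
  have h2k : 2 * k ≤ n := by omega
  have hkn : k ≤ n := by omega
  have hp0 : 0 < p := div_pos (by exact_mod_cast hk1) hn0
  have hp2 : p ≤ 1/2 := by
    have h2k' : ((2*k:ℕ):ℝ) ≤ (n:ℝ) := by exact_mod_cast h2k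
    push_cast at h2k'
    rw [hpdef, div_le_div_iff₀ hn0 (by norm_num)]
    linarith
  have hq0 : 0 < 1 - p := by linarith
  have hpq : p ≤ 1 - p := by linarith
  -- key pointwise bound
  have hstep : ∀ i ∈ Finset.range (k+1),
      (n.choose i : ℝ) * (p^k * (1-p)^(n-k)) ≤ (n.choose i : ℝ) * (p^i * (1-p)^(n-i)) := by
    intro i hi
    rw [Finset.mem_range] at hi
    have hik : i ≤ k := by omega
    apply mul_le_mul_of_nonneg_left _ (by positivity)
    have e1 : p^k = p^i * p^(k-i) := by rw [← pow_add]; congr 1; omega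
    have e2 : (1-p)^(n-i) = (1-p)^(k-i) * (1-p)^(n-k) := by rw [← pow_add]; congr 1; omega
    rw [e1, e2]
    have h3 : p^(k-i) ≤ (1-p)^(k-i) := pow_le_pow_left₀ hp0.le hpq _
    calc p^i * p^(k-i) * (1-p)^(n-k) ≤ p^i * (1-p)^(k-i) * (1-p)^(n-k) := by
          apply mul_le_mul_of_nonneg_right _ (by positivity)
          exact mul_le_mul_of_nonneg_left h3 (by positivity)
      _ = p^i * ((1-p)^(k-i) * (1-p)^(n-k)) := by ring
  -- binomial theorem bound
  have hbin : (∑ i ∈ Finset.range (n+1), (n.choose i : ℝ) * (p^i * (1-p)^(n-i))) = 1 := by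
    have h1 : (∑ i ∈ Finset.range (n+1), (n.choose i : ℝ) * (p^i * (1-p)^(n-i))) = (p+(1-p))^n := by
      rw [add_pow]
      apply Finset.sum_congr rfl
      intro i _; ring
    rw [h1]
    norm_num
  have hsub : (∑ i ∈ Finset.range (k+1), (n.choose i : ℝ) * (p^i * (1-p)^(n-i))) ≤
      (∑ i ∈ Finset.range (n+1), (n.choose i : ℝ) * (p^i * (1-p)^(n-i))) := by
    apply Finset.sum_le_sum_of_subset_of_nonneg (Finset.range_subset_range.2 (by omega))
    intro i _ _; positivity
  have hsum1 := hsub.trans_eq hbin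
  have hmain : (∑ i ∈ Finset.range (k+1), (n.choose i : ℝ)) * (p^k * (1-p)^(n-k)) ≤ 1 := by
    rw [Finset.sum_mul]
    exact le_trans (Finset.sum_le_sum hstep) hsum1
  have hposkk : (0:ℝ) < p^k * (1-p)^(n-k) := by positivity
  have hfinal : (∑ i ∈ Finset.range (k+1), (n.choose i : ℝ)) ≤ (p^k * (1-p)^(n-k))⁻¹ := by
    rw [← one_div, le_div_iff₀ hposkk]
    exact hmain
  refine hfinal.trans (le_of_eq ?_)
  -- compute RHS
  have hpk : p * n = (k:ℝ) := by rw [hpdef]; field_simp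
  have hqk : (1-p) * n = ((n-k:ℕ):ℝ) := by
    rw [hpdef, Nat.cast_sub hkn]; field_simp
  have hexp : binH p * n = Real.logb 2 p * (-(k:ℝ)) + Real.logb 2 (1-p) * (-((n-k:ℕ):ℝ)) := by
    rw [← hpk, ← hqk]; unfold binH; ring
  rw [hexp, Real.rpow_add (by norm_num : (0:ℝ) < 2),
      Real.rpow_mul (by norm_num : (0:ℝ) ≤ 2), Real.rpow_mul (by norm_num : (0:ℝ) ≤ 2),
      Real.rpow_logb (by norm_num) (by norm_num) hp0,
      Real.rpow_logb (by norm_num) (by norm_num) hq0,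
      Real.rpow_neg hp0.le, Real.rpow_neg hq0.le,
      Real.rpow_natCast, Real.rpow_natCast, mul_inv]
end

section
/- Let f, g : {0,1}^n → {0,1}, let 0 ≤ k ≤ n/2, and ζ > 0. For S ⊆ {1,…,n}, define F_S(x) = f(x) ∧ (g(x) ⊕ ⊕_{i∈S} x_i). Then with probability at least 1 - 2^{-n + H(k/n)n + 2ζn} over a uniformly random S ⊆ {1,…,n}, every T with |T| ≤ k satisfies |F̂_S(T) - (1/2)f̂(T)| ≤ 2^{-ζn-1}. -/
open scoped Classical

/-- Fourier coefficient of `h : {0,1}^n → ℝ` at `T`. -/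
noncomputable def bFourier {n : ℕ} (h : (Fin n → Bool) → ℝ) (T : Finset (Fin n)) : ℝ :=
  (∑ x : Fin n → Bool, h x * (-1 : ℝ) ^ (T.filter fun i => x i).card) / 2 ^ n

/-- `{0,1}`-valued function as a real function. -/
def b2r {n : ℕ} (h : (Fin n → Bool) → Bool) : (Fin n → Bool) → ℝ :=
  fun x => if h x then 1 else 0

noncomputable def chi {n : ℕ} (U : Finset (Fin n)) (x : Fin n → Bool) : ℝ :=
  ∏ i ∈ U, (if x i then (-1:ℝ) else 1)

lemma chi_eq {n : ℕ} (U : Finset (Fin n)) (x : Fin n → Bool) :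
    chi U x = (-1 : ℝ) ^ (U.filter fun i => x i).card := by
  rw [chi, Finset.prod_ite, Finset.prod_const, Finset.prod_const, one_pow, mul_one]

lemma chi_self {n : ℕ} (U : Finset (Fin n)) (x : Fin n → Bool) : chi U x * chi U x = 1 := by
  rw [chi, ← Finset.prod_mul_distrib]
  apply Finset.prod_eq_one
  intro i _
  by_cases h : x i <;> simp [h]

lemma chi_union {n : ℕ} {A B : Finset (Fin n)} (h : Disjoint A B) (x : Fin n → Bool) :
    chi (A ∪ B) x = chi A x * chi B x := Finset.prod_union h

lemma chi_mul {n : ℕ} (S T : Finset (Fin n)) (x : Fin n → Bool) :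
    chi S x * chi T x = chi (symmDiff S T) x := by
  have e1 : chi S x = chi (S \ T) x * chi (S ∩ T) x := by
    rw [← chi_union (Finset.disjoint_sdiff_inter S T), Finset.sdiff_union_inter]
  have e2 : chi T x = chi (T \ S) x * chi (S ∩ T) x := by
    rw [Finset.inter_comm S T, ← chi_union (Finset.disjoint_sdiff_inter T S),
      Finset.sdiff_union_inter]
  rw [symmDiff_def, Finset.sup_eq_union, chi_union disjoint_sdiff_sdiff, e1, e2,
    mul_mul_mul_comm, chi_self, mul_one]

lemma sum_chi_prod {n : ℕ} (x y : Fin n → Bool) :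
    ∑ U : Finset (Fin n), chi U x * chi U y = if x = y then (2:ℝ) ^ n else 0 := by
  have hterm : ∀ U : Finset (Fin n),
      chi U x * chi U y = ∏ i ∈ U, ((if x i then (-1:ℝ) else 1) * (if y i then (-1:ℝ) else 1)) := by
    intro U; rw [chi, chi, Finset.prod_mul_distrib]
  set a : Fin n → ℝ := fun i => (if x i then (-1:ℝ) else 1) * (if y i then (-1:ℝ) else 1) with ha
  have hsum : ∑ U : Finset (Fin n), chi U x * chi U y = ∏ i : Fin n, (a i + 1) := by
    rw [Finset.prod_add]
    simp only [Finset.prod_const_one, mul_one]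
    rw [Finset.powerset_univ]
    exact (Finset.sum_congr rfl fun U _ => hterm U).symm ▸ rfl
  rw [hsum]
  by_cases hxy : x = y
  · subst hxy
    simp only [if_pos rfl]
    have : ∀ i : Fin n, a i + 1 = 2 := by
      intro i; by_cases h : x i <;> simp [ha, h] <;> norm_num
    rw [Finset.prod_congr rfl fun i _ => this i, Finset.prod_const]
    simp
  · rw [if_neg hxy]
    obtain ⟨i, hi⟩ : ∃ i, x i ≠ y i := by
      by_contra hc; push_neg at hc; exact hxy (funext hc)
    apply Finset.prod_eq_zero (Finset.mem_univ i)
    rcases Bool.eq_false_or_eq_true (x i) with h | h <;>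
      rcases Bool.eq_false_or_eq_true (y i) with h' | h' <;>
      simp [ha, h, h'] at hi ⊢

lemma parseval {n : ℕ} (h : (Fin n → Bool) → ℝ) (hb : ∀ x, h x ^ 2 ≤ 1) :
    ∑ U : Finset (Fin n), (bFourier h U) ^ 2 ≤ 1 := by
  have hbf : ∀ U : Finset (Fin n), bFourier h U = (∑ x, h x * chi U x) / 2 ^ n := by
    intro U
    rw [bFourier]
    congr 1
    exact Finset.sum_congr rfl fun x _ => by rw [chi_eq]
  have key : ∑ U : Finset (Fin n), (∑ x, h x * chi U x) ^ 2 = 2 ^ n * ∑ x, h x ^ 2 := by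
    have step1 : ∀ U : Finset (Fin n),
        (∑ x, h x * chi U x) ^ 2 = ∑ x, ∑ y, h x * h y * (chi U x * chi U y) := by
      intro U
      rw [sq, Finset.sum_mul_sum]
      exact Finset.sum_congr rfl fun x _ => Finset.sum_congr rfl fun y _ => by ring
    calc ∑ U : Finset (Fin n), (∑ x, h x * chi U x) ^ 2
        = ∑ U : Finset (Fin n), ∑ x, ∑ y, h x * h y * (chi U x * chi U y) :=
          Finset.sum_congr rfl fun U _ => step1 U
      _ = ∑ x, ∑ y, ∑ U : Finset (Fin n), h x * h y * (chi U x * chi U y) := by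
          rw [Finset.sum_comm]
          exact Finset.sum_congr rfl fun x _ => Finset.sum_comm
      _ = ∑ x, ∑ y, h x * h y * (if x = y then (2:ℝ) ^ n else 0) := by
          refine Finset.sum_congr rfl fun x _ => Finset.sum_congr rfl fun y _ => ?_
          rw [← Finset.mul_sum, sum_chi_prod]
      _ = ∑ x, h x * h x * 2 ^ n := by
          refine Finset.sum_congr rfl fun x _ => ?_
          rw [Finset.sum_eq_single x]
          · simp
          · intro y _ hy; rw [if_neg fun hh => hy hh.symm, mul_zero]
          · intro hx; exact absurd (Finset.mem_univ x) hx
      _ = 2 ^ n * ∑ x, h x ^ 2 := by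
          rw [Finset.mul_sum]
          exact Finset.sum_congr rfl fun x _ => by ring
  have h2n : (0:ℝ) < 2 ^ n := by positivity
  have hsum2 : ∑ x : Fin n → Bool, h x ^ 2 ≤ 2 ^ n := by
    calc ∑ x : Fin n → Bool, h x ^ 2 ≤ ∑ _x : Fin n → Bool, (1:ℝ) :=
          Finset.sum_le_sum fun x _ => hb x
      _ = 2 ^ n := by simp [Fintype.card_fun]
  calc ∑ U : Finset (Fin n), (bFourier h U) ^ 2
      = (2 ^ n * ∑ x, h x ^ 2) / (2 ^ n * 2 ^ n) := by
        rw [← key, Finset.sum_div]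
        exact Finset.sum_congr rfl fun U _ => by rw [hbf U]; ring
    _ ≤ (2 ^ n * 2 ^ n) / (2 ^ n * 2 ^ n) := by
        apply div_le_div_of_nonneg_right ?_ (by positivity)
        · exact mul_le_mul_of_nonneg_left hsum2 (le_of_lt h2n)
    _ = 1 := div_self (by positivity)

lemma pointwise_aux (b c : Bool) (m : ℕ) :
    (if (b && (c != m.bodd)) then (1:ℝ) else 0)
      = 1/2 * (if b then (1:ℝ) else 0)
        - 1/2 * (((if b then (1:ℝ) else 0) * (if c then (-1:ℝ) else 1)) * (-1:ℝ)^m) := by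
  have hpow : (-1:ℝ) ^ m = if m.bodd then -1 else 1 := by
    cases hb : m.bodd
    · have : Even m := by
        rw [Nat.even_iff, Nat.mod_two_of_bodd, hb]
        rfl
      simp [this.neg_one_pow]
    · have : Odd m := by
        rw [Nat.odd_iff, Nat.mod_two_of_bodd, hb]
        rfl
      simp [this.neg_one_pow]
  rw [hpow]
  cases b <;> cases c <;> cases hb : m.bodd <;>
    simp [hb] <;> norm_num

lemma pointwise {n : ℕ} (f g : (Fin n → Bool) → Bool) (S : Finset (Fin n)) (x : Fin n → Bool) :
    b2r (fun x => f x && (g x != (S.filter fun i => x i).card.bodd)) x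
      = (1/2) * b2r f x - (1/2) * ((b2r f x * (if g x then (-1:ℝ) else 1)) * chi S x) := by
  rw [chi_eq]
  simp only [b2r]
  exact pointwise_aux (f x) (g x) _

lemma four_id {n : ℕ} (f g : (Fin n → Bool) → Bool) (S T : Finset (Fin n)) :
    bFourier (b2r fun x => f x && (g x != (S.filter fun i => x i).card.bodd)) T
      = (1/2) * bFourier (b2r f) T
        - (1/2) * bFourier (fun x => b2r f x * (if g x then (-1:ℝ) else 1)) (symmDiff S T) := by
  have hterm : ∀ x : Fin n → Bool,
      b2r (fun x => f x && (g x != (S.filter fun i => x i).card.bodd)) x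
          * (-1:ℝ) ^ (T.filter fun i => x i).card
        = (1/2) * (b2r f x * (-1:ℝ) ^ (T.filter fun i => x i).card)
          - (1/2) * ((b2r f x * (if g x then (-1:ℝ) else 1))
              * (-1:ℝ) ^ ((symmDiff S T).filter fun i => x i).card) := by
    intro x
    rw [← chi_eq, ← chi_eq, ← chi_mul, pointwise]
    ring
  have hsum : (∑ x : Fin n → Bool,
        b2r (fun x => f x && (g x != (S.filter fun i => x i).card.bodd)) x
          * (-1:ℝ) ^ (T.filter fun i => x i).card)
      = (1/2) * (∑ x : Fin n → Bool, b2r f x * (-1:ℝ) ^ (T.filter fun i => x i).card)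
        - (1/2) * (∑ x : Fin n → Bool, (b2r f x * (if g x then (-1:ℝ) else 1))
            * (-1:ℝ) ^ ((symmDiff S T).filter fun i => x i).card) := by
    rw [Finset.mul_sum, Finset.mul_sum, ← Finset.sum_sub_distrib]
    exact Finset.sum_congr rfl fun x _ => hterm x
  rw [bFourier, bFourier, bFourier, hsum]
  ring

lemma diff_abs {n : ℕ} (f g : (Fin n → Bool) → Bool) (S T : Finset (Fin n)) :
    |bFourier (b2r fun x => f x && (g x != (S.filter fun i => x i).card.bodd)) T
        - (1/2) * bFourier (b2r f) T|
      = (1/2) * |bFourier (fun x => b2r f x * (if g x then (-1:ℝ) else 1)) (symmDiff S T)| := by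
  rw [four_id]
  rw [show (1/2) * bFourier (b2r f) T
        - (1/2) * bFourier (fun x => b2r f x * (if g x then (-1:ℝ) else 1)) (symmDiff S T)
        - (1/2) * bFourier (b2r f) T
      = -((1/2) * bFourier (fun x => b2r f x * (if g x then (-1:ℝ) else 1)) (symmDiff S T)) by ring]
  rw [abs_neg, abs_mul]
  norm_num

lemma count_card_le {n : ℕ} (k : ℕ) (hk : (k : ℝ) ≤ n / 2) :
    ((Finset.univ.filter fun T : Finset (Fin n) => T.card ≤ k).card : ℝ)
      ≤ 2 ^ (binH ((k : ℝ) / n) * n) := by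
  rcases Nat.eq_zero_or_pos k with hk0 | hkpos
  · subst hk0
    have hset : (Finset.univ.filter fun T : Finset (Fin n) => T.card ≤ 0) = {∅} := by
      ext T
      simp [Nat.le_zero, Finset.card_eq_zero]
    rw [hset]
    have : binH ((0 : ℕ) : ℝ) / (n:ℝ) * (n:ℝ) = 0 := by
      simp [binH]
    simp [binH]
  · -- k ≥ 1
    have hn2k : 2 * k ≤ n := by
      have : (2 * k : ℝ) ≤ n := by push_cast; linarith
      exact_mod_cast this
    have hnpos : 0 < n := by omega
    have hkn : k ≤ n := by omega
    have hnR : (0:ℝ) < n := by exact_mod_cast hnpos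
    set p : ℝ := (k : ℝ) / n with hp_def
    set q : ℝ := 1 - p with hq_def
    have hp : 0 < p := by
      apply div_pos _ hnR
      exact_mod_cast hkpos
    have hp2 : p ≤ 1 / 2 := by
      rw [hp_def, div_le_div_iff₀ hnR (by norm_num)]
      linarith
    have hq : (1:ℝ) / 2 ≤ q := by rw [hq_def]; linarith
    have hq0 : 0 < q := by linarith
    have hpq : p ≤ q := by linarith
    -- total sum is 1
    have htot : ∑ T : Finset (Fin n), p ^ T.card * q ^ (n - T.card) = 1 := by
      have h1 := Finset.prod_add (fun _ : Fin n => p) (fun _ : Fin n => q) Finset.univ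
      simp only [Finset.prod_const, Finset.powerset_univ] at h1
      have hpq1 : p + q = 1 := by rw [hq_def]; ring
      rw [hpq1, one_pow] at h1
      calc ∑ T : Finset (Fin n), p ^ T.card * q ^ (n - T.card)
          = ∑ T : Finset (Fin n), p ^ T.card * q ^ (Finset.univ \ T).card := by
            refine Finset.sum_congr rfl fun T _ => ?_
            rw [Finset.card_univ_diff, Fintype.card_fin]
        _ = 1 := h1.symm
    have hmono : ∀ T : Finset (Fin n), T.card ≤ k →
        p ^ k * q ^ (n - k) ≤ p ^ T.card * q ^ (n - T.card) := by
      intro T hT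
      set j := T.card with hj
      have hjk : j ≤ k := hT
      have e1 : p ^ k = p ^ j * p ^ (k - j) := by
        rw [← pow_add]
        congr 1
        omega
      have e2 : q ^ (k - j) * q ^ (n - k) = q ^ (n - j) := by
        rw [← pow_add]
        congr 1
        omega
      calc p ^ k * q ^ (n - k) = p ^ j * (p ^ (k - j) * q ^ (n - k)) := by rw [e1]; ring
        _ ≤ p ^ j * (q ^ (k - j) * q ^ (n - k)) := by
            apply mul_le_mul_of_nonneg_left _ (by positivity)
            apply mul_le_mul_of_nonneg_right _ (by positivity)
            exact pow_le_pow_left₀ hp.le hpq _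
        _ = p ^ j * q ^ (n - j) := by rw [e2]
    have hcount : ((Finset.univ.filter fun T : Finset (Fin n) => T.card ≤ k).card : ℝ)
        * (p ^ k * q ^ (n - k)) ≤ 1 := by
      calc ((Finset.univ.filter fun T : Finset (Fin n) => T.card ≤ k).card : ℝ)
            * (p ^ k * q ^ (n - k))
          = ∑ _T ∈ Finset.univ.filter fun T : Finset (Fin n) => T.card ≤ k,
              (p ^ k * q ^ (n - k)) := by rw [Finset.sum_const, nsmul_eq_mul]
        _ ≤ ∑ T ∈ Finset.univ.filter fun T : Finset (Fin n) => T.card ≤ k,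
              p ^ T.card * q ^ (n - T.card) := by
            apply Finset.sum_le_sum
            intro T hT
            exact hmono T (Finset.mem_filter.mp hT).2
        _ ≤ ∑ T : Finset (Fin n), p ^ T.card * q ^ (n - T.card) := by
            apply Finset.sum_le_sum_of_subset_of_nonneg (Finset.filter_subset _ _)
            intro T _ _
            positivity
        _ = 1 := htot
    -- express p^k q^(n-k) as 2 ^ (- binH p * n)
    have hppow : p ^ k = (2:ℝ) ^ ((k : ℝ) * Real.logb 2 p) := by
      have h2 : p = (2:ℝ) ^ (Real.logb 2 p) := (Real.rpow_logb two_pos (by norm_num) hp).symm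
      rw [mul_comm, Real.rpow_mul (by norm_num : (0:ℝ) ≤ 2), ← h2, Real.rpow_natCast]
    have hqpow : q ^ (n - k) = (2:ℝ) ^ (((n - k : ℕ) : ℝ) * Real.logb 2 q) := by
      have h2 : q = (2:ℝ) ^ (Real.logb 2 q) := (Real.rpow_logb two_pos (by norm_num) hq0).symm
      rw [mul_comm, Real.rpow_mul (by norm_num : (0:ℝ) ≤ 2), ← h2, Real.rpow_natCast]
    have hexp : p ^ k * q ^ (n - k)
        = (2:ℝ) ^ (-(binH ((k : ℝ) / n) * n)) := by
      rw [hppow, hqpow, ← Real.rpow_add two_pos]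
      congr 1
      have hcast : ((n - k : ℕ) : ℝ) = (n : ℝ) - k := by
        rw [Nat.cast_sub hkn]
      rw [hcast, binH, ← hp_def]
      have hq' : 1 - p = q := by rw [hq_def]
      rw [hq']
      have hpn : p * n = k := by
        rw [hp_def]
        field_simp
      have hqn : q * n = (n : ℝ) - k := by
        rw [hq_def, hp_def]
        field_simp
      clear_value p q
      linear_combination (-Real.logb 2 p) * hpn + (-Real.logb 2 q) * hqn
    have hpos : (0:ℝ) < p ^ k * q ^ (n - k) := by positivity
    rw [hexp] at hcount hpos
    calc ((Finset.univ.filter fun T : Finset (Fin n) => T.card ≤ k).card : ℝ)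
        = ((Finset.univ.filter fun T : Finset (Fin n) => T.card ≤ k).card : ℝ)
            * (2:ℝ) ^ (-(binH ((k : ℝ) / n) * n)) * (2:ℝ) ^ (binH ((k : ℝ) / n) * n) := by
          rw [mul_assoc, ← Real.rpow_add two_pos]
          simp
      _ ≤ 1 * (2:ℝ) ^ (binH ((k : ℝ) / n) * n) := by
          apply mul_le_mul_of_nonneg_right hcount (Real.rpow_nonneg (by norm_num) _)
      _ = (2:ℝ) ^ (binH ((k : ℝ) / n) * n) := one_mul _
theorem stmt6 {n : ℕ} (f g : (Fin n → Bool) → Bool) (k : ℕ) (hk : (k : ℝ) ≤ n / 2)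
    (ζ : ℝ) (hζ : 0 < ζ) :
    (1 - (2 : ℝ) ^ (-(n : ℝ) + binH ((k : ℝ) / n) * n + 2 * ζ * n)) * 2 ^ n ≤
      ((Finset.univ.filter fun S : Finset (Fin n) =>
          ∀ T : Finset (Fin n), T.card ≤ k →
            |bFourier (b2r fun x => f x && (g x != (S.filter fun i => x i).card.bodd)) T
                - (1 / 2) * bFourier (b2r f) T| ≤ (2 : ℝ) ^ (-ζ * n - 1)).card : ℝ) := by
  set hfun : (Fin n → Bool) → ℝ := fun x => b2r f x * (if g x then (-1:ℝ) else 1) with hfun_def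
  have hb : ∀ x, hfun x ^ 2 ≤ 1 := by
    intro x
    rw [hfun_def]
    simp only [b2r]
    cases hf : f x <;> cases hg : g x <;> simp [hf, hg] <;> norm_num
  have hpars := parseval hfun hb
  set ε : ℝ := (2:ℝ) ^ (-(ζ * (n:ℝ))) with hε
  have hεpos : 0 < ε := Real.rpow_pos_of_pos two_pos _
  set B := Finset.univ.filter fun U : Finset (Fin n) => ε < |bFourier hfun U| with hB
  have hBcard : (B.card : ℝ) ≤ (2:ℝ) ^ (2 * ζ * (n:ℝ)) := by
    have h1 : (B.card : ℝ) * ε ^ 2 ≤ 1 := by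
      calc (B.card : ℝ) * ε ^ 2 = ∑ _U ∈ B, ε ^ 2 := by
            rw [Finset.sum_const, nsmul_eq_mul]
        _ ≤ ∑ U ∈ B, (bFourier hfun U) ^ 2 := by
            apply Finset.sum_le_sum
            intro U hU
            have h2 := (Finset.mem_filter.mp hU).2
            calc ε ^ 2 ≤ |bFourier hfun U| ^ 2 := by
                  apply pow_le_pow_left₀ hεpos.le h2.le
              _ = (bFourier hfun U) ^ 2 := sq_abs _
        _ ≤ ∑ U : Finset (Fin n), (bFourier hfun U) ^ 2 := by
            apply Finset.sum_le_sum_of_subset_of_nonneg (Finset.filter_subset _ _)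
            intro U _ _
            exact sq_nonneg _
        _ ≤ 1 := hpars
    have hε2 : ε ^ 2 = (2:ℝ) ^ (-(2 * ζ * (n:ℝ))) := by
      rw [hε, ← Real.rpow_natCast ((2:ℝ) ^ (-(ζ * (n:ℝ)))) 2, ← Real.rpow_mul (by norm_num)]
      congr 1
      push_cast
      ring
    calc (B.card : ℝ)
        = (B.card : ℝ) * ε ^ 2 * (2:ℝ) ^ (2 * ζ * (n:ℝ)) := by
          rw [hε2, mul_assoc, ← Real.rpow_add two_pos]
          simp
      _ ≤ 1 * (2:ℝ) ^ (2 * ζ * (n:ℝ)) :=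
          mul_le_mul_of_nonneg_right h1 (Real.rpow_nonneg (by norm_num) _)
      _ = (2:ℝ) ^ (2 * ζ * (n:ℝ)) := one_mul _
  set Tk := Finset.univ.filter fun T : Finset (Fin n) => T.card ≤ k with hTk
  have hTkcard : (Tk.card : ℝ) ≤ 2 ^ (binH ((k:ℝ)/n) * n) := count_card_le k hk
  set D := (B ×ˢ Tk).image fun P : Finset (Fin n) × Finset (Fin n) => symmDiff P.1 P.2 with hD
  have hDcard : (D.card : ℝ) ≤ (2:ℝ) ^ (binH ((k:ℝ)/n) * n + 2 * ζ * n) := by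
    have h1 : D.card ≤ B.card * Tk.card :=
      le_trans Finset.card_image_le (le_of_eq (Finset.card_product _ _))
    calc (D.card : ℝ) ≤ (B.card : ℝ) * Tk.card := by exact_mod_cast h1
      _ ≤ (2:ℝ) ^ (2 * ζ * (n:ℝ)) * 2 ^ (binH ((k:ℝ)/n) * n) :=
          mul_le_mul hBcard hTkcard (Nat.cast_nonneg _) (Real.rpow_nonneg (by norm_num) _)
      _ = (2:ℝ) ^ (binH ((k:ℝ)/n) * n + 2 * ζ * n) := by
          rw [← Real.rpow_add two_pos]
          ring_nf
  have hsub : Finset.univ \ D ⊆ (Finset.univ.filter fun S : Finset (Fin n) =>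
      ∀ T : Finset (Fin n), T.card ≤ k →
        |bFourier (b2r fun x => f x && (g x != (S.filter fun i => x i).card.bodd)) T
            - (1 / 2) * bFourier (b2r f) T| ≤ (2 : ℝ) ^ (-ζ * n - 1)) := by
    intro S hS
    rw [Finset.mem_sdiff] at hS
    rw [Finset.mem_filter]
    refine ⟨Finset.mem_univ _, fun T hT => ?_⟩
    by_contra hgt
    push_neg at hgt
    rw [diff_abs f g S T] at hgt
    have hhalf : (2:ℝ) ^ (-ζ * (n:ℝ) - 1) = (1/2) * ε := by
      rw [hε, show -ζ * (n:ℝ) - 1 = (-(ζ * (n:ℝ))) + (-1) by ring, Real.rpow_add two_pos,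
        Real.rpow_neg_one]
      ring
    rw [hhalf] at hgt
    have hbig : ε < |bFourier hfun (symmDiff S T)| := by linarith
    apply hS.2
    rw [hD, Finset.mem_image]
    refine ⟨(symmDiff S T, T), ?_, symmDiff_symmDiff_cancel_right T S⟩
    rw [Finset.mem_product]
    exact ⟨Finset.mem_filter.mpr ⟨Finset.mem_univ _, hbig⟩,
      Finset.mem_filter.mpr ⟨Finset.mem_univ _, hT⟩⟩
  have hDle : D.card ≤ 2 ^ n := by
    calc D.card ≤ Finset.univ.card := Finset.card_le_card (Finset.subset_univ _)
      _ = 2 ^ n := by rw [Finset.card_univ, Fintype.card_finset, Fintype.card_fin]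
  have hcard1 : (2:ℝ) ^ n - D.card ≤ ((Finset.univ.filter fun S : Finset (Fin n) =>
      ∀ T : Finset (Fin n), T.card ≤ k →
        |bFourier (b2r fun x => f x && (g x != (S.filter fun i => x i).card.bodd)) T
            - (1 / 2) * bFourier (b2r f) T| ≤ (2 : ℝ) ^ (-ζ * n - 1)).card : ℝ) := by
    have h2 : (Finset.univ \ D).card = 2 ^ n - D.card := by
      rw [Finset.card_sdiff_of_subset (Finset.subset_univ _), Finset.card_univ, Fintype.card_finset,
        Fintype.card_fin]
    have h3 := Finset.card_le_card hsub
    rw [h2] at h3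
    have h4 : ((2 ^ n - D.card : ℕ) : ℝ) = (2:ℝ) ^ n - D.card := by
      rw [Nat.cast_sub hDle]
      push_cast
      ring
    rw [← h4]
    exact_mod_cast h3
  have harr : (1 - (2 : ℝ) ^ (-(n : ℝ) + binH ((k : ℝ) / n) * n + 2 * ζ * n)) * 2 ^ n
      = (2:ℝ) ^ n - (2:ℝ) ^ (binH ((k:ℝ)/n) * n + 2 * ζ * n) := by
    rw [sub_mul, one_mul]
    congr 1
    rw [show ((2:ℝ) ^ n : ℝ) = (2:ℝ) ^ ((n:ℕ):ℝ) from (Real.rpow_natCast 2 n).symm,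
      ← Real.rpow_add two_pos]
    congr 1
    ring
  rw [harr]
  linarith
end

section
/- Fix an integer k ≥ 0 and reals ε, ζ ∈ (0, 1/2). Choose S₀, S₁, …, S_k ⊆ {1,…,n} uniformly and independently at random. Fix an integer s and define f : {0,1}^n → {0,1} by f(x) = 1 iff Σ_{i=0}^{k} 2^i Σ_{j∈S_i} x_j ≡ s (mod 2^{k+1}). Then with probability at least 1 - (k+1)·2^{-n + H(ε)n + 2ζn}, for every T with |T| ≤ εn one has |f̂(T) - 2^{-(k+1)}·δ_{T,∅}| ≤ 2^{-ζn}. -/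
open scoped Classical

namespace Stmt8aux
open Finset


abbrev B (k : ℕ) := Fin (k+1) → Bool

noncomputable def beta (k : ℕ) (b : B k) : ZMod (2^(k+1)) :=
  ∑ i, if b i then (2:ZMod (2^(k+1)))^(i:ℕ) else 0

lemma exists_bits : ∀ (m t : ℕ), t < 2^m → ∃ b : Fin m → Bool,
    (∑ i : Fin m, if b i then 2^(i:ℕ) else 0) = t := by
  intro m
  induction m with
  | zero =>
    intro t ht
    refine ⟨fun i => i.elim0, ?_⟩
    simp at ht ⊢
    omega
  | succ m ih =>
    intro t ht
    obtain ⟨b', hb'⟩ := ih (t / 2) (by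
      apply Nat.div_lt_of_lt_mul
      rw [pow_succ] at ht
      omega)
    refine ⟨Fin.cons (decide (t % 2 = 1)) b', ?_⟩
    rw [Fin.sum_univ_succ]
    have h0 : (if (Fin.cons (decide (t % 2 = 1)) b' : Fin (m+1) → Bool) 0 then 2^((0:Fin (m+1)):ℕ) else 0) = t % 2 := by
      rw [Fin.cons_zero]
      have := Nat.mod_two_eq_zero_or_one t
      rcases this with h | h <;> simp [h]
    rw [h0]
    have h1 : ∀ i : Fin m, (if (Fin.cons (decide (t % 2 = 1)) b' : Fin (m+1) → Bool) i.succ then 2^((i.succ : Fin (m+1)):ℕ) else 0) = 2 * (if b' i then 2^(i:ℕ) else 0) := by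
      intro i
      rw [Fin.cons_succ]
      by_cases h : b' i <;> simp [h, Fin.val_succ, pow_succ] <;> ring
    simp only [h1]
    rw [← Finset.mul_sum, hb']
    omega

lemma beta_bijective (k : ℕ) : Function.Bijective (beta k) := by
  haveI : NeZero (2^(k+1)) := ⟨by positivity⟩
  rw [Fintype.bijective_iff_surjective_and_card]
  constructor
  · intro z
    obtain ⟨b, hb⟩ := exists_bits (k+1) z.val (ZMod.val_lt z)
    refine ⟨b, ?_⟩
    have : ((∑ i : Fin (k+1), if b i then 2^(i:ℕ) else 0 : ℕ) : ZMod (2^(k+1))) = ((z.val : ℕ) : ZMod (2^(k+1))) := by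
      rw [hb]
    rw [ZMod.natCast_val, ZMod.cast_id] at this
    rw [← this]
    unfold beta
    push_cast
    apply Finset.sum_congr rfl
    intro i _
    split <;> simp
  · simp [ZMod.card]

lemma countA (k : ℕ) {ι : Type} [Fintype ι] [DecidableEq ι] (x : ι → Bool) (j₀ : ι)
    (hj : x j₀ = true) (c : ZMod (2^(k+1))) :
    (univ.filter fun g : ι → B k => (∑ j, if x j then beta k (g j) else 0) = c).card
      = 2 ^ ((k+1) * (Fintype.card ι - 1)) := by
  classical
  rw [Finset.card_filter]
  set e := (Equiv.piSplitAt j₀ (fun _ : ι => B k)).symm with he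
  rw [← Equiv.sum_comp e (fun g : ι → B k => if (∑ j, if x j then beta k (g j) else 0) = c then (1:ℕ) else 0)]
  rw [Fintype.sum_prod_type]
  have key : ∀ (a : B k) (r : {j : ι // j ≠ j₀} → B k),
      (∑ j, if x j then beta k ((e (a, r)) j) else 0)
        = beta k a + ∑ j : {j : ι // j ≠ j₀}, if x j.1 then beta k (r j) else 0 := by
    intro a r
    have hsplit : ∀ j : ι, (e (a, r)) j = if h : j = j₀ then a else r ⟨j, h⟩ := by
      intro j
      simp [he, Equiv.piSplitAt_symm_apply]
    rw [← Finset.add_sum_erase _ _ (Finset.mem_univ j₀)]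
    congr 1
    · rw [hj]
      simp [hsplit]
    · rw [Finset.sum_subtype (p := fun j => j ≠ j₀) (Finset.univ.erase j₀) (by simp) (fun j => if x j then beta k ((e (a,r)) j) else 0)]
      apply Finset.sum_congr rfl
      intro j _
      have : (e (a, r)) j.1 = r j := by rw [hsplit]; simp [j.2]
      rw [this]
  simp only [key]
  have inner : ∀ r : {j : ι // j ≠ j₀} → B k,
      (∑ a : B k, if (beta k a + ∑ j : {j : ι // j ≠ j₀}, if x j.1 then beta k (r j) else 0) = c then (1:ℕ) else 0) = 1 := by
    intro r
    set C := ∑ j : {j : ι // j ≠ j₀}, if x j.1 then beta k (r j) else 0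
    set bE := Equiv.ofBijective (beta k) (beta_bijective k)
    have : ∀ a : B k, ((beta k a + C) = c) ↔ a = bE.symm (c - C) := by
      intro a
      rw [Equiv.eq_symm_apply]
      show beta k a + C = c ↔ bE a = c - C
      show _ ↔ beta k a = c - C
      constructor <;> intro h
      · rw [← h]; ring
      · rw [h]; ring
    simp only [this]
    rw [Finset.sum_ite_eq' Finset.univ (bE.symm (c - C)) (fun _ => (1:ℕ))]
    simp
  rw [Finset.sum_comm]
  simp only [inner]
  rw [Finset.sum_const, smul_eq_mul, mul_one, Finset.card_univ]
  have hc1 : Fintype.card {j : ι // j ≠ j₀} = Fintype.card ι - 1 := by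
    rw [Fintype.card_subtype]
    rw [show (Finset.filter (fun j => j ≠ j₀) Finset.univ) = Finset.univ.erase j₀ from Finset.filter_ne' Finset.univ j₀]
    rw [Finset.card_erase_of_mem (Finset.mem_univ j₀), Finset.card_univ]
  rw [Fintype.card_fun, hc1]
  have : Fintype.card (B k) = 2^(k+1) := by
    rw [Fintype.card_fun]
    simp
  rw [this, ← pow_mul]

lemma countB (k : ℕ) {ι : Type} [Fintype ι] [DecidableEq ι] (x y : ι → Bool) (j₀ j₁ : ι)
    (hx : x j₀ = true) (hy0 : y j₀ = false) (hy1 : y j₁ = true) (c c' : ZMod (2^(k+1))) :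
    (univ.filter fun g : ι → B k =>
        (∑ j, if x j then beta k (g j) else 0) = c ∧ (∑ j, if y j then beta k (g j) else 0) = c').card
      = 2 ^ ((k+1) * (Fintype.card ι - 2)) := by
  classical
  rw [Finset.card_filter]
  set e := (Equiv.piSplitAt j₀ (fun _ : ι => B k)).symm with he
  rw [← Equiv.sum_comp e (fun g : ι → B k =>
      if ((∑ j, if x j then beta k (g j) else 0) = c ∧ (∑ j, if y j then beta k (g j) else 0) = c') then (1:ℕ) else 0)]
  rw [Fintype.sum_prod_type]
  have hsplit : ∀ (a : B k) (r : {j : ι // j ≠ j₀} → B k) (j : ι),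
      (e (a, r)) j = if h : j = j₀ then a else r ⟨j, h⟩ := by
    intro a r j
    simp [he, Equiv.piSplitAt_symm_apply]
  have keyx : ∀ (a : B k) (r : {j : ι // j ≠ j₀} → B k),
      (∑ j, if x j then beta k ((e (a, r)) j) else 0)
        = beta k a + ∑ j : {j : ι // j ≠ j₀}, if x j.1 then beta k (r j) else 0 := by
    intro a r
    rw [← Finset.add_sum_erase _ _ (Finset.mem_univ j₀)]
    congr 1
    · rw [hx]; simp [hsplit]
    · rw [Finset.sum_subtype (p := fun j => j ≠ j₀) (Finset.univ.erase j₀) (by simp)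
        (fun j => if x j then beta k ((e (a,r)) j) else 0)]
      refine Finset.sum_congr rfl fun j _ => ?_
      rw [hsplit]; simp [j.2]
  have keyy : ∀ (a : B k) (r : {j : ι // j ≠ j₀} → B k),
      (∑ j, if y j then beta k ((e (a, r)) j) else 0)
        = ∑ j : {j : ι // j ≠ j₀}, if y j.1 then beta k (r j) else 0 := by
    intro a r
    rw [← Finset.add_sum_erase _ _ (Finset.mem_univ j₀)]
    rw [hy0]
    simp only [Bool.false_eq_true, if_false, zero_add]
    rw [Finset.sum_subtype (p := fun j => j ≠ j₀) (Finset.univ.erase j₀) (by simp)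
        (fun j => if y j then beta k ((e (a,r)) j) else 0)]
    refine Finset.sum_congr rfl fun j _ => ?_
    rw [hsplit]; simp [j.2]
  simp only [keyx, keyy]
  -- now: ∑ a, ∑ r, ite (A a r ∧ B r) 1 0
  rw [Finset.sum_comm]
  have inner : ∀ r : {j : ι // j ≠ j₀} → B k,
      (∑ a : B k, if ((beta k a + ∑ j : {j : ι // j ≠ j₀}, if x j.1 then beta k (r j) else 0) = c
          ∧ (∑ j : {j : ι // j ≠ j₀}, if y j.1 then beta k (r j) else 0) = c') then (1:ℕ) else 0)
        = if (∑ j : {j : ι // j ≠ j₀}, if y j.1 then beta k (r j) else 0) = c' then 1 else 0 := by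
    intro r
    by_cases hB : (∑ j : {j : ι // j ≠ j₀}, if y j.1 then beta k (r j) else 0) = c'
    · simp only [hB, and_true, if_true]
      set C := ∑ j : {j : ι // j ≠ j₀}, if x j.1 then beta k (r j) else 0
      set bE := Equiv.ofBijective (beta k) (beta_bijective k)
      have hiff : ∀ a : B k, ((beta k a + C) = c) ↔ a = bE.symm (c - C) := by
        intro a
        rw [Equiv.eq_symm_apply]
        show beta k a + C = c ↔ beta k a = c - C
        constructor <;> intro h
        · rw [← h]; ring
        · rw [h]; ring
      simp only [hiff]
      rw [Finset.sum_ite_eq' Finset.univ (bE.symm (c - C)) (fun _ => (1:ℕ))]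
      simp
    · simp [hB]
  simp only [inner]
  have hne : j₁ ≠ j₀ := by
    intro h
    rw [h, hy0] at hy1
    exact absurd hy1 (by simp)
  have := countA k (ι := {j : ι // j ≠ j₀}) (fun j => y j.1) ⟨j₁, hne⟩ hy1 c'
  rw [Finset.card_filter] at this
  rw [this]
  have hc1 : Fintype.card {j : ι // j ≠ j₀} = Fintype.card ι - 1 := by
    rw [Fintype.card_subtype]
    rw [show (Finset.filter (fun j => j ≠ j₀) Finset.univ) = Finset.univ.erase j₀ from Finset.filter_ne' Finset.univ j₀]
    rw [Finset.card_erase_of_mem (Finset.mem_univ j₀), Finset.card_univ]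
  rw [hc1, Nat.sub_sub]

variable {n : ℕ}


noncomputable def gOf (k n : ℕ) (Ss : Fin (k+1) → Finset (Fin n)) : Fin n → B k :=
  fun j i => decide (j ∈ Ss i)

lemma gOf_bijective (k n : ℕ) : Function.Bijective (gOf k n) := by
  constructor
  · intro S S' h
    funext i
    ext j
    have := congrFun (congrFun h j) i
    simpa [gOf] using this
  · intro g
    refine ⟨fun i => univ.filter (fun j => g j i = true), ?_⟩
    funext j i
    simp [gOf]

/-- The integer sum from the statement. -/
def vI (k n : ℕ) (Ss : Fin (k+1) → Finset (Fin n)) (x : Fin n → Bool) : ℤ :=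
  ∑ i : Fin (k+1), 2 ^ (i : ℕ) * ∑ j ∈ Ss i, (if x j then (1 : ℤ) else 0)

lemma cast_vI (k n : ℕ) (Ss : Fin (k+1) → Finset (Fin n)) (x : Fin n → Bool) :
    ((vI k n Ss x : ℤ) : ZMod (2^(k+1)))
      = ∑ j, if x j then beta k (gOf k n Ss j) else 0 := by
  unfold vI
  push_cast
  have step1 : ∀ i : Fin (k+1), (∑ j ∈ Ss i, (if x j then (1 : ZMod (2^(k+1))) else 0))
      = ∑ j : Fin n, if j ∈ Ss i then (if x j then (1 : ZMod (2^(k+1))) else 0) else 0 := by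
    intro i
    rw [Finset.sum_ite_mem Finset.univ (Ss i), Finset.univ_inter]
  simp only [step1, Finset.mul_sum]
  rw [Finset.sum_comm]
  refine Finset.sum_congr rfl fun j _ => ?_
  by_cases hx : x j
  · simp only [hx, if_true]
    unfold beta gOf
    refine Finset.sum_congr rfl fun i _ => ?_
    by_cases hm : j ∈ Ss i <;> simp [hm]
  · simp [hx]

lemma count_one (k n : ℕ) (s : ℤ) (x : Fin n → Bool) (j₀ : Fin n) (hj : x j₀ = true) :
    (univ.filter fun Ss : Fin (k+1) → Finset (Fin n) =>
        vI k n Ss x ≡ s [ZMOD (2^(k+1))]).card = 2 ^ ((k+1) * (n - 1)) := by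
  have hcond : ∀ Ss : Fin (k+1) → Finset (Fin n),
      (vI k n Ss x ≡ s [ZMOD (2^(k+1))])
        ↔ (∑ j, if x j then beta k (gOf k n Ss j) else 0) = ((s : ZMod (2^(k+1)))) := by
    intro Ss
    rw [← cast_vI, (ZMod.intCast_eq_intCast_iff _ _ _)]
    have hmod : (((2:ℕ)^(k+1):ℕ):ℤ) = (2:ℤ)^(k+1) := by push_cast; rfl
    rw [hmod]
  simp only [hcond]
  have := countA k (ι := Fin n) x j₀ hj ((s : ZMod (2^(k+1))))
  rw [Fintype.card_fin] at this
  rw [← this]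
  rw [Finset.card_filter, Finset.card_filter]
  exact Fintype.sum_bijective (gOf k n) (gOf_bijective k n) _ _ (fun Ss => rfl)

lemma count_two (k n : ℕ) (s : ℤ) (x y : Fin n → Bool) (hxy : x ≠ y)
    (hx : ∃ j, x j = true) (hy : ∃ j, y j = true) :
    (univ.filter fun Ss : Fin (k+1) → Finset (Fin n) =>
        (vI k n Ss x ≡ s [ZMOD (2^(k+1))]) ∧ (vI k n Ss y ≡ s [ZMOD (2^(k+1))])).card
      = 2 ^ ((k+1) * (n - 2)) ∧ 2 ≤ n := by
  have hmod : (((2:ℕ)^(k+1):ℕ):ℤ) = (2:ℤ)^(k+1) := by push_cast; rfl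
  have hcond : ∀ (z : Fin n → Bool) (Ss : Fin (k+1) → Finset (Fin n)),
      (vI k n Ss z ≡ s [ZMOD (2^(k+1))])
        ↔ (∑ j, if z j then beta k (gOf k n Ss j) else 0) = ((s : ZMod (2^(k+1)))) := by
    intro z Ss
    rw [← cast_vI, (ZMod.intCast_eq_intCast_iff _ _ _), hmod]
  have key : (∃ j, x j = true ∧ y j = false) ∨ (∃ j, y j = true ∧ x j = false) := by
    by_contra h
    push_neg at h
    obtain ⟨h1, h2⟩ := h
    apply hxy
    funext j
    cases hxj : x j <;> cases hyj : y j
    · rfl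
    · exact absurd (h2 j hyj) (by simp [hxj])
    · exact absurd (h1 j hxj) (by simp [hyj])
    · rfl
  have cardeq : ∀ {α : Type} [Fintype α] {p q : α → Prop} {ip : DecidablePred p} {iq : DecidablePred q},
      (∀ a, p a ↔ q a) → (@Finset.filter _ p ip univ).card = (@Finset.filter _ q iq univ).card := by
    intro α _ p q ip iq h
    congr 1
    ext a
    rw [Finset.mem_filter, Finset.mem_filter, h a]
  have transfer : ∀ (P : (Fin n → B k) → Prop),
      (univ.filter fun Ss : Fin (k+1) → Finset (Fin n) => P (gOf k n Ss)).card
        = (univ.filter P).card := by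
    intro P
    rw [Finset.card_filter, Finset.card_filter]
    exact Fintype.sum_bijective (gOf k n) (gOf_bijective k n) _ _ (fun Ss => rfl)
  rcases key with ⟨j₀, hj1, hj0⟩ | ⟨j₀, hj1, hj0⟩
  · obtain ⟨j₁, hy1⟩ := hy
    have hne : j₀ ≠ j₁ := fun h => by rw [h, hy1] at hj0; exact absurd hj0 (by simp)
    have hn2 : 2 ≤ n := by
      have : 1 < Fintype.card (Fin n) := Fintype.one_lt_card_iff.mpr ⟨j₀, j₁, hne⟩
      rw [Fintype.card_fin] at this; omega
    refine ⟨?_, hn2⟩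
    simp only [hcond]
    have htr := transfer (fun g => (∑ j, if x j then beta k (g j) else 0) = ((s : ZMod (2^(k+1))))
      ∧ (∑ j, if y j then beta k (g j) else 0) = ((s : ZMod (2^(k+1)))))
    have hcb := countB k (ι := Fin n) x y j₀ j₁ hj1 hj0 hy1 ((s : ZMod (2^(k+1)))) ((s : ZMod (2^(k+1))))
    rw [Fintype.card_fin] at hcb
    exact (cardeq (fun a => Iff.rfl)).trans (htr.trans ((cardeq (fun a => Iff.rfl)).trans hcb))
  · obtain ⟨j₁, hx1⟩ := hx
    have hne : j₀ ≠ j₁ := fun h => by rw [h, hx1] at hj0; exact absurd hj0 (by simp)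
    have hn2 : 2 ≤ n := by
      have : 1 < Fintype.card (Fin n) := Fintype.one_lt_card_iff.mpr ⟨j₀, j₁, hne⟩
      rw [Fintype.card_fin] at this; omega
    refine ⟨?_, hn2⟩
    simp only [hcond]
    have hswap : (univ.filter fun Ss : Fin (k+1) → Finset (Fin n) =>
        (∑ j, if x j then beta k (gOf k n Ss j) else 0) = ((s : ZMod (2^(k+1))))
          ∧ (∑ j, if y j then beta k (gOf k n Ss j) else 0) = ((s : ZMod (2^(k+1)))))
        = (univ.filter fun Ss : Fin (k+1) → Finset (Fin n) =>
        (∑ j, if y j then beta k (gOf k n Ss j) else 0) = ((s : ZMod (2^(k+1))))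
          ∧ (∑ j, if x j then beta k (gOf k n Ss j) else 0) = ((s : ZMod (2^(k+1))))) := by
      apply Finset.filter_congr
      intro Ss _
      exact ⟨fun ⟨a,b⟩ => ⟨b,a⟩, fun ⟨a,b⟩ => ⟨b,a⟩⟩
    rw [hswap]
    have htr := transfer (fun g => (∑ j, if y j then beta k (g j) else 0) = ((s : ZMod (2^(k+1))))
      ∧ (∑ j, if x j then beta k (g j) else 0) = ((s : ZMod (2^(k+1)))))
    have hcb := countB k (ι := Fin n) y x j₀ j₁ hj1 hj0 hx1 ((s : ZMod (2^(k+1)))) ((s : ZMod (2^(k+1))))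
    rw [Fintype.card_fin] at hcb
    exact (cardeq (fun a => Iff.rfl)).trans (htr.trans ((cardeq (fun a => Iff.rfl)).trans hcb))




noncomputable def chi (T : Finset (Fin n)) (x : Fin n → Bool) : ℝ :=
  (-1 : ℝ) ^ (T.filter fun i => x i).card

lemma chi_eq_prod (T : Finset (Fin n)) (x : Fin n → Bool) :
    chi T x = ∏ i ∈ T, (if x i then (-1:ℝ) else 1) := by
  rw [Finset.prod_ite, Finset.prod_const, Finset.prod_const, one_pow, mul_one, chi]

lemma chi_sq (T : Finset (Fin n)) (x : Fin n → Bool) : chi T x * chi T x = 1 := by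
  rw [chi, ← pow_add]
  exact Even.neg_one_pow ⟨_, rfl⟩

lemma abs_chi (T : Finset (Fin n)) (x : Fin n → Bool) : |chi T x| = 1 := by
  rw [chi, abs_pow, abs_neg, abs_one, one_pow]


lemma sum_chi (T : Finset (Fin n)) (hT : T ≠ ∅) : ∑ x : Fin n → Bool, chi T x = 0 := by
  simp only [chi_eq_prod]
  have ext : ∀ x : Fin n → Bool, (∏ i ∈ T, (if x i then (-1:ℝ) else 1))
      = ∏ i : Fin n, (if i ∈ T then (if x i then (-1:ℝ) else 1) else 1) := by
    intro x
    rw [Finset.prod_ite_mem Finset.univ T (fun i => if x i then (-1:ℝ) else 1), Finset.univ_inter]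
  simp only [ext]
  have := Finset.prod_univ_sum (κ := fun _ : Fin n => Bool) (fun _ => Finset.univ)
    (fun i b => if i ∈ T then (if b then (-1:ℝ) else 1) else 1)
  rw [Fintype.piFinset_univ] at this
  rw [← this]
  obtain ⟨i₀, hi₀⟩ := Finset.nonempty_iff_ne_empty.mpr hT
  apply Finset.prod_eq_zero (Finset.mem_univ i₀)
  simp [hi₀]

lemma sum_chi_empty' : ∑ x : Fin n → Bool, chi (∅ : Finset (Fin n)) x = 2^n := by
  simp [chi]



lemma binH_nonneg {ε : ℝ} (h0 : 0 < ε) (h1 : ε ≤ 1/2) : 0 ≤ binH ε := by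
  unfold binH
  have l1 : Real.logb 2 ε ≤ 0 := Real.logb_nonpos (by norm_num) (le_of_lt h0) (by linarith)
  have l2 : Real.logb 2 (1-ε) ≤ 0 := Real.logb_nonpos (by norm_num) (by linarith) (by linarith)
  nlinarith

lemma rpow_binH {ε : ℝ} (h0 : 0 < ε) (h1 : ε < 1) (n : ℕ) :
    (2:ℝ) ^ (-(binH ε * n)) = ε ^ (ε*(n:ℝ)) * (1-ε) ^ ((1-ε)*(n:ℝ)) := by
  have e1 : ε ^ (ε*(n:ℝ)) = (2:ℝ) ^ (Real.logb 2 ε * (ε*(n:ℝ))) := by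
    rw [Real.rpow_mul (by norm_num : (0:ℝ) ≤ 2), Real.rpow_logb two_pos (by norm_num) h0]
  have e2 : (1-ε) ^ ((1-ε)*(n:ℝ)) = (2:ℝ) ^ (Real.logb 2 (1-ε) * ((1-ε)*(n:ℝ))) := by
    rw [Real.rpow_mul (by norm_num : (0:ℝ) ≤ 2), Real.rpow_logb two_pos (by norm_num) (by linarith)]
  rw [e1, e2, ← Real.rpow_add two_pos]
  congr 1
  unfold binH
  ring

lemma card_small (n : ℕ) (ε : ℝ) (h0 : 0 < ε) (h2 : ε ≤ 1/2) :
    ((Finset.univ.filter fun T : Finset (Fin n) => (T.card:ℝ) ≤ ε*n).card : ℝ)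
      ≤ (2:ℝ) ^ (binH ε * n) := by
  have h1 : ε < 1 := by linarith
  have hb0 : (0:ℝ) < 1 - ε := by linarith
  -- binomial identity
  have hbin : ∑ T : Finset (Fin n), ε ^ T.card * (1-ε) ^ (n - T.card) = 1 := by
    have := Finset.prod_add (fun _ : Fin n => ε) (fun _ => 1-ε) Finset.univ
    simp only [Finset.prod_const, Finset.powerset_univ] at this
    have hl : (ε + (1-ε)) ^ (Finset.univ : Finset (Fin n)).card = 1 := by
      norm_num
    rw [hl] at this
    conv_rhs => rw [this]
    apply Finset.sum_congr rfl
    intro T _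
    congr 1
    rw [Finset.card_sdiff_of_subset (Finset.subset_univ T), Finset.card_univ, Fintype.card_fin]
  -- per-term bound
  have hterm : ∀ T : Finset (Fin n), (T.card:ℝ) ≤ ε*n →
      (2:ℝ) ^ (-(binH ε * n)) ≤ ε ^ T.card * (1-ε) ^ (n - T.card) := by
    intro T hT
    have hcn : T.card ≤ n := by
      have := Finset.card_le_univ T
      rwa [Fintype.card_fin] at this
    set c : ℝ := (T.card : ℝ) with hc
    have hd : (0:ℝ) ≤ ε*n - c := by linarith
    have key : ε ^ (ε*(n:ℝ)) * (1-ε) ^ ((1-ε)*(n:ℝ))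
        ≤ ε ^ c * (1-ε) ^ ((n:ℝ) - c) := by
      have s1 : ε ^ (ε*(n:ℝ)) = ε ^ c * ε ^ (ε*n - c) := by
        rw [← Real.rpow_add h0]; congr 1; ring
      have s2 : (1-ε) ^ ((1-ε)*(n:ℝ)) = (1-ε) ^ ((n:ℝ) - c) * (1-ε) ^ (-(ε*n - c)) := by
        rw [← Real.rpow_add hb0]; congr 1; ring
      rw [s1, s2]
      have hratio : ε ^ (ε*n - c) * (1-ε) ^ (-(ε*n - c)) ≤ 1 := by
        rw [Real.rpow_neg (le_of_lt hb0)]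
        rw [show ε ^ (ε*n - c) * ((1-ε) ^ (ε*n - c))⁻¹ = (ε/(1-ε)) ^ (ε*n - c) by
          rw [Real.div_rpow (le_of_lt h0) (le_of_lt hb0), div_eq_mul_inv]]
        exact Real.rpow_le_one (by positivity) ((div_le_one hb0).mpr (by linarith)) hd
      calc ε ^ c * ε ^ (ε*n - c) * ((1-ε) ^ ((n:ℝ) - c) * (1-ε) ^ (-(ε*n - c)))
          = (ε ^ c * (1-ε) ^ ((n:ℝ) - c)) * (ε ^ (ε*n - c) * (1-ε) ^ (-(ε*n - c))) := by ring
        _ ≤ (ε ^ c * (1-ε) ^ ((n:ℝ) - c)) * 1 := by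
            apply mul_le_mul_of_nonneg_left hratio
            positivity
        _ = ε ^ c * (1-ε) ^ ((n:ℝ) - c) := by ring
    have conv1 : ε ^ c = ε ^ T.card := by
      rw [hc, Real.rpow_natCast]
    have conv2 : (1-ε) ^ ((n:ℝ) - c) = (1-ε) ^ (n - T.card) := by
      rw [hc, show (n:ℝ) - (T.card:ℝ) = ((n - T.card : ℕ):ℝ) by
        rw [Nat.cast_sub hcn], Real.rpow_natCast]
    rw [rpow_binH h0 h1, ← conv1, ← conv2]
    exact key
  -- sum up
  set N := (Finset.univ.filter fun T : Finset (Fin n) => (T.card:ℝ) ≤ ε*n).card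
  have hsum : (N:ℝ) * (2:ℝ) ^ (-(binH ε * n)) ≤ 1 := by
    rw [← hbin]
    calc (N:ℝ) * (2:ℝ) ^ (-(binH ε * n))
        = ∑ _T ∈ (Finset.univ.filter fun T : Finset (Fin n) => (T.card:ℝ) ≤ ε*n),
            (2:ℝ) ^ (-(binH ε * n)) := by rw [Finset.sum_const, nsmul_eq_mul]
      _ ≤ ∑ T ∈ (Finset.univ.filter fun T : Finset (Fin n) => (T.card:ℝ) ≤ ε*n),
            ε ^ T.card * (1-ε) ^ (n - T.card) := by
            apply Finset.sum_le_sum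
            intro T hT
            exact hterm T (Finset.mem_filter.mp hT).2
      _ ≤ ∑ T : Finset (Fin n), ε ^ T.card * (1-ε) ^ (n - T.card) := by
            apply Finset.sum_le_sum_of_subset_of_nonneg (Finset.filter_subset _ _)
            intro T _ _
            positivity
  have hpos : (0:ℝ) < (2:ℝ) ^ (-(binH ε * n)) := Real.rpow_pos_of_pos two_pos _
  rw [Real.rpow_neg (by norm_num : (0:ℝ) ≤ 2)] at hsum hpos
  have h2pos : (0:ℝ) < (2:ℝ) ^ (binH ε * n) := by
    rw [← inv_inv ((2:ℝ) ^ (binH ε * n))]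
    exact inv_pos.mpr hpos
  calc (N:ℝ) = (N:ℝ) * ((2:ℝ) ^ (binH ε * n))⁻¹ * (2:ℝ) ^ (binH ε * n) := by
        field_simp
    _ ≤ 1 * (2:ℝ) ^ (binH ε * n) := by
        apply mul_le_mul_of_nonneg_right hsum (le_of_lt h2pos)
    _ = (2:ℝ) ^ (binH ε * n) := one_mul _


noncomputable def Q (k : ℕ) : ℝ := ((2:ℝ)^(k+1))⁻¹
noncomputable def P (k n : ℕ) : ℝ := (2:ℝ)^(n*(k+1))
def x0 (n : ℕ) : Fin n → Bool := fun _ => false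
noncomputable def FF (k n : ℕ) (s : ℤ) (Ss : Fin (k+1) → Finset (Fin n)) (x : Fin n → Bool) : ℝ :=
  if vI k n Ss x ≡ s [ZMOD (2^(k+1))] then 1 else 0

lemma Qpos (k : ℕ) : 0 < Q k := by unfold Q; positivity
lemma Qhalf (k : ℕ) : Q k ≤ 1/2 := by
  unfold Q
  rw [inv_le_comm₀ (by positivity) (by norm_num)]
  calc (1/2 : ℝ)⁻¹ = 2^1 := by norm_num
    _ ≤ 2^(k+1) := by
      apply pow_le_pow_right₀ (by norm_num)
      omega
lemma Ppos (k n : ℕ) : 0 < P k n := by unfold P; positivity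

lemma cardOmega (k n : ℕ) : (Fintype.card (Fin (k+1) → Finset (Fin n)) : ℝ) = P k n := by
  rw [Fintype.card_fun, Fintype.card_finset, Fintype.card_fin, Fintype.card_fin]
  unfold P
  push_cast
  rw [← pow_mul]

lemma FF_mem (k n : ℕ) (s : ℤ) (Ss : Fin (k+1) → Finset (Fin n)) (x : Fin n → Bool) :
    FF k n s Ss x = 0 ∨ FF k n s Ss x = 1 := by
  unfold FF; split <;> simp

lemma FF_sq (k n : ℕ) (s : ℤ) (Ss : Fin (k+1) → Finset (Fin n)) (x : Fin n → Bool) :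
    FF k n s Ss x * FF k n s Ss x = FF k n s Ss x := by
  rcases FF_mem k n s Ss x with h | h <;> rw [h] <;> ring

lemma ne_x0 {n : ℕ} {x : Fin n → Bool} (hx : x ≠ x0 n) : ∃ j, x j = true := by
  by_contra h
  push_neg at h
  apply hx
  funext j
  have := h j
  unfold x0
  revert this
  cases x j <;> simp

lemma npos {n : ℕ} {x : Fin n → Bool} (hx : x ≠ x0 n) : 1 ≤ n := by
  obtain ⟨j, _⟩ := ne_x0 hx
  have := j.pos
  omega

lemma sumF (k n : ℕ) (s : ℤ) (x : Fin n → Bool) (hx : x ≠ x0 n) :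
    ∑ Ss : Fin (k+1) → Finset (Fin n), FF k n s Ss x = Q k * P k n := by
  obtain ⟨j₀, hj⟩ := ne_x0 hx
  have hn : 1 ≤ n := npos hx
  unfold FF
  rw [Finset.sum_boole]
  rw [count_one k n s x j₀ hj]
  have key : (2:ℝ) ^ ((k+1)*(n-1)) * (2:ℝ)^(k+1) = (2:ℝ)^(n*(k+1)) := by
    rw [← pow_add]
    congr 1
    obtain ⟨m, rfl⟩ : ∃ m, n = m + 1 := ⟨n - 1, by omega⟩
    have h1 : m + 1 - 1 = m := by omega
    rw [h1]; ring
  rw [show Q k * P k n = (2:ℝ)^((k+1)*(n-1)) from by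
    unfold Q P; rw [← key]; field_simp]
  push_cast
  ring

lemma sumFF (k n : ℕ) (s : ℤ) (x y : Fin n → Bool) (hx : x ≠ x0 n) (hy : y ≠ x0 n)
    (hxy : x ≠ y) :
    ∑ Ss : Fin (k+1) → Finset (Fin n), FF k n s Ss x * FF k n s Ss y = Q k * Q k * P k n := by
  obtain ⟨hcard, hn⟩ := count_two k n s x y hxy (ne_x0 hx) (ne_x0 hy)
  unfold FF
  have : ∀ Ss : Fin (k+1) → Finset (Fin n),
      (if vI k n Ss x ≡ s [ZMOD (2^(k+1))] then (1:ℝ) else 0)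
        * (if vI k n Ss y ≡ s [ZMOD (2^(k+1))] then (1:ℝ) else 0)
      = if ((vI k n Ss x ≡ s [ZMOD (2^(k+1))]) ∧ (vI k n Ss y ≡ s [ZMOD (2^(k+1))])) then (1:ℝ) else 0 := by
    intro Ss
    by_cases h1 : vI k n Ss x ≡ s [ZMOD (2^(k+1))] <;>
      by_cases h2 : vI k n Ss y ≡ s [ZMOD (2^(k+1))] <;> simp [h1, h2]
  simp only [this]
  rw [Finset.sum_boole, hcard]
  have key : (2:ℝ) ^ ((k+1)*(n-2)) * ((2:ℝ)^(k+1) * (2:ℝ)^(k+1)) = (2:ℝ)^(n*(k+1)) := by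
    rw [← pow_add, ← pow_add]
    congr 1
    obtain ⟨m, rfl⟩ : ∃ m, n = m + 2 := ⟨n - 2, by omega⟩
    have h1 : m + 2 - 2 = m := by omega
    rw [h1]; ring
  rw [show Q k * Q k * P k n = (2:ℝ)^((k+1)*(n-2)) from by
    unfold Q P; rw [← key]; field_simp]
  push_cast
  ring

lemma sumD_offdiag (k n : ℕ) (s : ℤ) (x y : Fin n → Bool) (hx : x ≠ x0 n) (hy : y ≠ x0 n)
    (hxy : x ≠ y) :
    ∑ Ss : Fin (k+1) → Finset (Fin n), (FF k n s Ss x - Q k) * (FF k n s Ss y - Q k) = 0 := by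
  have expand : ∀ Ss : Fin (k+1) → Finset (Fin n),
      (FF k n s Ss x - Q k) * (FF k n s Ss y - Q k)
        = FF k n s Ss x * FF k n s Ss y - Q k * FF k n s Ss x - Q k * FF k n s Ss y + Q k * Q k := by
    intro Ss; ring
  simp only [expand]
  rw [Finset.sum_add_distrib, Finset.sum_sub_distrib, Finset.sum_sub_distrib,
    ← Finset.mul_sum, ← Finset.mul_sum, sumFF k n s x y hx hy hxy, sumF k n s x hx,
    sumF k n s y hy, Finset.sum_const, Finset.card_univ, nsmul_eq_mul, cardOmega]
  ring

lemma sumD_diag (k n : ℕ) (s : ℤ) (x : Fin n → Bool) (hx : x ≠ x0 n) :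
    ∑ Ss : Fin (k+1) → Finset (Fin n), (FF k n s Ss x - Q k) * (FF k n s Ss x - Q k)
      = Q k * (1 - Q k) * P k n := by
  have expand : ∀ Ss : Fin (k+1) → Finset (Fin n),
      (FF k n s Ss x - Q k) * (FF k n s Ss x - Q k)
        = FF k n s Ss x - 2 * (Q k * FF k n s Ss x) + Q k * Q k := by
    intro Ss
    have := FF_sq k n s Ss x
    nlinarith [FF_sq k n s Ss x]
  simp only [expand]
  rw [Finset.sum_add_distrib, Finset.sum_sub_distrib, ← Finset.mul_sum, ← Finset.mul_sum,
    sumF k n s x hx, Finset.sum_const, Finset.card_univ, nsmul_eq_mul, cardOmega]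
  ring

lemma DD (k n : ℕ) (s : ℤ) (x y : Fin n → Bool) (hx : x ≠ x0 n) (hy : y ≠ x0 n) :
    ∑ Ss : Fin (k+1) → Finset (Fin n), (FF k n s Ss x - Q k) * (FF k n s Ss y - Q k)
      = if x = y then Q k * (1 - Q k) * P k n else 0 := by
  by_cases hxy : x = y
  · rw [if_pos hxy, ← hxy]
    exact sumD_diag k n s x hx
  · rw [if_neg hxy]
    exact sumD_offdiag k n s x y hx hy hxy

lemma varSum (k n : ℕ) (s : ℤ) (T : Finset (Fin n)) :
    ∑ Ss : Fin (k+1) → Finset (Fin n),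
        (∑ x ∈ Finset.univ.erase (x0 n), (FF k n s Ss x - Q k) * chi T x)^2
      ≤ (2:ℝ)^n * (Q k * (1 - Q k) * P k n) := by
  have expand : ∀ Ss : Fin (k+1) → Finset (Fin n),
      (∑ x ∈ Finset.univ.erase (x0 n), (FF k n s Ss x - Q k) * chi T x)^2
        = ∑ x ∈ Finset.univ.erase (x0 n), ∑ y ∈ Finset.univ.erase (x0 n),
            chi T x * chi T y * ((FF k n s Ss x - Q k) * (FF k n s Ss y - Q k)) := by
    intro Ss
    rw [sq, Finset.sum_mul_sum]
    exact Finset.sum_congr rfl fun x _ => Finset.sum_congr rfl fun y _ => by ring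
  simp only [expand]
  rw [Finset.sum_comm]
  have swap2 : ∀ x ∈ Finset.univ.erase (x0 n),
      (∑ Ss : Fin (k+1) → Finset (Fin n), ∑ y ∈ Finset.univ.erase (x0 n),
          chi T x * chi T y * ((FF k n s Ss x - Q k) * (FF k n s Ss y - Q k)))
        = ∑ y ∈ Finset.univ.erase (x0 n), chi T x * chi T y *
            (∑ Ss : Fin (k+1) → Finset (Fin n), (FF k n s Ss x - Q k) * (FF k n s Ss y - Q k)) := by
    intro x _
    rw [Finset.sum_comm]
    exact Finset.sum_congr rfl fun y _ => by rw [← Finset.mul_sum]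
  rw [Finset.sum_congr rfl swap2]
  have inner : ∀ x ∈ Finset.univ.erase (x0 n),
      (∑ y ∈ Finset.univ.erase (x0 n), chi T x * chi T y *
          (∑ Ss : Fin (k+1) → Finset (Fin n), (FF k n s Ss x - Q k) * (FF k n s Ss y - Q k)))
        = Q k * (1 - Q k) * P k n := by
    intro x hxmem
    have hx : x ≠ x0 n := (Finset.mem_erase.mp hxmem).1
    have step : ∀ y ∈ Finset.univ.erase (x0 n),
        chi T x * chi T y *
            (∑ Ss : Fin (k+1) → Finset (Fin n), (FF k n s Ss x - Q k) * (FF k n s Ss y - Q k))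
          = if x = y then chi T x * chi T y * (Q k * (1 - Q k) * P k n) else 0 := by
      intro y hymem
      have hy : y ≠ x0 n := (Finset.mem_erase.mp hymem).1
      rw [DD k n s x y hx hy]
      by_cases h : x = y
      · rw [if_pos h, if_pos h]
      · rw [if_neg h, if_neg h, mul_zero]
    rw [Finset.sum_congr rfl step, Finset.sum_ite_eq, if_pos hxmem, chi_sq, one_mul]
  rw [Finset.sum_congr rfl inner, Finset.sum_const, nsmul_eq_mul]
  have hcard : ((Finset.univ.erase (x0 n)).card : ℝ) ≤ (2:ℝ)^n := by
    rw [Finset.card_erase_of_mem (Finset.mem_univ _), Finset.card_univ, Fintype.card_fun,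
      Fintype.card_bool, Fintype.card_fin]
    calc ((2^n - 1 : ℕ) : ℝ) ≤ ((2^n : ℕ) : ℝ) := by
          exact_mod_cast Nat.sub_le _ _
      _ = (2:ℝ)^n := by push_cast; ring
  apply mul_le_mul_of_nonneg_right hcard
  have h1 : (0:ℝ) < 1 - Q k := by have := Qhalf k; linarith
  have := mul_pos (mul_pos (Qpos k) h1) (Ppos k n)
  linarith


noncomputable def GG (k n : ℕ) (s : ℤ) (T : Finset (Fin n)) (Ss : Fin (k+1) → Finset (Fin n)) : ℝ :=
  bFourier (FF k n s Ss) T - (if T = ∅ then Q k else 0)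

lemma bFourier_eq (k n : ℕ) (s : ℤ) (Ss : Fin (k+1) → Finset (Fin n)) (T : Finset (Fin n)) :
    bFourier (FF k n s Ss) T = (∑ x : Fin n → Bool, FF k n s Ss x * chi T x) / 2 ^ n := rfl

lemma chi_x0 (n : ℕ) (T : Finset (Fin n)) : chi T (x0 n) = 1 := by
  unfold chi x0
  simp

lemma sum_chi_empty (n : ℕ) : ∑ x : Fin n → Bool, chi (∅ : Finset (Fin n)) x = 2^n := by
  unfold chi
  simp [Fintype.card_fun]

lemma GG_eq (k n : ℕ) (s : ℤ) (T : Finset (Fin n)) (Ss : Fin (k+1) → Finset (Fin n)) :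
    GG k n s T Ss = (∑ x : Fin n → Bool, (FF k n s Ss x - Q k) * chi T x) / 2 ^ n := by
  unfold GG
  rw [bFourier_eq]
  have hsplit : ∑ x : Fin n → Bool, (FF k n s Ss x - Q k) * chi T x
      = (∑ x : Fin n → Bool, FF k n s Ss x * chi T x) - Q k * (∑ x : Fin n → Bool, chi T x) := by
    rw [Finset.mul_sum, ← Finset.sum_sub_distrib]
    exact Finset.sum_congr rfl fun x _ => by ring
  rw [hsplit]
  by_cases hT : T = ∅
  · subst hT
    rw [sum_chi_empty]
    rw [if_pos rfl]
    have h2 : ((2:ℝ)^n) ≠ 0 := by positivity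
    field_simp
  · rw [sum_chi T hT, if_neg hT]
    ring_nf

noncomputable def E0 (k : ℕ) (s : ℤ) : ℝ :=
  (if (0:ℤ) ≡ s [ZMOD (2^(k+1))] then (1:ℝ) else 0) - Q k

lemma D_x0 (k n : ℕ) (s : ℤ) (Ss : Fin (k+1) → Finset (Fin n)) :
    FF k n s Ss (x0 n) - Q k = E0 k s := by
  unfold FF E0 x0 vI
  simp

lemma absE0 (k : ℕ) (s : ℤ) : |E0 k s| ≤ 1 - Q k := by
  have h0 := Qpos k
  have h1 := Qhalf k
  unfold E0
  split <;> rw [abs_le] <;> constructor <;> linarith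

lemma GG_shift (k n : ℕ) (s : ℤ) (T : Finset (Fin n)) (Ss : Fin (k+1) → Finset (Fin n)) :
    GG k n s T Ss - E0 k s / 2^n
      = (∑ x ∈ Finset.univ.erase (x0 n), (FF k n s Ss x - Q k) * chi T x) / 2 ^ n := by
  rw [GG_eq]
  have := Finset.add_sum_erase Finset.univ (fun x => (FF k n s Ss x - Q k) * chi T x)
    (Finset.mem_univ (x0 n))
  rw [← this]
  simp only [chi_x0, mul_one, D_x0]
  field_simp
  ring

lemma dev_bound (k n : ℕ) (s : ℤ) (T : Finset (Fin n)) (Ss : Fin (k+1) → Finset (Fin n)) :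
    |GG k n s T Ss| ≤ 1 - Q k := by
  have h0 := Qpos k
  have h1 := Qhalf k
  have h2 : (0:ℝ) < (2:ℝ)^n := by positivity
  by_cases hT : T = ∅
  · subst hT
    unfold GG
    rw [bFourier_eq, if_pos rfl]
    have hchi : ∀ x : Fin n → Bool, chi (∅ : Finset (Fin n)) x = 1 := by
      intro x; unfold chi; simp
    simp only [hchi, mul_one]
    have hub : ∑ x : Fin n → Bool, FF k n s Ss x ≤ (2:ℝ)^n := by
      calc ∑ x : Fin n → Bool, FF k n s Ss x ≤ ∑ _x : Fin n → Bool, (1:ℝ) := by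
            apply Finset.sum_le_sum
            intro x _
            rcases FF_mem k n s Ss x with h | h <;> rw [h] <;> norm_num
        _ = (2:ℝ)^n := by
            rw [Finset.sum_const, Finset.card_univ, Fintype.card_fun, Fintype.card_bool,
              Fintype.card_fin, nsmul_eq_mul, mul_one]
            push_cast
            ring
    have hlb : (0:ℝ) ≤ ∑ x : Fin n → Bool, FF k n s Ss x := by
      apply Finset.sum_nonneg
      intro x _
      rcases FF_mem k n s Ss x with h | h <;> rw [h] <;> norm_num
    rw [abs_le]
    have hd0 : (0:ℝ) ≤ (∑ x : Fin n → Bool, FF k n s Ss x) / 2 ^ n := div_nonneg hlb (le_of_lt h2)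
    have hd1 : (∑ x : Fin n → Bool, FF k n s Ss x) / 2 ^ n ≤ 1 := (div_le_one h2).mpr hub
    constructor <;> [linarith; linarith]
  · unfold GG
    rw [bFourier_eq, if_neg hT, sub_zero]
    have tr : ∑ x : Fin n → Bool, FF k n s Ss x * chi T x
        = ∑ x : Fin n → Bool, (FF k n s Ss x - 1/2) * chi T x := by
      rw [eq_comm]
      have : ∑ x : Fin n → Bool, (FF k n s Ss x - 1/2) * chi T x
          = (∑ x : Fin n → Bool, FF k n s Ss x * chi T x) - (1/2) * ∑ x : Fin n → Bool, chi T x := by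
        rw [Finset.mul_sum, ← Finset.sum_sub_distrib]
        exact Finset.sum_congr rfl fun x _ => by ring
      rw [this, sum_chi T hT]
      ring
    rw [tr]
    have habs : |∑ x : Fin n → Bool, (FF k n s Ss x - 1/2) * chi T x| ≤ (2:ℝ)^n * (1/2) := by
      calc |∑ x : Fin n → Bool, (FF k n s Ss x - 1/2) * chi T x|
          ≤ ∑ x : Fin n → Bool, |(FF k n s Ss x - 1/2) * chi T x| := Finset.abs_sum_le_sum_abs _ _
        _ ≤ ∑ _x : Fin n → Bool, (1/2 : ℝ) := by
            apply Finset.sum_le_sum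
            intro x _
            rw [abs_mul, abs_chi, mul_one]
            rcases FF_mem k n s Ss x with h | h <;> rw [h] <;> rw [abs_le] <;>
              constructor <;> norm_num
        _ = (2:ℝ)^n * (1/2) := by
            rw [Finset.sum_const, Finset.card_univ, Fintype.card_fun, Fintype.card_bool,
              Fintype.card_fin, nsmul_eq_mul]
            push_cast
            ring
    rw [abs_div, abs_of_pos h2, div_le_iff₀ h2]
    calc |∑ x : Fin n → Bool, (FF k n s Ss x - 1/2) * chi T x| ≤ (2:ℝ)^n * (1/2) := habs
      _ ≤ (1 - Q k) * 2^n := by nlinarith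

lemma chebT (k n : ℕ) (s : ℤ) (T : Finset (Fin n)) (lam lamp : ℝ)
    (hlamp0 : 0 ≤ lamp) (hlamp : lamp ≤ lam - (1 - Q k)/(2:ℝ)^n) :
    ((Finset.univ.filter fun Ss : Fin (k+1) → Finset (Fin n) =>
        ¬ (|GG k n s T Ss| ≤ lam)).card : ℝ) * lamp^2
      ≤ Q k * (1 - Q k) * P k n / (2:ℝ)^n := by
  have h2 : (0:ℝ) < (2:ℝ)^n := by positivity
  set bad := Finset.univ.filter fun Ss : Fin (k+1) → Finset (Fin n) => ¬ (|GG k n s T Ss| ≤ lam)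
    with hbad
  have step1 : (bad.card : ℝ) * lamp^2 ≤ ∑ Ss ∈ bad, (GG k n s T Ss - E0 k s / 2^n)^2 := by
    calc (bad.card : ℝ) * lamp^2 = ∑ _Ss ∈ bad, lamp^2 := by
          rw [Finset.sum_const, nsmul_eq_mul]
      _ ≤ ∑ Ss ∈ bad, (GG k n s T Ss - E0 k s / 2^n)^2 := by
          apply Finset.sum_le_sum
          intro Ss hSs
          have hG : lam < |GG k n s T Ss| := by
            have := (Finset.mem_filter.mp hSs).2
            linarith [not_le.mp this]
          have hcc : |E0 k s / 2^n| ≤ (1 - Q k)/(2:ℝ)^n := by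
            rw [abs_div, abs_of_pos h2]
            gcongr
            exact absE0 k s
          have h3 : |GG k n s T Ss| - |E0 k s / 2^n| ≤ |GG k n s T Ss - E0 k s / 2^n| :=
            abs_sub_abs_le_abs_sub _ _
          have hle : lamp ≤ |GG k n s T Ss - E0 k s / 2^n| := by linarith
          have := pow_le_pow_left₀ hlamp0 hle 2
          rwa [sq_abs] at this

  have step2 : ∑ Ss ∈ bad, (GG k n s T Ss - E0 k s / 2^n)^2
      ≤ ∑ Ss : Fin (k+1) → Finset (Fin n), (GG k n s T Ss - E0 k s / 2^n)^2 := by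
    apply Finset.sum_le_sum_of_subset_of_nonneg (Finset.filter_subset _ _)
    intro Ss _ _
    positivity
  have step3 : ∑ Ss : Fin (k+1) → Finset (Fin n), (GG k n s T Ss - E0 k s / 2^n)^2
      ≤ Q k * (1 - Q k) * P k n / (2:ℝ)^n := by
    have heq : ∀ Ss : Fin (k+1) → Finset (Fin n), (GG k n s T Ss - E0 k s / 2^n)^2
        = (∑ x ∈ Finset.univ.erase (x0 n), (FF k n s Ss x - Q k) * chi T x)^2 / ((2:ℝ)^n)^2 := by
      intro Ss
      rw [GG_shift, div_pow]
    simp only [heq]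
    rw [← Finset.sum_div]
    rw [div_le_iff₀ (by positivity)]
    calc ∑ Ss : Fin (k+1) → Finset (Fin n),
          (∑ x ∈ Finset.univ.erase (x0 n), (FF k n s Ss x - Q k) * chi T x)^2
        ≤ (2:ℝ)^n * (Q k * (1 - Q k) * P k n) := varSum k n s T
      _ = Q k * (1 - Q k) * P k n / 2 ^ n * ((2:ℝ) ^ n) ^ 2 := by
          field_simp
  linarith

set_option maxHeartbeats 1000000 in
lemma main_count {n : ℕ} (k : ℕ) (ε ζ : ℝ) (hε : ε ∈ Set.Ioo (0 : ℝ) (1 / 2))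
    (hζ : ζ ∈ Set.Ioo (0 : ℝ) (1 / 2)) (s : ℤ) :
    (1 - (k + 1) * (2 : ℝ) ^ (-(n : ℝ) + binH ε * n + 2 * ζ * n)) * P k n ≤
      ((Finset.univ.filter fun Ss : Fin (k + 1) → Finset (Fin n) =>
          ∀ T : Finset (Fin n), (T.card : ℝ) ≤ ε * n →
            |GG k n s T Ss| ≤ (2 : ℝ) ^ (-ζ * (n:ℝ))).card : ℝ) := by
  obtain ⟨hε0, hε2⟩ := hε
  obtain ⟨hζ0, hζ2⟩ := hζ
  have hQ0 := Qpos k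
  have hQh := Qhalf k
  have hP0 := Ppos k n
  set δ : ℝ := (k + 1) * (2 : ℝ) ^ (-(n : ℝ) + binH ε * n + 2 * ζ * n) with hδdef
  set lam : ℝ := (2 : ℝ) ^ (-ζ * (n:ℝ)) with hlamdef
  have hlam0 : 0 < lam := Real.rpow_pos_of_pos two_pos _
  have hδ0 : 0 ≤ δ := by
    apply mul_nonneg (by positivity) (le_of_lt (Real.rpow_pos_of_pos two_pos _))
  set goodP : (Fin (k + 1) → Finset (Fin n)) → Prop := fun Ss =>
    ∀ T : Finset (Fin n), (T.card : ℝ) ≤ ε * n → |GG k n s T Ss| ≤ lam with hgoodP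
  by_cases hδ1 : 1 ≤ δ
  · have : (1 - δ) * P k n ≤ 0 :=
      mul_nonpos_iff.mpr (Or.inr ⟨by linarith, le_of_lt hP0⟩)
    exact le_trans this (Nat.cast_nonneg _)
  push_neg at hδ1
  by_cases hlam1 : 1 - Q k ≤ lam
  · -- every Ss is good
    have hall : Finset.univ.filter goodP = Finset.univ := by
      apply Finset.filter_true_of_mem
      intro Ss _
      intro T _
      exact le_trans (dev_bound k n s T Ss) hlam1
    rw [hall, Finset.card_univ, cardOmega]
    nlinarith
  push_neg at hlam1
  -- main case
  have hn1 : 1 ≤ n := by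
    by_contra hn
    have hn0 : n = 0 := by omega
    subst hn0
    rw [hδdef] at hδ1
    push_cast at hδ1
    have he : (-(0:ℝ) + binH ε * 0 + 2 * ζ * 0) = 0 := by ring
    rw [he, Real.rpow_zero] at hδ1
    nlinarith [Nat.cast_nonneg (α := ℝ) k]
  have hH0 : 0 ≤ binH ε := binH_nonneg hε0 (le_of_lt hε2)
  set A : ℝ := (2:ℝ) ^ ((ζ-1)*(n:ℝ)) with hAdef
  have hA0 : 0 < A := Real.rpow_pos_of_pos two_pos _
  set u : ℝ := (1 - Q k) * A with hudef
  have hu0 : 0 ≤ u := mul_nonneg (by linarith) (le_of_lt hA0)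
  -- u^2 bound
  have hu2 : u^2 ≤ (1 - Q k)^2 * ((1/(k+1)) * (1/2)) := by
    have hAA : A * A = (2:ℝ)^((2*ζ-1)*(n:ℝ)) * (2:ℝ)^(-(n:ℝ)) := by
      rw [← Real.rpow_add two_pos, ← Real.rpow_add two_pos]
      congr 1
      ring
    have hz : (2:ℝ)^((2*ζ-1)*(n:ℝ)) ≤ 1/(k+1) := by
      have hsplit : (2:ℝ)^(-(n : ℝ) + binH ε * n + 2 * ζ * n)
          = (2:ℝ)^((2*ζ-1)*(n:ℝ)) * (2:ℝ)^(binH ε * n) := by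
        rw [← Real.rpow_add two_pos]
        congr 1
        ring
      have h1le : (1:ℝ) ≤ (2:ℝ)^(binH ε * n) := by
        calc (1:ℝ) = (2:ℝ)^(0:ℝ) := (Real.rpow_zero 2).symm
          _ ≤ (2:ℝ)^(binH ε * n) := by
            apply Real.rpow_le_rpow_of_exponent_le (by norm_num)
            positivity
      have hd : (k+1 : ℝ) * ((2:ℝ)^((2*ζ-1)*(n:ℝ)) * (2:ℝ)^(binH ε * n)) < 1 := by
        rw [← hsplit]; exact hδ1
      have hk1 : (0:ℝ) < (k+1 : ℝ) := by positivity
      rw [le_div_iff₀ hk1]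
      nlinarith [Real.rpow_pos_of_pos two_pos ((2*ζ-1)*(n:ℝ))]
    have hnn : (2:ℝ)^(-(n:ℝ)) ≤ 1/2 := by
      have : (2:ℝ)^(-(n:ℝ)) ≤ (2:ℝ)^(-(1:ℝ)) := by
        apply Real.rpow_le_rpow_of_exponent_le (by norm_num)
        have : (1:ℝ) ≤ (n:ℝ) := by exact_mod_cast hn1
        linarith
      rw [Real.rpow_neg_one] at this
      linarith
    have expand : u^2 = (1 - Q k)^2 * (A * A) := by rw [hudef]; ring
    rw [expand, hAA]
    apply mul_le_mul_of_nonneg_left _ (by nlinarith)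
    have p1 : (0:ℝ) < (2:ℝ)^((2*ζ-1)*(n:ℝ)) := Real.rpow_pos_of_pos two_pos _
    have p2 : (0:ℝ) < (2:ℝ)^(-(n:ℝ)) := Real.rpow_pos_of_pos two_pos _
    nlinarith
  -- key inequality
  have hki : 1/((k:ℝ)+1) ≤ 1 := by
    rw [div_le_one (by positivity)]
    linarith [Nat.cast_nonneg (α := ℝ) k]
  have hQsq : (1 - Q k)^2 ≤ 1 := by nlinarith
  have hu2' : u^2 ≤ 1/2 := by nlinarith [sq_nonneg (1 - Q k)]
  have hu1 : u < 1 := by nlinarith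
  have key : Q k * (1 - Q k) ≤ (k+1) * (1-u)^2 := by
    rcases Nat.eq_zero_or_pos k with hk0 | hk1
    · subst hk0
      have hQ : Q 0 = 1/2 := by unfold Q; norm_num
      rw [hQ] at hu2 ⊢
      push_cast at hu2 ⊢
      nlinarith [sq_nonneg (u - 1/2)]
    · have hQ4 : Q k ≤ 1/4 := by
        unfold Q
        rw [inv_le_comm₀ (by positivity) (by norm_num)]
        calc ((1:ℝ)/4)⁻¹ = 2^2 := by norm_num
          _ ≤ 2^(k+1) := by
            apply pow_le_pow_right₀ (by norm_num)
            omega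
      have hk2 : (2:ℝ) ≤ (k+1:ℝ) := by
        have : (1:ℕ) ≤ k := hk1
        push_cast
        exact_mod_cast by omega
      have hki2 : 1/((k:ℝ)+1) ≤ 1/2 := by
        rw [div_le_div_iff₀ (by positivity) (by norm_num)]
        linarith
      have hstep : (1 - Q k)^2 * (1/((k:ℝ)+1) * (1/2)) ≤ 1 * (1/2 * (1/2)) := by
        apply mul_le_mul hQsq _ (by positivity) (by norm_num)
        apply mul_le_mul_of_nonneg_right hki2 (by norm_num)
      have hu2' : u^2 ≤ 1/4 := by linarith
      have hu12 : u ≤ 1/2 := by nlinarith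
      nlinarith
  -- lamp and its properties
  set lamp : ℝ := lam * (1 - u) with hlampdef
  have hlamppos : 0 < lamp := by
    apply mul_pos hlam0
    linarith
  have hlamp0 : 0 ≤ lamp := le_of_lt hlamppos
  have hX : ((2:ℝ)^n : ℝ) = (2:ℝ)^((n:ℝ)) := (Real.rpow_natCast 2 n).symm
  have hfrac : lam * A = ((2:ℝ)^n)⁻¹ := by
    rw [hlamdef, hAdef, ← Real.rpow_add two_pos]
    have he : (-ζ*(n:ℝ) + (ζ-1)*(n:ℝ)) = -(n:ℝ) := by ring
    rw [he, Real.rpow_neg (by norm_num), Real.rpow_natCast]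
  have hmoneq : lamp = lam - (1 - Q k)/(2:ℝ)^n := by
    rw [hlampdef, hudef, mul_sub, mul_one,
      show lam * ((1 - Q k)*A) = (1 - Q k)*(lam*A) from by ring, hfrac, div_eq_mul_inv]
  -- bad sets
  set TT := Finset.univ.filter (fun T : Finset (Fin n) => (T.card:ℝ) ≤ ε*(n:ℝ)) with hTT
  set badT : Finset (Fin n) → Finset (Fin (k+1) → Finset (Fin n)) :=
    fun T => Finset.univ.filter (fun Ss => ¬ (|GG k n s T Ss| ≤ lam)) with hbadT
  set bad := Finset.univ.filter (fun Ss : Fin (k+1) → Finset (Fin n) => ¬ goodP Ss) with hbad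
  have hsub : bad ⊆ TT.biUnion badT := by
    intro Ss hSs
    have h : ¬ ∀ T : Finset (Fin n), (T.card:ℝ) ≤ ε*(n:ℝ) → |GG k n s T Ss| ≤ lam :=
      (Finset.mem_filter.mp hSs).2
    push_neg at h
    obtain ⟨T, hT1, hT2⟩ := h
    apply Finset.mem_biUnion.mpr
    exact ⟨T, Finset.mem_filter.mpr ⟨Finset.mem_univ _, hT1⟩,
      Finset.mem_filter.mpr ⟨Finset.mem_univ _, not_le.mpr hT2⟩⟩
  have hcount : (bad.card : ℝ) ≤ ∑ T ∈ TT, ((badT T).card : ℝ) := by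
    calc (bad.card:ℝ) ≤ ((TT.biUnion badT).card : ℝ) := by
          exact_mod_cast Finset.card_le_card hsub
      _ ≤ ∑ T ∈ TT, ((badT T).card:ℝ) := by exact_mod_cast Finset.card_biUnion_le
  have hper : ∀ T ∈ TT, ((badT T).card : ℝ)
      ≤ Q k * (1 - Q k) * P k n / (2:ℝ)^n / lamp^2 := by
    intro T _
    have hch := chebT k n s T lam lamp hlamp0 (le_of_eq hmoneq)
    rw [le_div_iff₀ (by positivity : (0:ℝ) < lamp^2)]
    exact hch
  have hN : ((TT.card):ℝ) ≤ (2:ℝ)^(binH ε * n) := card_small n ε hε0 (le_of_lt hε2)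
  have hbadcard : (bad.card:ℝ)
      ≤ (2:ℝ)^(binH ε * n) * (Q k * (1 - Q k) * P k n / (2:ℝ)^n / lamp^2) := by
    calc (bad.card:ℝ) ≤ ∑ T ∈ TT, ((badT T).card:ℝ) := hcount
      _ ≤ ∑ _T ∈ TT, (Q k * (1 - Q k) * P k n / (2:ℝ)^n / lamp^2) :=
          Finset.sum_le_sum hper
      _ = (TT.card:ℝ) * (Q k * (1 - Q k) * P k n / (2:ℝ)^n / lamp^2) := by
          rw [Finset.sum_const, nsmul_eq_mul]
      _ ≤ (2:ℝ)^(binH ε * n) * (Q k * (1 - Q k) * P k n / (2:ℝ)^n / lamp^2) := by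
          apply mul_le_mul_of_nonneg_right hN
          apply div_nonneg _ (by positivity)
          apply div_nonneg _ (by positivity)
          have h1Q : (0:ℝ) ≤ 1 - Q k := by linarith
          have := mul_nonneg (mul_nonneg (le_of_lt hQ0) h1Q) (le_of_lt hP0)
          linarith
  -- the algebraic identity
  have hWpos : (0:ℝ) < (2:ℝ)^(binH ε * (n:ℝ)) := Real.rpow_pos_of_pos two_pos _
  have hfact : δ * ((2:ℝ)^n * lamp^2)
      = ((k:ℝ)+1) * ((2:ℝ)^(binH ε * (n:ℝ)) * ((1-u)*(1-u))) := by
    have hlsq : lamp^2 = (lam*lam) * ((1-u)*(1-u)) := by rw [hlampdef]; ring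
    have hcomb : (2:ℝ)^(-(n:ℝ) + binH ε * (n:ℝ) + 2*ζ*(n:ℝ)) * ((2:ℝ)^((n:ℝ)) * (lam*lam))
        = (2:ℝ)^(binH ε*(n:ℝ)) := by
      rw [hlamdef, ← Real.rpow_add two_pos, ← Real.rpow_add two_pos, ← Real.rpow_add two_pos]
      congr 1
      ring
    rw [hδdef, hlsq, hX]
    calc ((k:ℝ)+1) * (2:ℝ)^(-(n:ℝ) + binH ε * (n:ℝ) + 2*ζ*(n:ℝ))
          * ((2:ℝ)^((n:ℝ)) * ((lam*lam)*((1-u)*(1-u))))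
        = ((2:ℝ)^(-(n:ℝ) + binH ε * (n:ℝ) + 2*ζ*(n:ℝ)) * ((2:ℝ)^((n:ℝ)) * (lam*lam)))
            * (((k:ℝ)+1) * ((1-u)*(1-u))) := by ring
      _ = ((k:ℝ)+1) * ((2:ℝ)^(binH ε*(n:ℝ)) * ((1-u)*(1-u))) := by rw [hcomb]; ring
  have hfinal : (2:ℝ)^(binH ε * n) * (Q k * (1 - Q k) * P k n / (2:ℝ)^n / lamp^2)
      ≤ δ * P k n := by
    rw [div_div, mul_div_assoc']
    rw [div_le_iff₀ (by positivity : (0:ℝ) < (2:ℝ)^n * lamp^2)]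
    have hrhs : δ * P k n * ((2:ℝ)^n * lamp^2)
        = P k n * (((k:ℝ)+1) * ((2:ℝ)^(binH ε * (n:ℝ)) * ((1-u)*(1-u)))) := by
      rw [show δ * P k n * ((2:ℝ)^n * lamp^2) = P k n * (δ * ((2:ℝ)^n * lamp^2)) from by ring,
        hfact]
    rw [hrhs]
    have hmul := mul_le_mul_of_nonneg_left key
      (le_of_lt (mul_pos hWpos hP0))
    calc (2:ℝ)^(binH ε * (n:ℝ)) * (Q k * (1 - Q k) * P k n)
        = ((2:ℝ)^(binH ε * (n:ℝ)) * P k n) * (Q k * (1 - Q k)) := by ring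
      _ ≤ ((2:ℝ)^(binH ε * (n:ℝ)) * P k n) * (((k:ℝ)+1) * (1-u)^2) := by
          have hkk : ((k:ℝ)+1) = ((k:ℕ):ℝ)+1 := by push_cast; ring
          nlinarith [mul_le_mul_of_nonneg_left key (le_of_lt (mul_pos hWpos hP0))]
      _ = P k n * (((k:ℝ)+1) * ((2:ℝ)^(binH ε * (n:ℝ)) * ((1-u)*(1-u)))) := by ring
  have hbadfinal : (bad.card:ℝ) ≤ δ * P k n := le_trans hbadcard hfinal
  -- conclude
  have hsplitcard : ((Finset.univ.filter goodP).card : ℝ) + (bad.card:ℝ) = P k n := by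
    rw [hbad]
    rw [← cardOmega k n]
    have := Finset.card_filter_add_card_filter_not
      (s := (Finset.univ : Finset (Fin (k+1) → Finset (Fin n)))) (p := goodP)
    rw [← Finset.card_univ]
    exact_mod_cast this
  have hgoal : (1 - δ) * P k n ≤ ((Finset.univ.filter goodP).card : ℝ) := by nlinarith
  exact hgoal


end Stmt8aux

theorem stmt8 {n : ℕ} (k : ℕ) (ε ζ : ℝ) (hε : ε ∈ Set.Ioo (0 : ℝ) (1 / 2))
    (hζ : ζ ∈ Set.Ioo (0 : ℝ) (1 / 2)) (s : ℤ) :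
    (1 - (k + 1) * (2 : ℝ) ^ (-(n : ℝ) + binH ε * n + 2 * ζ * n)) *
        (Fintype.card (Fin (k + 1) → Finset (Fin n))) ≤
      ((Finset.univ.filter fun Ss : Fin (k + 1) → Finset (Fin n) =>
          ∀ T : Finset (Fin n), (T.card : ℝ) ≤ ε * n →
            |bFourier (fun x : Fin n → Bool =>
                  if (∑ i : Fin (k + 1), 2 ^ (i : ℕ) *
                        ∑ j ∈ Ss i, (if x j then (1 : ℤ) else 0)) ≡ s [ZMOD (2 ^ (k + 1))]
                  then 1 else 0) T
                - (if T = ∅ then (2 : ℝ) ^ (-((k : ℝ) + 1)) else 0)|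
              ≤ (2 : ℝ) ^ (-ζ * n)).card : ℝ) := by
  have hQ : (2:ℝ)^(-((k:ℝ)+1)) = Stmt8aux.Q k := by
    unfold Stmt8aux.Q
    rw [Real.rpow_neg (by norm_num : (0:ℝ) ≤ 2)]
    congr 1
    rw [show ((k:ℝ)+1) = (((k+1 : ℕ)):ℝ) by push_cast; ring, Real.rpow_natCast]
  have hmain := Stmt8aux.main_count (n := n) k ε ζ hε hζ s
  rw [Stmt8aux.cardOmega k n]
  refine le_trans hmain (le_of_eq ?_)
  congr 1
  congr 1
  apply Finset.filter_congr
  intro Ss _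
  simp only [hQ]
  exact Iff.rfl
end

section
/- Fix an integer k ≥ 0 and reals ε, ζ ∈ (0, 1/2). Choose integers w₁, …, w_n uniformly and independently from {0, 1, …, 2^{k+1} - 1}. For s ∈ ℤ define f_s : {0,1}^n → {0,1} by f_s(x) = 1 iff Σ w_i x_i ≡ s (mod 2^{k+1}). Then with probability at least 1 - (k+1)·2^{-n + H(ε)n + 2ζn + k + 1} over the choice of weights, simultaneously for all s ∈ ℤ and all T with |T| ≤ εn: |f̂_s(T) - 2^{-(k+1)}·δ_{T,∅}| ≤ 2^{-ζn}. -/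
open scoped Classical

open Finset in
lemma entropy_count {n : ℕ} {ε : ℝ} (h0 : 0 < ε) (h2 : ε < 1/2) :
    (((univ.filter fun T : Finset (Fin n) => (T.card : ℝ) ≤ ε * n).card : ℝ))
      ≤ (2:ℝ) ^ (binH ε * n) := by
  have h1 : ε < 1 := by linarith
  have h1ε : 0 < 1 - ε := by linarith
  set S := univ.filter fun T : Finset (Fin n) => (T.card : ℝ) ≤ ε * n with hS
  have total : ∑ T : Finset (Fin n), ε ^ T.card * (1-ε) ^ (n - T.card) = 1 := by
    have h := Finset.prod_add (fun _ : Fin n => ε) (fun _ : Fin n => 1-ε) univ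
    simp only [add_sub_cancel, Finset.prod_const, Finset.powerset_univ] at h
    rw [one_pow] at h
    have h' : ∑ x : Finset (Fin n), ε ^ x.card * (1-ε) ^ (univ \ x).card = 1 := h.symm
    refine Eq.trans ?_ h'
    apply Finset.sum_congr rfl
    intro T _
    rw [Finset.card_sdiff_of_subset (Finset.subset_univ T), Finset.card_univ, Fintype.card_fin]
  have repr : ∀ a : ℝ, ε ^ a * (1-ε) ^ ((n:ℝ) - a) = (1-ε)^(n:ℝ) * (ε/(1-ε))^a := by
    intro a
    rw [Real.rpow_sub h1ε, Real.div_rpow h0.le h1ε.le]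
    have : ((1-ε):ℝ) ^ a ≠ 0 := (Real.rpow_pos_of_pos h1ε a).ne'
    field_simp
  have key : ∀ T ∈ S, (2:ℝ) ^ (-(binH ε * n)) ≤ ε ^ T.card * (1-ε) ^ (n - T.card) := by
    intro T hT
    rw [hS, Finset.mem_filter] at hT
    have hm : (T.card : ℝ) ≤ ε * n := hT.2
    have hmn : T.card ≤ n := by simpa using Finset.card_le_univ T
    have e3 : (2:ℝ) ^ (-(binH ε * n)) = ε ^ (ε*n) * (1-ε) ^ ((n:ℝ) - ε*n) := by
      have A : (2:ℝ) ^ (Real.logb 2 ε * (ε*(n:ℝ))) = ε ^ (ε*(n:ℝ)) := by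
        rw [Real.rpow_mul (by norm_num : (0:ℝ) ≤ 2) (Real.logb 2 ε) (ε*(n:ℝ)),
          Real.rpow_logb two_pos (by norm_num) h0]
      have B : (2:ℝ) ^ (Real.logb 2 (1-ε) * ((n:ℝ) - ε*n)) = (1-ε) ^ ((n:ℝ) - ε*n) := by
        rw [Real.rpow_mul (by norm_num : (0:ℝ) ≤ 2) (Real.logb 2 (1-ε)) ((n:ℝ) - ε*n),
          Real.rpow_logb two_pos (by norm_num) h1ε]
      rw [← A, ← B, ← Real.rpow_add two_pos]
      congr 1
      simp only [binH]
      ring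
    have e4 : ε ^ (ε*(n:ℝ)) * (1-ε) ^ ((n:ℝ) - ε*n) ≤ ε ^ ((T.card:ℝ)) * (1-ε) ^ ((n:ℝ) - T.card) := by
      rw [repr, repr]
      apply mul_le_mul_of_nonneg_left _ (Real.rpow_nonneg h1ε.le _)
      exact Real.rpow_le_rpow_of_exponent_ge (by positivity) (by rw [div_le_one h1ε]; linarith) hm
    have e5 : ε ^ ((T.card:ℝ)) * (1-ε) ^ ((n:ℝ) - T.card) = ε ^ T.card * (1-ε) ^ (n - T.card) := by
      rw [show (n:ℝ) - (T.card:ℝ) = ((n - T.card : ℕ) : ℝ) by rw [Nat.cast_sub hmn]]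
      rw [Real.rpow_natCast, Real.rpow_natCast]
    rw [e3]
    calc ε ^ (ε*(n:ℝ)) * (1-ε) ^ ((n:ℝ) - ε*n) ≤ _ := e4
      _ = _ := e5
  have hsum : (S.card : ℝ) * (2:ℝ) ^ (-(binH ε * n)) ≤ 1 := by
    calc (S.card : ℝ) * (2:ℝ) ^ (-(binH ε * n))
        ≤ ∑ T ∈ S, ε ^ T.card * (1-ε) ^ (n - T.card) := by
          rw [← nsmul_eq_mul]
          exact Finset.card_nsmul_le_sum S _ _ key
      _ ≤ ∑ T : Finset (Fin n), ε ^ T.card * (1-ε) ^ (n - T.card) := by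
          apply Finset.sum_le_sum_of_subset_of_nonneg (Finset.filter_subset _ _)
          intro T _ _; positivity
      _ = 1 := total
  rw [Real.rpow_neg (by norm_num)] at hsum
  have hpos : (0:ℝ) < (2:ℝ) ^ (binH ε * n) := Real.rpow_pos_of_pos two_pos _
  calc (S.card : ℝ) = S.card * ((2:ℝ)^(binH ε * n))⁻¹ * (2:ℝ)^(binH ε * n) := by
        field_simp
    _ ≤ 1 * (2:ℝ)^(binH ε * n) := mul_le_mul_of_nonneg_right hsum (Real.rpow_nonneg (by norm_num) _)
    _ = _ := one_mul _
noncomputable def zet (M : ℕ) : ℂ := Complex.exp (2 * Real.pi * Complex.I / M)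

lemma zet_prim (M : ℕ) (hM : M ≠ 0) : IsPrimitiveRoot (zet M) M :=
  Complex.isPrimitiveRoot_exp M hM

lemma zet_ne_zero (M : ℕ) : zet M ≠ 0 := Complex.exp_ne_zero _

lemma zet_abs (M : ℕ) (hM : M ≠ 0) : ‖zet M‖ = 1 := by
  have h := (zet_prim M hM).pow_eq_one
  have : ‖zet M‖ ^ M = 1 := by
    rw [← norm_pow, h, norm_one]
  rcases lt_trichotomy ‖zet M‖ 1 with hlt | heq | hgt
  · exact absurd this (by have := pow_lt_one₀ (norm_nonneg _) hlt hM; linarith)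
  · exact heq
  · exact absurd this (by have := one_lt_pow₀ hgt hM; linarith)

lemma zet_zpow_abs (M : ℕ) (hM : M ≠ 0) (a : ℤ) : ‖(zet M) ^ a‖ = 1 := by
  rw [norm_zpow, zet_abs M hM, one_zpow]

-- indicator via geometric sum
lemma geom_indicator (M : ℕ) (hM : M ≠ 0) (a : ℤ) :
    ∑ j ∈ Finset.range M, ((zet M) ^ a) ^ j = if (M:ℤ) ∣ a then (M:ℂ) else 0 := by
  by_cases h : (M:ℤ) ∣ a
  · rw [if_pos h, ((zet_prim M hM).zpow_eq_one_iff_dvd a).mpr h]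
    simp
  · rw [if_neg h]
    have hne : (zet M) ^ a ≠ 1 := fun hc => h (((zet_prim M hM).zpow_eq_one_iff_dvd a).mp hc)
    rw [geom_sum_eq hne]
    have : ((zet M) ^ a) ^ M = 1 := by
      rw [← zpow_natCast, ← zpow_mul, mul_comm, zpow_mul, zpow_natCast,
        (zet_prim M hM).pow_eq_one, one_zpow]
    rw [this, sub_self, zero_div]

lemma sum_zet_pow_eq_zero (M : ℕ) (hM : M ≠ 0) {j : ℕ} (hj1 : 1 ≤ j) (hjM : j < M) :
    ∑ v ∈ Finset.range M, ((zet M) ^ j) ^ v = 0 := by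
  have := geom_indicator M hM j
  rw [if_neg (by
    intro hdvd
    have := Int.le_of_dvd (by exact_mod_cast hj1) hdvd
    omega)] at this
  rw [← this]
  apply Finset.sum_congr rfl
  intro v _
  rw [← zpow_natCast (zet M) j]

noncomputable def Pfac (M : ℕ) {n : ℕ} (w : Fin n → Fin M) (T : Finset (Fin n)) (j : ℕ) : ℂ :=
  ∏ i, (1 + (if i ∈ T then -1 else 1) * (zet M) ^ (j * (w i : ℕ)))

lemma fourier_eq {n : ℕ} (M : ℕ) (hM : M ≠ 0) (w : Fin n → Fin M) (s : ℤ) (T : Finset (Fin n)) :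
    ((bFourier (fun x : Fin n → Bool =>
        if (∑ i : Fin n, ((w i : ℕ) : ℤ) * (if x i then 1 else 0)) ≡ s [ZMOD (M:ℤ)]
        then 1 else 0) T : ℝ) : ℂ)
    = (∑ j ∈ Finset.range M, (zet M) ^ (-s * (j:ℤ)) * Pfac M w T j) / (M * 2 ^ n) := by
  classical
  set ζ := zet M with hζ
  set A : (Fin n → Bool) → ℤ := fun x => ∑ i, ((w i : ℕ) : ℤ) * (if x i then 1 else 0) with hA
  have hζ0 : ζ ≠ 0 := zet_ne_zero M
  have hMC : (M:ℂ) ≠ 0 := Nat.cast_ne_zero.mpr hM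
  have step1 : ∀ x : Fin n → Bool,
      (((if A x ≡ s [ZMOD (M:ℤ)] then (1:ℝ) else 0) : ℝ) : ℂ)
        = (∑ j ∈ Finset.range M, (ζ ^ (A x - s)) ^ j) / M := by
    intro x
    rw [hζ, geom_indicator M hM (A x - s)]
    have hiff : (A x ≡ s [ZMOD (M:ℤ)]) ↔ (M:ℤ) ∣ A x - s := by
      rw [Int.modEq_iff_dvd, dvd_sub_comm]
    push_cast
    split_ifs with h1 h2 h2
    · field_simp; norm_num
    · exact absurd (hiff.mp h1) h2
    · exact absurd (hiff.mpr h2) h1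
    · simp
  set g : ℕ → Fin n → Bool → ℂ := fun j i b =>
    (if b then ζ ^ (j * (w i : ℕ)) else 1) * (if i ∈ T then (if b then -1 else 1) else 1) with hg
  have claimB : ∀ (j : ℕ) (x : Fin n → Bool),
      (ζ ^ (A x - s)) ^ j = ζ ^ (-s * (j:ℤ)) * ∏ i, (if x i then ζ ^ (j * (w i : ℕ)) else 1) := by
    intro j x
    have e1 : ∏ i, (if x i then ζ ^ (j * (w i : ℕ)) else 1)
        = ζ ^ (∑ i, j * (w i : ℕ) * (if x i then 1 else 0)) := by
      rw [← Finset.prod_pow_eq_pow_sum]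
      apply Finset.prod_congr rfl
      intro i _
      by_cases hx : x i <;> simp [hx]
    rw [e1, ← zpow_natCast (ζ ^ (A x - s)) j, ← zpow_mul, ← zpow_natCast ζ, ← zpow_add₀ hζ0]
    congr 1
    beta_reduce
    rw [sub_mul, Finset.sum_mul, sub_eq_neg_add, neg_mul]
    push_cast
    congr 1
    apply Finset.sum_congr rfl
    intro i _
    ring
  have step3 : ∀ x : Fin n → Bool,
      ((-1:ℂ) ^ (T.filter fun i => x i).card)
        = ∏ i, (if i ∈ T then (if x i then (-1:ℂ) else 1) else 1) := by
    intro x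
    rw [Fintype.prod_ite_mem T (fun i => if x i then (-1:ℂ) else 1),
      Finset.prod_ite, Finset.prod_const, Finset.prod_const_one, mul_one]
  have key : ∀ j ∈ Finset.range M,
      (∑ x : Fin n → Bool, (ζ ^ (A x - s)) ^ j * ((-1:ℂ) ^ (T.filter fun i => x i).card))
        = ζ ^ (-s * (j:ℤ)) * Pfac M w T j := by
    intro j _
    have e2 : ∀ x : Fin n → Bool, (ζ ^ (A x - s)) ^ j * ((-1:ℂ) ^ (T.filter fun i => x i).card)
        = ζ ^ (-s * (j:ℤ)) * ∏ i, g j i (x i) := by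
      intro x
      rw [step3 x, claimB j x, mul_assoc, ← Finset.prod_mul_distrib]
    rw [Finset.sum_congr rfl (fun x _ => e2 x), ← Finset.mul_sum]
    congr 1
    rw [← Fintype.prod_sum]
    apply Finset.prod_congr rfl
    intro i _
    rw [Fintype.sum_bool]
    simp only [hg, if_true, if_false, one_mul, mul_one]
    by_cases hiT : i ∈ T <;> simp [hiT] <;> ring
  rw [bFourier]
  push_cast
  rw [Finset.sum_congr rfl (fun x _ => by
    rw [show ((if A x ≡ s [ZMOD (M:ℤ)] then (1:ℝ) else 0 : ℝ) : ℂ)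
        = (∑ j ∈ Finset.range M, (ζ ^ (A x - s)) ^ j) / M from step1 x])]
  have main : (∑ x : Fin n → Bool,
      ((∑ j ∈ Finset.range M, (ζ ^ (A x - s)) ^ j) / M) * ((-1:ℂ) ^ (T.filter fun i => x i).card))
      = (∑ j ∈ Finset.range M, ζ ^ (-s * (j:ℤ)) * Pfac M w T j) / M := by
    calc ∑ x : Fin n → Bool,
        ((∑ j ∈ Finset.range M, (ζ ^ (A x - s)) ^ j) / M) * ((-1:ℂ) ^ (T.filter fun i => x i).card)
        = (∑ x : Fin n → Bool, ∑ j ∈ Finset.range M,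
            (ζ ^ (A x - s)) ^ j * ((-1:ℂ) ^ (T.filter fun i => x i).card)) / M := by
          rw [Finset.sum_div]
          apply Finset.sum_congr rfl
          intro x _
          rw [div_mul_eq_mul_div, Finset.sum_mul]
      _ = (∑ j ∈ Finset.range M, ∑ x : Fin n → Bool,
            (ζ ^ (A x - s)) ^ j * ((-1:ℂ) ^ (T.filter fun i => x i).card)) / M := by
          rw [Finset.sum_comm]
      _ = (∑ j ∈ Finset.range M, ζ ^ (-s * (j:ℤ)) * Pfac M w T j) / M := by
          rw [Finset.sum_congr rfl key]
  rw [main, div_div]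

lemma second_moment {n : ℕ} (M : ℕ) (hM : M ≠ 0) (T : Finset (Fin n)) {j : ℕ}
    (hj1 : 1 ≤ j) (hjM : j < M) :
    ∑ w : Fin n → Fin M, Complex.normSq (Pfac M w T j) = (2*M : ℝ) ^ n := by
  classical
  have hfac : ∀ w : Fin n → Fin M, Complex.normSq (Pfac M w T j)
      = ∏ i, Complex.normSq (1 + (if i ∈ T then -1 else 1) * (zet M) ^ (j * (w i : ℕ))) := by
    intro w
    rw [Pfac, map_prod]
  have hswap : ∑ w : Fin n → Fin M,
      ∏ i, Complex.normSq (1 + (if i ∈ T then -1 else 1) * (zet M) ^ (j * (w i : ℕ)))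
      = ∏ i, ∑ v : Fin M, Complex.normSq (1 + (if i ∈ T then -1 else 1) * (zet M) ^ (j * (v : ℕ))) := by
    rw [Fintype.prod_sum (fun i (v : Fin M) =>
      Complex.normSq (1 + (if i ∈ T then -1 else 1) * (zet M) ^ (j * (v : ℕ))))]
  have hz1 : ∀ v : ℕ, Complex.normSq ((zet M) ^ (j * v)) = 1 := by
    intro v
    rw [Complex.normSq_eq_norm_sq, norm_pow, zet_abs M hM, one_pow, one_pow]
  have hterm : ∀ (c : ℂ), (c = 1 ∨ c = -1) → ∀ v : ℕ,
      Complex.normSq (1 + c * (zet M) ^ (j * v))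
        = 2 + (if c = 1 then 2 else -2) * ((zet M) ^ (j * v)).re := by
    intro c hc v
    have h1 := hz1 v
    rw [Complex.normSq_apply] at h1 ⊢
    rcases hc with h | h <;> subst h <;> norm_num <;> nlinarith [h1]
  have hcol : ∀ i : Fin n,
      ∑ v : Fin M, Complex.normSq (1 + (if i ∈ T then -1 else 1) * (zet M) ^ (j * (v : ℕ))) = 2*M := by
    intro i
    have hre : ∑ v : Fin M, ((zet M) ^ (j * (v : ℕ))).re = 0 := by
      have : ∑ v : Fin M, ((zet M) ^ (j * (v : ℕ))) = 0 := by
        rw [Fin.sum_univ_eq_sum_range (fun v => (zet M) ^ (j * v))]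
        rw [← sum_zet_pow_eq_zero M hM hj1 hjM]
        apply Finset.sum_congr rfl
        intro v _
        rw [pow_mul]
      calc ∑ v : Fin M, ((zet M) ^ (j * (v : ℕ))).re
          = (∑ v : Fin M, (zet M) ^ (j * (v : ℕ))).re := (Complex.re_sum _ _).symm
        _ = 0 := by rw [this]; rfl
    have hgen : ∀ (c : ℂ), (c = 1 ∨ c = -1) →
        ∑ v : Fin M, Complex.normSq (1 + c * (zet M) ^ (j * (v : ℕ))) = 2*M := by
      intro c hc'
      rw [Finset.sum_congr rfl (fun (v : Fin M) _ => hterm c hc' (v : ℕ))]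
      rw [Finset.sum_add_distrib, Finset.sum_const, ← Finset.mul_sum, hre, mul_zero, add_zero]
      simp [Finset.card_univ]
      ring
    by_cases hiT : i ∈ T <;> simp only [hiT, if_true, if_false]
    · exact hgen (-1) (Or.inr rfl)
    · exact hgen 1 (Or.inl rfl)
  rw [Finset.sum_congr rfl (fun w _ => hfac w), hswap,
    Finset.prod_congr rfl (fun i _ => hcol i), Finset.prod_const, Finset.card_univ]
  simp

lemma Pfac_zero {n : ℕ} (M : ℕ) (w : Fin n → Fin M) (T : Finset (Fin n)) :
    Pfac M w T 0 = if T = ∅ then (2:ℂ)^n else 0 := by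
  rw [Pfac]
  simp only [zero_mul, pow_zero, mul_one]
  by_cases hT : T = ∅
  · subst hT
    simp
    norm_num
  · obtain ⟨i, hi⟩ := Finset.nonempty_iff_ne_empty.mpr hT
    rw [if_neg hT]
    apply Finset.prod_eq_zero (Finset.mem_univ i)
    simp [hi]

lemma markov {n M : ℕ} (hM : M ≠ 0) (T : Finset (Fin n)) {j : ℕ}
    (hj1 : 1 ≤ j) (hjM : j < M) {t : ℝ} (ht : 0 < t) :
    ((Finset.univ.filter fun w : Fin n → Fin M => t < ‖Pfac M w T j‖).card : ℝ)
      ≤ (2*M:ℝ)^n / t^2 := by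
  classical
  set Bd := Finset.univ.filter fun w : Fin n → Fin M => t < ‖Pfac M w T j‖ with hBd
  have h1 : (Bd.card : ℝ) * t^2 ≤ ∑ w : Fin n → Fin M, Complex.normSq (Pfac M w T j) := by
    calc (Bd.card : ℝ) * t^2 ≤ ∑ w ∈ Bd, Complex.normSq (Pfac M w T j) := by
          rw [← nsmul_eq_mul]
          apply Finset.card_nsmul_le_sum
          intro w hw
          rw [hBd, Finset.mem_filter] at hw
          have := hw.2
          calc t^2 ≤ (‖Pfac M w T j‖)^2 :=
                pow_le_pow_left₀ ht.le this.le 2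
            _ = Complex.normSq (Pfac M w T j) := Complex.sq_norm _
      _ ≤ ∑ w : Fin n → Fin M, Complex.normSq (Pfac M w T j) := by
          apply Finset.sum_le_sum_of_subset_of_nonneg (Finset.filter_subset _ _)
          intro w _ _
          exact Complex.normSq_nonneg _
  rw [second_moment M hM T hj1 hjM] at h1
  rw [le_div_iff₀ (by positivity)]
  exact h1

lemma good_bound {n M : ℕ} (hM2 : 2 ≤ M) (w : Fin n → Fin M) (s : ℤ) (T : Finset (Fin n))
    {b : ℝ} (hb : 0 ≤ b)
    (hP : ∀ j, 1 ≤ j → j < M → ‖Pfac M w T j‖ ≤ (2:ℝ)^n * b) :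
    |bFourier (fun x : Fin n → Bool =>
        if (∑ i : Fin n, ((w i : ℕ) : ℤ) * (if x i then 1 else 0)) ≡ s [ZMOD (M:ℤ)]
        then 1 else 0) T - (if T = ∅ then ((M:ℝ))⁻¹ else 0)| ≤ b := by
  classical
  have hM : M ≠ 0 := by omega
  have hMC : (M:ℂ) ≠ 0 := Nat.cast_ne_zero.mpr hM
  have h2C : ((2:ℂ))^n ≠ 0 := pow_ne_zero _ two_ne_zero
  set F := bFourier (fun x : Fin n → Bool =>
      if (∑ i : Fin n, ((w i : ℕ) : ℤ) * (if x i then 1 else 0)) ≡ s [ZMOD (M:ℤ)]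
      then 1 else 0) T with hF
  set D : ℝ := if T = ∅ then ((M:ℝ))⁻¹ else 0 with hD
  have hid := fourier_eq M hM w s T
  have hsplit : ∑ j ∈ Finset.range M, (zet M) ^ (-s * (j:ℤ)) * Pfac M w T j
      = (if T = ∅ then (2:ℂ)^n else 0)
        + ∑ j ∈ Finset.Ico 1 M, (zet M) ^ (-s * (j:ℤ)) * Pfac M w T j := by
    rw [Finset.range_eq_Ico, Finset.sum_eq_sum_Ico_succ_bot (by omega : 0 < M)]
    congr 1
    rw [Pfac_zero]
    norm_num
  have hdiff : ((F : ℝ) : ℂ) - ((D : ℝ) : ℂ)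
      = (∑ j ∈ Finset.Ico 1 M, (zet M) ^ (-s * (j:ℤ)) * Pfac M w T j) / (M * 2^n) := by
    rw [hF, hid, hsplit, add_div]
    have : (if T = ∅ then ((2:ℂ))^n else 0) / ((M:ℂ) * 2^n) = ((D:ℝ):ℂ) := by
      rw [hD]
      by_cases hT : T = ∅
      · simp only [hT, if_true, Complex.ofReal_inv, Complex.ofReal_natCast]
        rw [div_eq_iff (mul_ne_zero hMC h2C)]
        field_simp
      · simp [hT]
    rw [this]
    ring
  have habs : |F - D| ≤ (M - 1 : ℝ) * ((2:ℝ)^n * b) / (M * 2^n) := by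
    have e1 : |F - D| = ‖((F:ℝ):ℂ) - ((D:ℝ):ℂ)‖ := by
      rw [← Complex.ofReal_sub, Complex.norm_real, Real.norm_eq_abs]
    rw [e1, hdiff, norm_div]
    have e2 : ‖(M:ℂ) * 2^n‖ = (M:ℝ) * 2^n := by
      rw [norm_mul, norm_pow, Complex.norm_natCast, Complex.norm_two]
    rw [e2]
    apply (div_le_div_iff_of_pos_right (by positivity : (0:ℝ) < (M:ℝ) * 2^n)).mpr
    calc ‖∑ j ∈ Finset.Ico 1 M, (zet M) ^ (-s * (j:ℤ)) * Pfac M w T j‖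
        ≤ ∑ j ∈ Finset.Ico 1 M, ‖(zet M) ^ (-s * (j:ℤ)) * Pfac M w T j‖ :=
          norm_sum_le _ _
      _ ≤ ∑ _j ∈ Finset.Ico 1 M, (2:ℝ)^n * b := by
          apply Finset.sum_le_sum
          intro j hj
          rw [Finset.mem_Ico] at hj
          rw [norm_mul, zet_zpow_abs M hM, one_mul]
          exact hP j hj.1 hj.2
      _ = (M - 1 : ℝ) * ((2:ℝ)^n * b) := by
          rw [Finset.sum_const, Nat.card_Ico, nsmul_eq_mul, Nat.cast_sub (by omega : 1 ≤ M)]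
          norm_num
  calc |F - D| ≤ (M - 1 : ℝ) * ((2:ℝ)^n * b) / (M * 2^n) := habs
    _ ≤ b := by
        rw [div_le_iff₀ (by positivity)]
        have h2 : (0:ℝ) < 2^n := by positivity
        have hM1 : (1:ℝ) ≤ (M:ℝ) := by exact_mod_cast (by omega : 1 ≤ M)
        nlinarith

theorem stmt9 {n : ℕ} (k : ℕ) (ε ζ : ℝ) (hε : ε ∈ Set.Ioo (0 : ℝ) (1 / 2))
    (hζ : ζ ∈ Set.Ioo (0 : ℝ) (1 / 2)) :
    (1 - (k + 1) * (2 : ℝ) ^ (-(n : ℝ) + binH ε * n + 2 * ζ * n + k + 1)) *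
        (Fintype.card (Fin n → Fin (2 ^ (k + 1)))) ≤
      ((Finset.univ.filter fun w : Fin n → Fin (2 ^ (k + 1)) =>
          ∀ s : ℤ, ∀ T : Finset (Fin n), (T.card : ℝ) ≤ ε * n →
            |bFourier (fun x : Fin n → Bool =>
                  if (∑ i : Fin n, (w i : ℤ) * (if x i then 1 else 0)) ≡ s [ZMOD (2 ^ (k + 1))]
                  then 1 else 0) T
                - (if T = ∅ then (2 : ℝ) ^ (-((k : ℝ) + 1)) else 0)|
              ≤ (2 : ℝ) ^ (-ζ * n)).card : ℝ) := by
  classical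
  obtain ⟨hε0, hε2⟩ := hε
  obtain ⟨hζ0, hζ2⟩ := hζ
  set M : ℕ := 2 ^ (k + 1) with hMdef
  have hM2 : 2 ≤ M := by
    rw [hMdef]
    calc 2 = 2^1 := by norm_num
      _ ≤ 2^(k+1) := Nat.pow_le_pow_right (by norm_num) (by omega)
  have hM : M ≠ 0 := by omega
  set t : ℝ := (2:ℝ)^n * (2:ℝ) ^ (-ζ * (n:ℝ)) with ht
  have htpos : 0 < t := by positivity
  set S : Finset (Finset (Fin n)) := Finset.univ.filter fun T => (T.card : ℝ) ≤ ε * n with hS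
  set Bad : ℕ → Finset (Fin n) → Finset (Fin n → Fin M) := fun j T =>
    Finset.univ.filter fun w => t < ‖Pfac M w T j‖ with hBad
  set GoodW : Finset (Fin n → Fin M) := Finset.univ.filter fun w =>
    ∀ j : ℕ, 1 ≤ j → j < M → ∀ T : Finset (Fin n), (T.card : ℝ) ≤ ε * n →
      ‖Pfac M w T j‖ ≤ t with hGoodW
  set Target : Finset (Fin n → Fin M) := Finset.univ.filter fun w : Fin n → Fin M =>
          ∀ s : ℤ, ∀ T : Finset (Fin n), (T.card : ℝ) ≤ ε * n →
            |bFourier (fun x : Fin n → Bool =>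
                  if (∑ i : Fin n, (w i : ℤ) * (if x i then 1 else 0)) ≡ s [ZMOD (2 ^ (k + 1))]
                  then 1 else 0) T
                - (if T = ∅ then (2 : ℝ) ^ (-((k : ℝ) + 1)) else 0)|
              ≤ (2 : ℝ) ^ (-ζ * n) with hTarget
  -- inclusion
  have hsub : GoodW ⊆ Target := by
    intro w hw
    rw [hGoodW, Finset.mem_filter] at hw
    rw [hTarget, Finset.mem_filter]
    refine ⟨Finset.mem_univ _, ?_⟩
    intro s T hT
    have hfun : (fun x : Fin n → Bool =>
        if (∑ i : Fin n, (w i : ℤ) * (if x i then 1 else 0)) ≡ s [ZMOD (2 ^ (k + 1))]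
        then (1:ℝ) else 0)
        = (fun x : Fin n → Bool =>
        if (∑ i : Fin n, ((w i : ℕ) : ℤ) * (if x i then 1 else 0)) ≡ s [ZMOD ((M:ℕ):ℤ)]
        then (1:ℝ) else 0) := by
      funext x
      have h1 : ((M:ℕ):ℤ) = (2:ℤ)^(k+1) := by rw [hMdef]; push_cast; ring
      rw [h1]
    have hdelta : (if T = ∅ then (2 : ℝ) ^ (-((k : ℝ) + 1)) else 0)
        = (if T = ∅ then ((M:ℝ))⁻¹ else 0) := by
      congr 1
      rw [Real.rpow_neg (by norm_num), show ((k:ℝ)+1) = ((k+1:ℕ):ℝ) by push_cast; ring,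
        Real.rpow_natCast, hMdef]
      push_cast
      ring
    rw [hfun, hdelta]
    apply good_bound hM2 w s T (Real.rpow_nonneg (by norm_num) _)
    intro j hj1 hjM
    calc ‖Pfac M w T j‖ ≤ t := hw.2 j hj1 hjM T hT
      _ = (2:ℝ)^n * (2:ℝ)^(-ζ*(n:ℝ)) := ht
  -- covering
  have hcover : Finset.univ \ GoodW ⊆
      (Finset.Ico 1 M).biUnion (fun j => S.biUnion (fun T => Bad j T)) := by
    intro w hw
    obtain ⟨-, hw2⟩ := Finset.mem_sdiff.mp hw
    rw [hGoodW, Finset.mem_filter] at hw2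
    push_neg at hw2
    obtain ⟨j, hj1, hjM, T, hT, hPT⟩ := hw2 (Finset.mem_univ w)
    apply Finset.mem_biUnion.mpr
    refine ⟨j, Finset.mem_Ico.mpr ⟨hj1, hjM⟩, Finset.mem_biUnion.mpr ⟨T, ?_, ?_⟩⟩
    · rw [hS, Finset.mem_filter]
      exact ⟨Finset.mem_univ _, hT⟩
    · rw [hBad]
      simp only [Finset.mem_filter, Finset.mem_univ, true_and]
      exact hPT
  -- counting
  have hScard : ((S.card : ℝ)) ≤ (2:ℝ) ^ (binH ε * n) := entropy_count hε0 hε2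
  have hbadcard : (((Finset.univ \ GoodW).card : ℝ))
      ≤ ((M:ℝ) - 1) * (2:ℝ) ^ (binH ε * n) * ((2*(M:ℝ))^n / t^2) := by
    have h1 : ((Finset.univ \ GoodW).card : ℝ)
        ≤ ∑ j ∈ Finset.Ico 1 M, ∑ T ∈ S, ((Bad j T).card : ℝ) := by
      have := Finset.card_le_card hcover
      have h2 := Finset.card_biUnion_le (s := Finset.Ico 1 M)
        (t := fun j => S.biUnion fun T => Bad j T)
      have h3 : ∑ j ∈ Finset.Ico 1 M, ((S.biUnion fun T => Bad j T)).card
          ≤ ∑ j ∈ Finset.Ico 1 M, ∑ T ∈ S, (Bad j T).card :=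
        Finset.sum_le_sum (fun j _ => Finset.card_biUnion_le)
      have := le_trans this (le_trans h2 h3)
      exact_mod_cast by push_cast; exact_mod_cast this
    have h4 : ∀ j ∈ Finset.Ico 1 M, ∀ T ∈ S, ((Bad j T).card : ℝ) ≤ (2*(M:ℝ))^n / t^2 := by
      intro j hj T _
      rw [Finset.mem_Ico] at hj
      have := markov (n := n) hM T hj.1 hj.2 htpos
      rw [hBad]
      exact_mod_cast this
    calc ((Finset.univ \ GoodW).card : ℝ)
        ≤ ∑ j ∈ Finset.Ico 1 M, ∑ T ∈ S, ((Bad j T).card : ℝ) := h1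
      _ ≤ ∑ j ∈ Finset.Ico 1 M, ∑ _T ∈ S, ((2*(M:ℝ))^n / t^2) :=
          Finset.sum_le_sum (fun j hj => Finset.sum_le_sum (fun T hT => h4 j hj T hT))
      _ = ((M - 1 : ℕ) : ℝ) * ((S.card : ℝ) * ((2*(M:ℝ))^n / t^2)) := by
          rw [Finset.sum_const, Finset.sum_const, Nat.card_Ico, nsmul_eq_mul, nsmul_eq_mul]
      _ ≤ ((M:ℝ) - 1) * ((2:ℝ) ^ (binH ε * n) * ((2*(M:ℝ))^n / t^2)) := by
          rw [Nat.cast_sub (by omega : 1 ≤ M), Nat.cast_one]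
          have hM1 : (0:ℝ) ≤ (M:ℝ) - 1 := by
            have : (1:ℝ) ≤ (M:ℝ) := by exact_mod_cast (by omega : 1 ≤ M)
            linarith
          exact mul_le_mul_of_nonneg_left
            (mul_le_mul_of_nonneg_right hScard (by positivity)) hM1
      _ = ((M:ℝ) - 1) * (2:ℝ) ^ (binH ε * n) * ((2*(M:ℝ))^n / t^2) := by ring
  -- numeric bound on the bad mass
  have hMreal : (M:ℝ) = (2:ℝ) ^ ((k:ℝ) + 1) := by
    rw [hMdef, show ((k:ℝ)+1) = ((k+1:ℕ):ℝ) by push_cast; ring, Real.rpow_natCast]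
    push_cast
    ring
  have htsq : t^2 = (2:ℝ) ^ (2*(n:ℝ) - 2*ζ*(n:ℝ)) := by
    rw [ht, mul_pow, ← Real.rpow_natCast (2:ℝ) n, ← Real.rpow_natCast ((2:ℝ)^((n:ℝ)):ℝ) 2,
      ← Real.rpow_natCast ((2:ℝ)^(-ζ*(n:ℝ))) 2, ← Real.rpow_mul (by norm_num),
      ← Real.rpow_mul (by norm_num), ← Real.rpow_add (by norm_num)]
    congr 1
    push_cast
    ring
  have hnum : ((M:ℝ) - 1) * (2:ℝ) ^ (binH ε * n) * ((2*(M:ℝ))^n / t^2)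
      ≤ ((k:ℝ) + 1) * (2 : ℝ) ^ (-(n : ℝ) + binH ε * n + 2 * ζ * n + k + 1) * (M:ℝ)^n := by
    have step1 : ((M:ℝ) - 1) * (2:ℝ) ^ (binH ε * n) * ((2*(M:ℝ))^n / t^2)
        ≤ (M:ℝ) * (2:ℝ) ^ (binH ε * n) * ((2*(M:ℝ))^n / t^2) := by
      apply mul_le_mul_of_nonneg_right _ (by positivity)
      apply mul_le_mul_of_nonneg_right _ (by positivity)
      linarith
    have step2 : (M:ℝ) * (2:ℝ) ^ (binH ε * n) * ((2*(M:ℝ))^n / t^2)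
        = ((2:ℝ) ^ (-(n : ℝ) + binH ε * n + 2 * ζ * n + k + 1)) * (M:ℝ)^n := by
      rw [mul_pow, htsq]
      rw [show (M:ℝ) * (2:ℝ)^(binH ε * n) * ((2:ℝ)^n * (M:ℝ)^n / (2:ℝ)^(2*(n:ℝ) - 2*ζ*(n:ℝ)))
          = ((M:ℝ) * (2:ℝ)^(binH ε * n) * (2:ℝ)^n / (2:ℝ)^(2*(n:ℝ) - 2*ζ*(n:ℝ))) * (M:ℝ)^n by ring]
      congr 1
      rw [hMreal, ← Real.rpow_natCast (2:ℝ) n, ← Real.rpow_add (by norm_num),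
        ← Real.rpow_add (by norm_num), ← Real.rpow_sub (by norm_num)]
      congr 1
      ring
    have step3 : ((2:ℝ) ^ (-(n : ℝ) + binH ε * n + 2 * ζ * n + k + 1)) * (M:ℝ)^n
        ≤ ((k:ℝ) + 1) * (2 : ℝ) ^ (-(n : ℝ) + binH ε * n + 2 * ζ * n + k + 1) * (M:ℝ)^n := by
      apply mul_le_mul_of_nonneg_right _ (by positivity)
      apply le_mul_of_one_le_left (by positivity)
      have : (0:ℝ) ≤ (k:ℝ) := Nat.cast_nonneg k
      linarith
    calc _ ≤ _ := step1
      _ = _ := step2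
      _ ≤ _ := step3
  -- final assembly
  have hcards : ((Finset.univ \ GoodW).card : ℝ) + (GoodW.card : ℝ)
      = ((M:ℝ))^n := by
    have := Finset.card_sdiff_add_card_eq_card (Finset.subset_univ GoodW)
    have hcu : (Finset.univ : Finset (Fin n → Fin M)).card = M^n := by
      rw [Finset.card_univ]
      simp [Fintype.card_fun]
    rw [hcu] at this
    exact_mod_cast this
  have htarget_ge : (GoodW.card : ℝ) ≤ (Target.card : ℝ) := by
    exact_mod_cast Finset.card_le_card hsub
  have hcardfun : ((Fintype.card (Fin n → Fin M) : ℕ) : ℝ) = ((M:ℝ))^n := by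
    simp [Fintype.card_fun]
  rw [hTarget] at htarget_ge
  calc (1 - ((k:ℝ) + 1) * (2 : ℝ) ^ (-(n : ℝ) + binH ε * n + 2 * ζ * n + k + 1)) *
        ((Fintype.card (Fin n → Fin M) : ℕ) : ℝ)
      = ((M:ℝ))^n - ((k:ℝ) + 1) * (2 : ℝ) ^ (-(n : ℝ) + binH ε * n + 2 * ζ * n + k + 1) * ((M:ℝ))^n := by
        rw [hcardfun]; ring
    _ ≤ ((M:ℝ))^n - ((M:ℝ) - 1) * (2:ℝ) ^ (binH ε * n) * ((2*(M:ℝ))^n / t^2) := by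
        linarith [hnum]
    _ ≤ ((M:ℝ))^n - ((Finset.univ \ GoodW).card : ℝ) := by linarith [hbadcard]
    _ = (GoodW.card : ℝ) := by linarith [hcards]
    _ ≤ _ := htarget_ge
end

section
/- Let f, χ₁, …, χ_k : X → {-1,1} be functions on a finite set X. Suppose Σ_{i=1}^{k} |⟨f, χ_i⟩| < 1/2 and for each i, Σ_{j≠i} |⟨χ_i, χ_j⟩| ≤ 1/2, where ⟨u,v⟩ = |X|^{-1} Σ_{x∈X} u(x)v(x). Then there exists a probability distribution μ on X such that E_{x∼μ}[f(x)χ_i(x)] = 0 for every i = 1, …, k. -/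
theorem stmt10 {X : Type*} [Fintype X] [Nonempty X] {k : ℕ}
    (f : X → ℝ) (χ : Fin k → X → ℝ)
    (hf : ∀ x, f x = 1 ∨ f x = -1) (hχ : ∀ i x, χ i x = 1 ∨ χ i x = -1)
    (h1 : ∑ i : Fin k, |(∑ x : X, f x * χ i x) / (Fintype.card X : ℝ)| < 1 / 2)
    (h2 : ∀ i : Fin k, ∑ j ∈ Finset.univ.erase i,
        |(∑ x : X, χ i x * χ j x) / (Fintype.card X : ℝ)| ≤ 1 / 2) :
    ∃ μ : X → ℝ, (∀ x, 0 ≤ μ x) ∧ (∑ x : X, μ x) = 1 ∧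
      ∀ i : Fin k, ∑ x : X, μ x * (f x * χ i x) = 0 := by
  have hcard : 0 < Fintype.card X := Fintype.card_pos
  set N : ℝ := (Fintype.card X : ℝ) with hNdef
  have hN0 : 0 < N := by rw [hNdef]; exact_mod_cast hcard
  have hff : ∀ x, f x * f x = 1 := by
    intro x; rcases hf x with h | h <;> rw [h] <;> ring
  have hχχ : ∀ i x, χ i x * χ i x = 1 := by
    intro i x; rcases hχ i x with h | h <;> rw [h] <;> ring
  set c : Matrix (Fin k) (Fin k) ℝ :=
    fun i j => (∑ x : X, χ i x * χ j x) / N with hcdef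
  set b : Fin k → ℝ := fun i => (∑ x : X, f x * χ i x) / N with hbdef
  have hsym : ∀ i j, c i j = c j i := by
    intro i j
    simp only [hcdef]
    congr 1
    exact Finset.sum_congr rfl (fun x _ => mul_comm _ _)
  have hdiag : ∀ i, c i i = 1 := by
    intro i
    simp only [hcdef]
    rw [Finset.sum_congr rfl (fun x _ => hχχ i x)]
    simp [hNdef]
  have hmv : ∀ (t : Fin k → ℝ) (i : Fin k),
      c.mulVec t i = t i + ∑ j ∈ Finset.univ.erase i, c i j * t j := by
    intro t i
    rw [Matrix.mulVec, dotProduct]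
    rw [← Finset.add_sum_erase _ _ (Finset.mem_univ i), hdiag, one_mul]
  -- key ℓ¹ estimate
  have key : ∀ t : Fin k → ℝ,
      ∑ i, |t i| ≤ (∑ i, |c.mulVec t i|) + (1/2) * ∑ i, |t i| := by
    intro t
    have hterm : ∀ i, |t i| ≤ |c.mulVec t i| +
        ∑ j ∈ Finset.univ.erase i, |c i j| * |t j| := by
      intro i
      have : t i = c.mulVec t i - ∑ j ∈ Finset.univ.erase i, c i j * t j := by
        rw [hmv]; ring
      rw [this]
      refine (abs_sub _ _).trans ?_
      gcongr
      refine (Finset.abs_sum_le_sum_abs _ _).trans ?_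
      exact le_of_eq (Finset.sum_congr rfl fun j _ => abs_mul _ _)
    calc ∑ i, |t i| ≤ ∑ i, (|c.mulVec t i| +
          ∑ j ∈ Finset.univ.erase i, |c i j| * |t j|) :=
        Finset.sum_le_sum fun i _ => hterm i
      _ = (∑ i, |c.mulVec t i|) +
          ∑ i, ∑ j ∈ Finset.univ.erase i, |c i j| * |t j| := by
        rw [Finset.sum_add_distrib]
      _ ≤ (∑ i, |c.mulVec t i|) + (1/2) * ∑ i, |t i| := by
        gcongr
        have hswap : ∑ i, ∑ j ∈ Finset.univ.erase i, |c i j| * |t j|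
            = ∑ j, ∑ i ∈ Finset.univ.erase j, |c i j| * |t j| := by
          rw [Finset.sum_comm' (s := Finset.univ) (t' := Finset.univ)
            (t := fun i => Finset.univ.erase i) (s' := fun j => Finset.univ.erase j)]
          intro i j
          simp [eq_comm, ne_comm]
        rw [hswap]
        have : ∀ j : Fin k, ∑ i ∈ Finset.univ.erase j, |c i j| * |t j|
            ≤ (1/2) * |t j| := by
          intro j
          have : ∑ i ∈ Finset.univ.erase j, |c i j| * |t j|
              = (∑ i ∈ Finset.univ.erase j, |c j i|) * |t j| := by
            rw [Finset.sum_mul]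
            exact Finset.sum_congr rfl fun i _ => by rw [hsym]
          rw [this]
          exact mul_le_mul_of_nonneg_right (h2 j) (abs_nonneg _)
        calc ∑ j, ∑ i ∈ Finset.univ.erase j, |c i j| * |t j|
            ≤ ∑ j, (1/2) * |t j| := Finset.sum_le_sum fun j _ => this j
          _ = (1/2) * ∑ j, |t j| := by rw [Finset.mul_sum]
  -- injectivity hence surjectivity of mulVec
  have hinj : Function.Injective c.mulVecLin := by
    rw [injective_iff_map_eq_zero]
    intro t ht
    have h0 : ∀ i, c.mulVec t i = 0 := fun i => congrFun ht i
    have := key t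
    simp only [h0] at this
    simp at this
    have hsum : ∑ i, |t i| ≤ 0 := by linarith
    have hz : ∑ i, |t i| = 0 :=
      le_antisymm hsum (Finset.sum_nonneg fun i _ => abs_nonneg _)
    funext i
    have := (Finset.sum_eq_zero_iff_of_nonneg (fun i _ => abs_nonneg (t i))).mp hz
      i (Finset.mem_univ i)
    simpa using abs_eq_zero.mp this
  have hsurj : Function.Surjective c.mulVecLin :=
    (LinearMap.injective_iff_surjective).mp hinj
  obtain ⟨t, ht⟩ := hsurj (fun i => -b i)
  have htv : ∀ i, c.mulVec t i = -b i := fun i => congrFun ht i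
  -- ℓ¹ bound on t
  have hb1 : ∑ i, |b i| < 1/2 := h1
  have htb : ∑ i, |t i| < 1 := by
    have := key t
    simp only [htv, abs_neg] at this
    linarith
  -- construct the measure
  set ν : X → ℝ := fun x => 1 + ∑ j, t j * (f x * χ j x) with hνdef
  have hfχ1 : ∀ j x, |f x * χ j x| = 1 := by
    intro j x
    rcases hf x with h | h <;> rcases hχ j x with h' | h' <;> rw [h, h'] <;> norm_num
  have hνpos : ∀ x, 0 < ν x := by
    intro x
    have habs : |∑ j, t j * (f x * χ j x)| ≤ ∑ j, |t j| := by
      refine (Finset.abs_sum_le_sum_abs _ _).trans ?_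
      refine Finset.sum_le_sum fun j _ => ?_
      rw [abs_mul, hfχ1, mul_one]
    have := neg_abs_le (∑ j, t j * (f x * χ j x))
    simp only [hνdef]
    linarith
  set T : ℝ := ∑ x : X, ν x with hTdef
  have hT0 : 0 < T := Finset.sum_pos (fun x _ => hνpos x) Finset.univ_nonempty
  refine ⟨fun x => ν x / T, fun x => le_of_lt (div_pos (hνpos x) hT0), ?_, ?_⟩
  · rw [← Finset.sum_div, ← hTdef, div_self (ne_of_gt hT0)]
  · intro i
    have hkey : ∑ x : X, ν x * (f x * χ i x) = 0 := by
      have expand : ∀ x, ν x * (f x * χ i x)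
          = f x * χ i x + ∑ j, t j * (χ j x * χ i x) := by
        intro x
        simp only [hνdef]
        rw [add_mul, one_mul, Finset.sum_mul]
        congr 1
        refine Finset.sum_congr rfl fun j _ => ?_
        have : f x * χ j x * (f x * χ i x) = (f x * f x) * (χ j x * χ i x) := by ring
        rw [mul_assoc, this, hff, one_mul]
      rw [Finset.sum_congr rfl fun x _ => expand x, Finset.sum_add_distrib]
      have e1 : ∑ x : X, f x * χ i x = N * b i := by
        simp only [hbdef]; field_simp
      have e2 : ∑ x : X, ∑ j, t j * (χ j x * χ i x) = N * (c.mulVec t i) := by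
        rw [Finset.sum_comm]
        rw [Matrix.mulVec, dotProduct, Finset.mul_sum]
        refine Finset.sum_congr rfl fun j _ => ?_
        rw [← Finset.mul_sum]
        have : ∑ x : X, χ j x * χ i x = N * c i j := by
          simp only [hcdef]
          rw [Finset.sum_congr rfl fun x _ => mul_comm (χ j x) (χ i x)]
          field_simp
        rw [this]; ring
      rw [e1, e2, htv]
      ring
    calc ∑ x : X, ν x / T * (f x * χ i x)
        = (∑ x : X, ν x * (f x * χ i x)) / T := by
          rw [Finset.sum_div]
          exact Finset.sum_congr rfl fun x _ => by ring
      _ = 0 := by rw [hkey, zero_div]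
end

section
/- Let f : X → {-1,1} and g : Y → {-1,1} with X, Y ⊆ ℝ^n. Suppose there exist rational functions p₁/q₁ of degree ≤ d (q₁ > 0 on X) and p₂/q₂ of degree ≤ d (q₂ > 0 on Y) with sup_{x∈X} |f(x) - p₁(x)/q₁(x)| + sup_{y∈Y} |g(y) - p₂(y)/q₂(y)| < 1. Then the function (x,y) ↦ f(x) ∧ g(y) (AND of the two ±1-valued functions, with -1 meaning true) is the sign of a polynomial of degree at most 2d on X × Y; i.e., deg_±(f ∧ g) ≤ 2d. -/
theorem stmt13 {n d : ℕ} (X Y : Set (Fin n → ℝ))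
    (f g : (Fin n → ℝ) → ℝ)
    (hf : ∀ x ∈ X, f x = 1 ∨ f x = -1) (hg : ∀ y ∈ Y, g y = 1 ∨ g y = -1)
    (p₁ q₁ p₂ q₂ : MvPolynomial (Fin n) ℝ)
    (hp₁ : p₁.totalDegree ≤ d) (hq₁ : q₁.totalDegree ≤ d)
    (hp₂ : p₂.totalDegree ≤ d) (hq₂ : q₂.totalDegree ≤ d)
    (hq₁pos : ∀ x ∈ X, 0 < MvPolynomial.eval x q₁)
    (hq₂pos : ∀ y ∈ Y, 0 < MvPolynomial.eval y q₂)
    (ε₁ ε₂ : ℝ) (hε : ε₁ + ε₂ < 1)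
    (h₁ : ∀ x ∈ X, |f x - MvPolynomial.eval x p₁ / MvPolynomial.eval x q₁| ≤ ε₁)
    (h₂ : ∀ y ∈ Y, |g y - MvPolynomial.eval y p₂ / MvPolynomial.eval y q₂| ≤ ε₂) :
    ∃ P : MvPolynomial (Fin n ⊕ Fin n) ℝ, P.totalDegree ≤ 2 * d ∧
      ∀ x ∈ X, ∀ y ∈ Y,
        (if f x = -1 ∧ g y = -1 then (-1 : ℝ) else 1) =
          Real.sign (MvPolynomial.eval (Sum.elim x y) P) := by
  classical
  set A := MvPolynomial.rename (Sum.inl : Fin n → Fin n ⊕ Fin n) p₁ with hA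
  set B := MvPolynomial.rename (Sum.inl : Fin n → Fin n ⊕ Fin n) q₁ with hB
  set C := MvPolynomial.rename (Sum.inr : Fin n → Fin n ⊕ Fin n) p₂ with hC
  set D := MvPolynomial.rename (Sum.inr : Fin n → Fin n ⊕ Fin n) q₂ with hD
  refine ⟨B * D + A * D + C * B, ?_, ?_⟩
  · have hAd : A.totalDegree ≤ d := le_trans (MvPolynomial.totalDegree_rename_le _ _) hp₁
    have hBd : B.totalDegree ≤ d := le_trans (MvPolynomial.totalDegree_rename_le _ _) hq₁
    have hCd : C.totalDegree ≤ d := le_trans (MvPolynomial.totalDegree_rename_le _ _) hp₂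
    have hDd : D.totalDegree ≤ d := le_trans (MvPolynomial.totalDegree_rename_le _ _) hq₂
    calc (B * D + A * D + C * B).totalDegree
        ≤ max (max (B * D).totalDegree (A * D).totalDegree) (C * B).totalDegree :=
          le_trans (MvPolynomial.totalDegree_add _ _)
            (max_le_max (MvPolynomial.totalDegree_add _ _) le_rfl)
      _ ≤ 2 * d := by
          refine max_le (max_le ?_ ?_) ?_
          · exact le_trans (MvPolynomial.totalDegree_mul _ _) (by omega)
          · exact le_trans (MvPolynomial.totalDegree_mul _ _) (by omega)
          · exact le_trans (MvPolynomial.totalDegree_mul _ _) (by omega)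
  · intro x hx y hy
    have hq1 := hq₁pos x hx
    have hq2 := hq₂pos y hy
    have eA : MvPolynomial.eval (Sum.elim x y) A = MvPolynomial.eval x p₁ := by
      rw [hA, MvPolynomial.eval_rename]; rfl
    have eB : MvPolynomial.eval (Sum.elim x y) B = MvPolynomial.eval x q₁ := by
      rw [hB, MvPolynomial.eval_rename]; rfl
    have eC : MvPolynomial.eval (Sum.elim x y) C = MvPolynomial.eval y p₂ := by
      rw [hC, MvPolynomial.eval_rename]; rfl
    have eD : MvPolynomial.eval (Sum.elim x y) D = MvPolynomial.eval y q₂ := by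
      rw [hD, MvPolynomial.eval_rename]; rfl
    set a := MvPolynomial.eval x p₁ / MvPolynomial.eval x q₁ with ha
    set b := MvPolynomial.eval y p₂ / MvPolynomial.eval y q₂ with hb
    have hev : MvPolynomial.eval (Sum.elim x y) (B * D + A * D + C * B)
        = (MvPolynomial.eval x q₁ * MvPolynomial.eval y q₂) * (1 + a + b) := by
      simp only [map_add, map_mul, eA, eB, eC, eD, ha, hb]
      field_simp
    have h1 := h₁ x hx
    have h2 := h₂ y hy
    have habs : |(1 + a + b) - (1 + f x + g y)| < 1 := by
      have heq : (1 + a + b) - (1 + f x + g y) = -((f x - a) + (g y - b)) := by ring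
      rw [heq, abs_neg]
      calc |(f x - a) + (g y - b)| ≤ |f x - a| + |g y - b| := abs_add_le _ _
        _ ≤ ε₁ + ε₂ := add_le_add h1 h2
        _ < 1 := hε
    rw [hev]
    by_cases hcase : f x = -1 ∧ g y = -1
    · have hfg : 1 + f x + g y = -1 := by rw [hcase.1, hcase.2]; ring
      have hneg : 1 + a + b < 0 := by
        have h' := abs_lt.mp habs
        rw [hfg] at h'; linarith [h'.2]
      rw [if_pos hcase, Real.sign_of_neg (mul_neg_of_pos_of_neg (mul_pos hq1 hq2) hneg)]
    · have hfg : 1 + f x + g y ≥ 1 := by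
        rcases hf x hx with hf1 | hf1 <;> rcases hg y hy with hg1 | hg1
        · rw [hf1, hg1]; norm_num
        · rw [hf1, hg1]; norm_num
        · rw [hf1, hg1]; norm_num
        · exact absurd ⟨hf1, hg1⟩ hcase
      have hpos : 0 < 1 + a + b := by
        have h' := abs_lt.mp habs
        linarith [h'.1]
      rw [if_neg hcase, Real.sign_of_pos (mul_pos (mul_pos hq1 hq2) hpos)]
end

section
/- Let k = ⌊αn⌋ for a suitable small constant α > 0, fix weights w₁,…,w_n ∈ {0,…,2^{k+1}-1}, and suppose for each s ∈ {±1, ±2, …, ±2^k} there is a probability distribution μ_s supported on X_s = {x ∈ {0,1}^n : Σ w_i x_i ≡ s (mod 2^{k+1})} such that E_{μ_s}[p(x)] = E_{μ_r}[p(x)] for all such s, r and every polynomial p of degree ≤ k. Define f : {0,1}^n × {0,…,n} → {-1,1} by f(x,t) = sign(1/2 + Σ w_i x_i - 2^{k+1} t). Then for every d = 0, 1, …, k: R⁺(f, d) ≥ R⁺({±1, ±2, …, ±2^k}, d), where the right-hand side is the least error in approximating sign(x) by a degree-d rational function with positive denominator on {±1,…,±2^k}. -/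
open Polynomial MvPolynomial in
lemma natDegree_aeval_le' {σ : Type*} (g : σ → Polynomial ℝ)
    (h : ∀ v, (g v).natDegree ≤ 1) (p : MvPolynomial σ ℝ) :
    (MvPolynomial.aeval g p).natDegree ≤ p.totalDegree := by
  rw [MvPolynomial.aeval_def, MvPolynomial.eval₂_eq]
  apply Polynomial.natDegree_sum_le_of_forall_le
  intro m hm
  refine le_trans (Polynomial.natDegree_C_mul_le _ _) ?_
  refine le_trans (Polynomial.natDegree_prod_le _ _) ?_
  refine le_trans (Finset.sum_le_sum (fun v _ => le_trans (Polynomial.natDegree_pow_le)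
    (by nlinarith [h v, Nat.zero_le (m v)] : m v * (g v).natDegree ≤ m v))) ?_
  exact MvPolynomial.le_totalDegree hm

open MvPolynomial in
lemma totalDegree_aeval_le' {σ τ : Type*} (g : σ → MvPolynomial τ ℝ)
    (h : ∀ v, (g v).totalDegree ≤ 1) (p : MvPolynomial σ ℝ) :
    (MvPolynomial.aeval g p).totalDegree ≤ p.totalDegree := by
  rw [MvPolynomial.aeval_def, MvPolynomial.eval₂_eq]
  refine le_trans (MvPolynomial.totalDegree_finset_sum _ _) ?_
  apply Finset.sup_le
  intro m hm
  refine le_trans (MvPolynomial.totalDegree_mul _ _) ?_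
  rw [show (algebraMap ℝ (MvPolynomial τ ℝ)) (MvPolynomial.coeff m p) = MvPolynomial.C _ from rfl,
    MvPolynomial.totalDegree_C, zero_add]
  refine le_trans (MvPolynomial.totalDegree_finset_prod _ _) ?_
  refine le_trans (Finset.sum_le_sum (fun v _ => le_trans (MvPolynomial.totalDegree_pow _ _)
    (by nlinarith [h v, Nat.zero_le (m v)] : m v * (g v).totalDegree ≤ m v))) ?_
  exact MvPolynomial.le_totalDegree hm

lemma eval_aeval_poly {σ : Type*} (s : ℝ) (g : σ → Polynomial ℝ) (p : MvPolynomial σ ℝ) :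
    Polynomial.eval s (MvPolynomial.aeval g p) =
      MvPolynomial.eval (fun v => Polynomial.eval s (g v)) p := by
  induction p using MvPolynomial.induction_on with
  | C a => simp
  | add p q hp hq => simp only [map_add, Polynomial.eval_add, hp, hq]
  | mul_X p i hp => simp only [map_mul, MvPolynomial.aeval_X, Polynomial.eval_mul,
      MvPolynomial.eval_mul, MvPolynomial.eval_X, hp]

lemma eval_aeval_mv {σ τ : Type*} (v : τ → ℝ) (g : σ → MvPolynomial τ ℝ) (p : MvPolynomial σ ℝ) :
    MvPolynomial.eval v (MvPolynomial.aeval g p) =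
      MvPolynomial.eval (fun i => MvPolynomial.eval v (g i)) p := by
  induction p using MvPolynomial.induction_on with
  | C a => simp
  | add p q hp hq => simp only [map_add, hp, hq]
  | mul_X p i hp => simp only [map_mul, MvPolynomial.aeval_X, MvPolynomial.eval_mul,
      MvPolynomial.eval_X, hp]

/-- Assignment sending the `Fin n` vars to the bits of `x` and the `Unit` var to
`(∑ wᵢxᵢ - s)/2^(k+1)`. -/
noncomputable def auxA {n : ℕ} (k : ℕ) (w : Fin n → ℕ) (x : Fin n → Bool) (s : ℝ) :
    (Fin n ⊕ Unit) → ℝ :=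
  Sum.elim (fun i => if x i then 1 else 0)
    (fun _ => ((∑ i, (w i : ℝ) * if x i then 1 else 0) - s) / 2 ^ (k + 1))

/-- Univariate polynomial in `s` obtained from `r` by fixing `x` and substituting
`(∑ wᵢxᵢ - s)/2^(k+1)` for the `Unit` variable. -/
noncomputable def auxPhi {n : ℕ} (k : ℕ) (w : Fin n → ℕ) (x : Fin n → Bool)
    (r : MvPolynomial (Fin n ⊕ Unit) ℝ) : Polynomial ℝ :=
  MvPolynomial.aeval (Sum.elim (fun i => Polynomial.C (if x i then (1 : ℝ) else 0))
    (fun _ => Polynomial.C ((∑ i, (w i : ℝ) * if x i then 1 else 0) / 2 ^ (k + 1))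
      - Polynomial.C (((2 : ℝ) ^ (k + 1))⁻¹) * Polynomial.X)) r

lemma auxPhi_natDegree_le {n : ℕ} (k : ℕ) (w : Fin n → ℕ) (x : Fin n → Bool)
    (r : MvPolynomial (Fin n ⊕ Unit) ℝ) :
    (auxPhi k w x r).natDegree ≤ r.totalDegree := by
  apply natDegree_aeval_le'
  rintro (i | u)
  · simp only [Sum.elim_inl]
    split_ifs <;> simp
  · refine le_trans (Polynomial.natDegree_sub_le _ _) ?_
    simp only [Polynomial.natDegree_C]
    refine max_le (Nat.zero_le _) (le_trans (Polynomial.natDegree_C_mul_le _ _) ?_)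
    simp

lemma auxPhi_eval {n : ℕ} (k : ℕ) (w : Fin n → ℕ) (x : Fin n → Bool)
    (r : MvPolynomial (Fin n ⊕ Unit) ℝ) (s : ℝ) :
    (auxPhi k w x r).eval s = MvPolynomial.eval (auxA k w x s) r := by
  rw [auxPhi, eval_aeval_poly]
  have : (fun v => Polynomial.eval s
      ((Sum.elim (fun i => Polynomial.C (if x i then (1 : ℝ) else 0))
        (fun _ => Polynomial.C ((∑ i, (w i : ℝ) * if x i then 1 else 0) / 2 ^ (k + 1))
          - Polynomial.C (((2 : ℝ) ^ (k + 1))⁻¹) * Polynomial.X)) v)) = auxA k w x s := by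
    funext v
    rcases v with i | u
    · simp only [Sum.elim_inl, auxA, Polynomial.eval_C]
    · simp only [Sum.elim_inr, Polynomial.eval_sub, Polynomial.eval_C, Polynomial.eval_mul,
        Polynomial.eval_X, auxA]
      have h2 : ((2 : ℝ) ^ (k + 1)) ≠ 0 := by positivity
      field_simp
  rw [this]

/-- Multivariate polynomial in the `x`-variables obtained from `r` by substituting
`(∑ wᵢXᵢ - s)/2^(k+1)` for the `Unit` variable. -/
noncomputable def auxG {n : ℕ} (k : ℕ) (w : Fin n → ℕ) (s : ℝ)
    (r : MvPolynomial (Fin n ⊕ Unit) ℝ) : MvPolynomial (Fin n) ℝ :=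
  MvPolynomial.aeval (Sum.elim MvPolynomial.X
    (fun _ => (∑ i, MvPolynomial.C ((w i : ℝ) / 2 ^ (k + 1)) * MvPolynomial.X i)
      + MvPolynomial.C (-s / 2 ^ (k + 1)))) r

lemma auxG_totalDegree_le {n : ℕ} (k : ℕ) (w : Fin n → ℕ) (s : ℝ)
    (r : MvPolynomial (Fin n ⊕ Unit) ℝ) :
    (auxG k w s r).totalDegree ≤ r.totalDegree := by
  apply totalDegree_aeval_le'
  rintro (i | u)
  · simp [MvPolynomial.totalDegree_X]
  · simp only [Sum.elim_inr]
    refine le_trans (MvPolynomial.totalDegree_add _ _) ?_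
    refine max_le ?_ (by simp [MvPolynomial.totalDegree_C])
    refine le_trans (MvPolynomial.totalDegree_finset_sum _ _) ?_
    apply Finset.sup_le
    intro i _
    refine le_trans (MvPolynomial.totalDegree_mul _ _) ?_
    simp [MvPolynomial.totalDegree_C, MvPolynomial.totalDegree_X]

lemma auxG_eval {n : ℕ} (k : ℕ) (w : Fin n → ℕ) (s : ℝ)
    (r : MvPolynomial (Fin n ⊕ Unit) ℝ) (x : Fin n → Bool) :
    MvPolynomial.eval (fun i => if x i then (1 : ℝ) else 0) (auxG k w s r)
      = MvPolynomial.eval (auxA k w x s) r := by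
  rw [auxG, eval_aeval_mv]
  have : (fun v => MvPolynomial.eval (fun i => if x i then (1 : ℝ) else 0)
      ((Sum.elim MvPolynomial.X
        (fun _ => (∑ i, MvPolynomial.C ((w i : ℝ) / 2 ^ (k + 1)) * MvPolynomial.X i)
          + MvPolynomial.C (-s / 2 ^ (k + 1)))) v)) = auxA k w x s := by
    funext v
    rcases v with i | u
    · simp [auxA]
    · simp only [Sum.elim_inr, map_add, MvPolynomial.eval_sum, MvPolynomial.eval_mul,
        MvPolynomial.eval_C, MvPolynomial.eval_X, auxA]
      rw [sub_div, Finset.sum_div, neg_div, sub_eq_add_neg]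
      congr 1
      apply Finset.sum_congr rfl
      intro i _
      ring
  rw [this]

/-- Point of the domain `{0,1}^n × {0,1,…,n}` as a real assignment of the `n+1` variables. -/
noncomputable def emb {n : ℕ} (xt : (Fin n → Bool) × Fin (n + 1)) : Fin n ⊕ Unit → ℝ :=
  Sum.elim (fun i => if xt.1 i then 1 else 0) (fun _ => (xt.2 : ℝ))

/-- `R⁺(f,d)` for `f` on `{0,1}^n × {0,1,…,n}`: least error of a degree-`d` rational
approximant with positive denominator. -/
noncomputable def RposF {n : ℕ} (f : (Fin n → Bool) × Fin (n + 1) → ℝ) (d : ℕ) : ℝ :=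
  sInf { e : ℝ | ∃ p q : MvPolynomial (Fin n ⊕ Unit) ℝ,
    p.totalDegree ≤ d ∧ q.totalDegree ≤ d ∧
    ∀ xt : (Fin n → Bool) × Fin (n + 1),
      0 < MvPolynomial.eval (emb xt) q ∧
      |f xt - MvPolynomial.eval (emb xt) p / MvPolynomial.eval (emb xt) q| ≤ e }

/-- `R⁺(S,d)` for `S ⊆ ℤ`: least error of a univariate degree-`d` rational approximant,
with positive denominator on `S`, to the sign function on `S`. -/
noncomputable def RposSign (S : Set ℤ) (d : ℕ) : ℝ :=
  sInf { e : ℝ | ∃ p q : Polynomial ℝ, p.natDegree ≤ d ∧ q.natDegree ≤ d ∧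
    ∀ s ∈ S, 0 < q.eval (s : ℝ) ∧
      |Real.sign (s : ℝ) - p.eval (s : ℝ) / q.eval (s : ℝ)| ≤ e }

lemma final_bound (sgn Pe Qe e : ℝ) (hQ : 0 < Qe) (h : |sgn * Qe - Pe| ≤ e * Qe) :
    |sgn - Pe / Qe| ≤ e := by
  rw [show sgn - Pe / Qe = (sgn * Qe - Pe) / Qe from by field_simp, abs_div,
    abs_of_pos hQ, div_le_iff₀ hQ]
  exact h

lemma final_bound' (sgn Pe Qe e : ℝ) (hQ : 0 < Qe) (h : |sgn - Pe / Qe| ≤ e) :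
    |sgn * Qe - Pe| ≤ e * Qe := by
  rw [show sgn - Pe / Qe = (sgn * Qe - Pe) / Qe from by field_simp, abs_div,
    abs_of_pos hQ, div_le_iff₀ hQ] at h
  exact h


theorem stmt15 {n : ℕ} (k : ℕ) (w : Fin n → ℕ) (hw : ∀ i, w i < 2 ^ (k + 1))
    (μ : ℤ → (Fin n → Bool) → ℝ)
    (hμ0 : ∀ s ∈ {s : ℤ | s ≠ 0 ∧ |s| ≤ 2 ^ k}, ∀ x, 0 ≤ μ s x)
    (hμ1 : ∀ s ∈ {s : ℤ | s ≠ 0 ∧ |s| ≤ 2 ^ k}, (∑ x : Fin n → Bool, μ s x) = 1)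
    (hsupp : ∀ s ∈ {s : ℤ | s ≠ 0 ∧ |s| ≤ 2 ^ k}, ∀ x : Fin n → Bool, μ s x ≠ 0 →
      (∑ i : Fin n, (w i : ℤ) * (if x i then 1 else 0)) ≡ s [ZMOD (2 ^ (k + 1))])
    (hmom : ∀ s ∈ {s : ℤ | s ≠ 0 ∧ |s| ≤ 2 ^ k}, ∀ r ∈ {s : ℤ | s ≠ 0 ∧ |s| ≤ 2 ^ k},
      ∀ p : MvPolynomial (Fin n) ℝ, p.totalDegree ≤ k →
        (∑ x : Fin n → Bool,
            μ s x * MvPolynomial.eval (fun i => if x i then (1 : ℝ) else 0) p) =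
          ∑ x : Fin n → Bool,
            μ r x * MvPolynomial.eval (fun i => if x i then (1 : ℝ) else 0) p) :
    ∀ d ≤ k,
      RposSign {s : ℤ | s ≠ 0 ∧ |s| ≤ 2 ^ k} d ≤
        RposF (fun xt : (Fin n → Bool) × Fin (n + 1) =>
          Real.sign (1 / 2 + ∑ i : Fin n, (w i : ℝ) * (if xt.1 i then 1 else 0)
            - 2 ^ (k + 1) * (xt.2 : ℝ))) d := by
  intro d hd
  have h2k : (0:ℤ) < 2 ^ k := by positivity
  have h1S : (1:ℤ) ∈ {s : ℤ | s ≠ 0 ∧ |s| ≤ 2 ^ k} := ⟨one_ne_zero, by rw [abs_one]; omega⟩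
  rw [RposSign, RposF]
  apply csInf_le_csInf
  · -- BddBelow
    refine ⟨0, ?_⟩
    rintro e ⟨P, Q, _, _, h⟩
    have h2 := (h 1 h1S).2
    have h3 := abs_nonneg (Real.sign ((1:ℤ):ℝ) - P.eval ((1:ℤ):ℝ) / Q.eval ((1:ℤ):ℝ))
    linarith
  · -- nonempty
    refine ⟨1, 0, 1, by simp, by simp, fun xt => ⟨by simp, ?_⟩⟩
    simp only [map_zero, map_one, zero_div, sub_zero]
    set y := (1:ℝ)/2 + (∑ i : Fin n, (w i : ℝ) * (if xt.1 i then 1 else 0))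
      - 2 ^ (k + 1) * (xt.2 : ℝ) with hy
    rcases lt_trichotomy y 0 with hy' | hy' | hy'
    · rw [Real.sign_of_neg hy']; norm_num
    · rw [hy', Real.sign_zero]; norm_num
    · rw [Real.sign_of_pos hy']; norm_num
  · -- main inclusion
    rintro e ⟨p, q, hpd, hqd, hpq⟩
    refine ⟨∑ x : Fin n → Bool, Polynomial.C (μ 1 x) * auxPhi k w x p,
      ∑ x : Fin n → Bool, Polynomial.C (μ 1 x) * auxPhi k w x q, ?_, ?_, ?_⟩
    · apply Polynomial.natDegree_sum_le_of_forall_le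
      intro x _
      exact le_trans (Polynomial.natDegree_C_mul_le _ _)
        (le_trans (auxPhi_natDegree_le k w x p) hpd)
    · apply Polynomial.natDegree_sum_le_of_forall_le
      intro x _
      exact le_trans (Polynomial.natDegree_C_mul_le _ _)
        (le_trans (auxPhi_natDegree_le k w x q) hqd)
    intro s hs
    obtain ⟨hs0, hsb⟩ := hs
    have hsS : s ∈ {s : ℤ | s ≠ 0 ∧ |s| ≤ 2 ^ k} := ⟨hs0, hsb⟩
    have evalSum : ∀ (r : MvPolynomial (Fin n ⊕ Unit) ℝ),
        (∑ x : Fin n → Bool, Polynomial.C (μ 1 x) * auxPhi k w x r).eval ((s:ℤ):ℝ)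
          = ∑ x : Fin n → Bool, μ 1 x * MvPolynomial.eval (auxA k w x ((s:ℤ):ℝ)) r := by
      intro r
      rw [Polynomial.eval_finset_sum]
      refine Finset.sum_congr rfl fun x _ => ?_
      rw [Polynomial.eval_mul, Polynomial.eval_C, auxPhi_eval]
    have swap : ∀ (r : MvPolynomial (Fin n ⊕ Unit) ℝ), r.totalDegree ≤ d →
        (∑ x : Fin n → Bool, μ 1 x * MvPolynomial.eval (auxA k w x ((s:ℤ):ℝ)) r)
          = ∑ x : Fin n → Bool, μ s x * MvPolynomial.eval (auxA k w x ((s:ℤ):ℝ)) r := by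
      intro r hr
      have hdeg : (auxG k w ((s:ℤ):ℝ) r).totalDegree ≤ k :=
        le_trans (auxG_totalDegree_le k w _ r) (le_trans hr hd)
      have hm := hmom 1 h1S s hsS (auxG k w ((s:ℤ):ℝ) r) hdeg
      calc (∑ x : Fin n → Bool, μ 1 x * MvPolynomial.eval (auxA k w x ((s:ℤ):ℝ)) r)
          = ∑ x : Fin n → Bool, μ 1 x * MvPolynomial.eval (fun i => if x i then (1:ℝ) else 0)
              (auxG k w ((s:ℤ):ℝ) r) :=
            Finset.sum_congr rfl fun x _ => by rw [auxG_eval]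
        _ = ∑ x : Fin n → Bool, μ s x * MvPolynomial.eval (fun i => if x i then (1:ℝ) else 0)
              (auxG k w ((s:ℤ):ℝ) r) := hm
        _ = _ := Finset.sum_congr rfl fun x _ => by rw [auxG_eval]
    have hPs := (evalSum p).trans (swap p hpd)
    have hQs := (evalSum q).trans (swap q hqd)
    -- points in the support correspond to actual domain points
    have hpt : ∀ x : Fin n → Bool, μ s x ≠ 0 → ∃ t' : Fin (n+1),
        auxA k w x ((s:ℤ):ℝ) = emb (x, t') ∧
        Real.sign ((1:ℝ)/2 + (∑ i : Fin n, (w i : ℝ) * (if x i then 1 else 0))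
            - 2 ^ (k + 1) * (t' : ℝ)) = Real.sign ((s:ℤ):ℝ) := by
      intro x hx
      have hmod := hsupp s hsS x hx
      have hdvd : (2^(k+1):ℤ) ∣ ((∑ i : Fin n, (w i : ℤ) * (if x i then 1 else 0)) - s) :=
        (Int.ModEq.dvd hmod.symm)
      obtain ⟨t, ht⟩ := hdvd
      have hcz0 : (0:ℤ) ≤ ∑ i : Fin n, (w i : ℤ) * (if x i then 1 else 0) :=
        Finset.sum_nonneg fun i _ => by split_ifs <;> simp
      have hczU : (∑ i : Fin n, (w i : ℤ) * (if x i then 1 else 0)) ≤ n * (2^(k+1) - 1) := by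
        calc (∑ i : Fin n, (w i : ℤ) * (if x i then 1 else 0))
            ≤ ∑ _i : Fin n, ((2:ℤ)^(k+1) - 1) := by
              refine Finset.sum_le_sum fun i _ => ?_
              have hwi : (w i : ℤ) < 2 ^ (k+1) := by exact_mod_cast hw i
              have h2p : (0:ℤ) < 2 ^ (k+1) := by positivity
              have hwi' := Int.lt_iff_add_one_le.mp hwi
              have h2p' := Int.lt_iff_add_one_le.mp h2p
              split_ifs <;> linarith
          _ = n * (2^(k+1) - 1) := by
              rw [Finset.sum_const, Finset.card_univ, Fintype.card_fin, nsmul_eq_mul]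
      have h2k1 : (2:ℤ)^(k+1) = 2 * 2^k := by ring
      have ht0 : 0 ≤ t := by nlinarith [abs_le.mp hsb]
      have htn : t ≤ n := by nlinarith [abs_le.mp hsb]
      have hcast : ((∑ i : Fin n, (w i : ℤ) * (if x i then 1 else 0) : ℤ) : ℝ)
          = ∑ i : Fin n, (w i : ℝ) * (if x i then 1 else 0) := by
        push_cast
        refine Finset.sum_congr rfl fun i _ => ?_
        split_ifs <;> simp
      have htR : ((t.toNat : ℕ) : ℝ) = (t : ℝ) := by
        exact_mod_cast congrArg (fun z : ℤ => (z : ℝ)) (Int.toNat_of_nonneg ht0)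
      have htR' : (∑ i : Fin n, (w i : ℝ) * (if x i then 1 else 0)) - ((s:ℤ):ℝ)
          = 2^(k+1) * (t : ℝ) := by
        rw [← hcast]
        exact_mod_cast congrArg (fun z : ℤ => (z : ℝ)) ht
      refine ⟨⟨t.toNat, by omega⟩, ?_, ?_⟩
      · funext v
        rcases v with i | u
        · rfl
        · show ((∑ i : Fin n, (w i : ℝ) * (if x i then 1 else 0)) - ((s:ℤ):ℝ)) / 2^(k+1)
            = ((⟨t.toNat, by omega⟩ : Fin (n+1)) : ℝ)
          have h2 : ((2:ℝ)^(k+1)) ≠ 0 := by positivity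
          rw [htR']
          field_simp
          exact htR.symm
      · have harg : (1:ℝ)/2 + (∑ i : Fin n, (w i : ℝ) * (if x i then 1 else 0))
            - 2 ^ (k + 1) * (((⟨t.toNat, by omega⟩ : Fin (n+1)) : Fin (n+1)) : ℝ)
            = 1/2 + ((s:ℤ):ℝ) := by
          have : (((⟨t.toNat, by omega⟩ : Fin (n+1)) : Fin (n+1)) : ℝ) = (t : ℝ) := htR
          rw [this]
          linarith [htR']
        rw [harg]
        rcases (by omega : 1 ≤ s ∨ s ≤ -1) with h1 | h1
        · have hs1 : (1:ℝ) ≤ ((s:ℤ):ℝ) := by exact_mod_cast h1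
          rw [Real.sign_of_pos (by linarith), Real.sign_of_pos (by linarith)]
        · have hs1 : ((s:ℤ):ℝ) ≤ -1 := by exact_mod_cast h1
          rw [Real.sign_of_neg (by linarith), Real.sign_of_neg (by linarith)]
    -- positivity of the denominator
    have hQpos : 0 < ∑ x : Fin n → Bool, μ s x * MvPolynomial.eval (auxA k w x ((s:ℤ):ℝ)) q := by
      have hex : ∃ x : Fin n → Bool, μ s x ≠ 0 := by
        by_contra hall
        push_neg at hall
        have := hμ1 s hsS
        simp [hall] at this
      obtain ⟨x₀, hx₀⟩ := hex
      refine Finset.sum_pos' (fun x _ => ?_) ⟨x₀, Finset.mem_univ _, ?_⟩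
      · by_cases hx : μ s x = 0
        · simp [hx]
        · obtain ⟨t', hA, _⟩ := hpt x hx
          rw [hA]
          exact le_of_lt (mul_pos (lt_of_le_of_ne (hμ0 s hsS x) (Ne.symm hx)) (hpq (x, t')).1)
      · obtain ⟨t', hA, _⟩ := hpt x₀ hx₀
        rw [hA]
        exact mul_pos (lt_of_le_of_ne (hμ0 s hsS x₀) (Ne.symm hx₀)) (hpq (x₀, t')).1
    have habs : |Real.sign ((s:ℤ):ℝ)
          * (∑ x : Fin n → Bool, μ s x * MvPolynomial.eval (auxA k w x ((s:ℤ):ℝ)) q)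
          - ∑ x : Fin n → Bool, μ s x * MvPolynomial.eval (auxA k w x ((s:ℤ):ℝ)) p|
        ≤ e * ∑ x : Fin n → Bool, μ s x * MvPolynomial.eval (auxA k w x ((s:ℤ):ℝ)) q := by
      rw [Finset.mul_sum, ← Finset.sum_sub_distrib]
      have hterm : ∀ x : Fin n → Bool,
          |Real.sign ((s:ℤ):ℝ) * (μ s x * MvPolynomial.eval (auxA k w x ((s:ℤ):ℝ)) q)
            - μ s x * MvPolynomial.eval (auxA k w x ((s:ℤ):ℝ)) p|
          ≤ μ s x * (e * MvPolynomial.eval (auxA k w x ((s:ℤ):ℝ)) q) := by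
        intro x
        by_cases hx : μ s x = 0
        · simp [hx]
        · obtain ⟨t', hA, hsgn⟩ := hpt x hx
          have hμx : 0 < μ s x := lt_of_le_of_ne (hμ0 s hsS x) (Ne.symm hx)
          obtain ⟨hqpos, hle⟩ := hpq (x, t')
          rw [hA]
          have hle' : |Real.sign ((s:ℤ):ℝ)
              - MvPolynomial.eval (emb (x, t')) p / MvPolynomial.eval (emb (x, t')) q| ≤ e := by
            rw [show Real.sign ((s:ℤ):ℝ) = Real.sign ((1:ℝ)/2
              + (∑ i : Fin n, (w i : ℝ) * (if x i then 1 else 0))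
              - 2 ^ (k + 1) * ((t' : Fin (n+1)) : ℝ)) from hsgn.symm]
            exact hle
          have key := final_bound' _ _ _ _ hqpos hle'
          calc |Real.sign ((s:ℤ):ℝ) * (μ s x * MvPolynomial.eval (emb (x, t')) q)
              - μ s x * MvPolynomial.eval (emb (x, t')) p|
              = μ s x * |Real.sign ((s:ℤ):ℝ) * MvPolynomial.eval (emb (x, t')) q
                - MvPolynomial.eval (emb (x, t')) p| := by
                rw [show Real.sign ((s:ℤ):ℝ) * (μ s x * MvPolynomial.eval (emb (x, t')) q)
                  - μ s x * MvPolynomial.eval (emb (x, t')) p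
                  = μ s x * (Real.sign ((s:ℤ):ℝ) * MvPolynomial.eval (emb (x, t')) q
                    - MvPolynomial.eval (emb (x, t')) p) from by ring, abs_mul,
                  abs_of_nonneg (le_of_lt hμx)]
            _ ≤ μ s x * (e * MvPolynomial.eval (emb (x, t')) q) :=
                mul_le_mul_of_nonneg_left key (le_of_lt hμx)
      refine le_trans (Finset.abs_sum_le_sum_abs _ _) (le_trans (Finset.sum_le_sum
        fun x _ => hterm x) (le_of_eq ?_))
      rw [Finset.mul_sum]
      exact Finset.sum_congr rfl fun x _ => by ring
    refine ⟨by rw [hQs]; exact hQpos, ?_⟩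
    rw [hPs, hQs]
    exact final_bound _ _ _ _ hQpos habs
end

section
/- Let F : {0,1}^{n₁} × ⋯ × {0,1}^{n_k} → {-1,1} satisfy F(x₁,…,x_k) = f(|x₁|,…,|x_k|) for some f : {0,…,n₁} × ⋯ × {0,…,n_k} → {-1,1}, where |x| denotes the Hamming weight. Then for every d ≥ 0, R⁺(F, d) = R⁺(f, d). -/
open Finset

lemma castDescFactorial (t s : ℕ) :
    ((t.descFactorial s : ℕ) : ℝ) = ∏ r ∈ Finset.range s, ((t : ℝ) - r) := by
  induction s with
  | zero => simp
  | succ s ih =>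
    rcases lt_or_ge s t with h | h
    · rw [Nat.descFactorial_succ, Finset.prod_range_succ, Nat.cast_mul, Nat.cast_sub h.le, ih]
      ring
    · rw [Nat.descFactorial_of_lt (Nat.lt_succ_of_le h),
        Finset.prod_eq_zero (Finset.mem_range.2 (Nat.lt_succ_of_le h)) (by simp)]
      simp

lemma exists_perm_comp {α β : Type*} [Finite β] (u v : α ↪ β) :
    ∃ ρ : Equiv.Perm β, ∀ a, ρ (u a) = v a := by
  classical
  let e : {x // x ∈ Set.range u} ≃ {x // x ∈ Set.range v} :=
    (Equiv.ofInjective u u.injective).symm.trans (Equiv.ofInjective v v.injective)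
  refine ⟨e.extendSubtype, fun a => ?_⟩
  rw [e.extendSubtype_apply_of_mem (u a) ⟨a, rfl⟩]
  show ((Equiv.ofInjective v v.injective) ((Equiv.ofInjective u u.injective).symm ⟨u a, ⟨a, rfl⟩⟩) : β) = v a
  have : (Equiv.ofInjective u u.injective).symm ⟨u a, ⟨a, rfl⟩⟩ = a := by
    apply (Equiv.ofInjective u u.injective).injective
    simp
  rw [this]
  rfl
-- fiber count: permutations agreeing with a fixed injective map on S
lemma fiber_card {M : ℕ} (S : Finset (Fin M)) (g : ↥S → Fin M) (hg : Function.Injective g) :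
    (univ.filter fun σ : Equiv.Perm (Fin M) => ∀ j : ↥S, σ j = g j).card
      = (univ.filter fun σ : Equiv.Perm (Fin M) => ∀ j ∈ S, σ j = j).card := by
  classical
  obtain ⟨ρ, hρ⟩ := exists_perm_comp (⟨fun j : ↥S => (j : Fin M), Subtype.val_injective⟩ : ↥S ↪ Fin M) ⟨g, hg⟩
  symm
  apply Finset.card_bij (fun σ _ => ρ * σ)
  · intro σ hσ
    simp only [mem_filter, mem_univ, true_and] at hσ ⊢
    intro j
    have := hσ j j.2
    simp only [Equiv.Perm.mul_apply, this]
    exact hρ j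
  · intro σ₁ h₁ σ₂ h₂ h
    exact mul_left_cancel h
  · intro τ hτ
    simp only [mem_filter, mem_univ, true_and] at hτ
    refine ⟨ρ⁻¹ * τ, ?_, by group⟩
    simp only [mem_filter, mem_univ, true_and]
    intro j hj
    have h1 : τ j = g ⟨j, hj⟩ := hτ ⟨j, hj⟩
    have h2 : ρ j = g ⟨j, hj⟩ := hρ ⟨j, hj⟩
    simp [Equiv.Perm.mul_apply, h1, ← h2]


lemma B_card {M : ℕ} (S : Finset (Fin M)) (x : Fin M → Bool) :
    (univ.filter fun g : ↥S → Fin M => Function.Injective g ∧ ∀ j, x (g j)).card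
      = ((univ.filter fun j => x j).card).descFactorial S.card := by
  classical
  rw [← Fintype.card_coe S, ← Fintype.card_coe (univ.filter fun j => x j),
    ← Fintype.card_embedding_eq (α := ↥S) (β := ↥(univ.filter fun j => x j))]
  rw [Fintype.card]
  refine Finset.card_bij'
    (fun g hg => (⟨fun j => ⟨g j, by
        simp only [mem_filter, mem_univ, true_and] at hg ⊢; exact hg.2 j⟩,
      fun a b h => by
        simp only [mem_filter, mem_univ, true_and] at hg
        exact hg.1 (congrArg Subtype.val h)⟩ : ↥S ↪ ↥(univ.filter fun j => x j)))
    (fun φ _ => fun j => ((φ j : ↥(univ.filter fun j => x j)) : Fin M))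
    (fun g hg => mem_univ _) (fun φ _ => ?_) (fun g hg => ?_) (fun φ _ => ?_)
  · simp only [mem_filter, mem_univ, true_and]
    refine ⟨Subtype.val_injective.comp φ.injective, fun j => ?_⟩
    have := (φ j).2
    simpa only [mem_filter, mem_univ, true_and] using this
  · rfl
  · ext j
    rfl

lemma perm_count {M : ℕ} (S : Finset (Fin M)) (x : Fin M → Bool) :
    (univ.filter fun σ : Equiv.Perm (Fin M) => ∀ j ∈ S, x (σ j)).card
      = (univ.filter fun σ : Equiv.Perm (Fin M) => ∀ j ∈ S, σ j = j).card
        * ((univ.filter fun j => x j).card).descFactorial S.card := by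
  classical
  rw [Finset.card_eq_sum_card_fiberwise (f := fun (σ : Equiv.Perm (Fin M)) (j : ↥S) => σ j)
    (t := univ.filter fun g : ↥S → Fin M => Function.Injective g ∧ ∀ j, x (g j))
    (fun σ hσ => by
      simp only [Finset.mem_coe, mem_filter, mem_univ, true_and] at hσ ⊢
      exact ⟨fun a b h => Subtype.val_injective (σ.injective h), fun j => hσ j j.2⟩)]
  have key : ∀ g ∈ (univ.filter fun g : ↥S → Fin M => Function.Injective g ∧ ∀ j, x (g j)),
      ((univ.filter fun σ : Equiv.Perm (Fin M) => ∀ j ∈ S, x (σ j)).filter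
        (fun σ => (fun j : ↥S => σ j) = g)).card
      = (univ.filter fun σ : Equiv.Perm (Fin M) => ∀ j ∈ S, σ j = j).card := by
    intro g hg
    simp only [mem_filter, mem_univ, true_and] at hg
    rw [← fiber_card S g hg.1]
    congr 1
    ext σ
    simp only [mem_filter, mem_univ, true_and, funext_iff]
    constructor
    · rintro ⟨-, h2⟩ j
      exact h2 j
    · intro h
      exact ⟨fun j hj => by rw [h ⟨j, hj⟩]; exact hg.2 ⟨j, hj⟩, h⟩
  rw [Finset.sum_congr rfl key, Finset.sum_const, B_card, smul_eq_mul, mul_comm]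

lemma block_sum {M : ℕ} (S : Finset (Fin M)) (x : Fin M → Bool) :
    ∑ σ : Equiv.Perm (Fin M), ∏ j ∈ S, (if x (σ j) then (1:ℝ) else 0)
    = ((univ.filter fun σ : Equiv.Perm (Fin M) => ∀ j ∈ S, σ j = j).card : ℝ)
      * (((univ.filter fun j => x j).card).descFactorial S.card : ℝ) := by
  classical
  have h1 : ∀ σ : Equiv.Perm (Fin M), ∏ j ∈ S, (if x (σ j) then (1:ℝ) else 0)
      = if (∀ j ∈ S, x (σ j)) then (1:ℝ) else 0 := fun σ => by rw [Finset.prod_boole]; congr 1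
  simp only [h1]
  rw [Finset.sum_boole, perm_count]
  push_cast
  ring

open MvPolynomial

variable {k : ℕ} {m : Fin k → ℕ}

/-- block support of a monomial -/
def Sblk (a : ((i : Fin k) × Fin (m i)) →₀ ℕ) (i : Fin k) : Finset (Fin (m i)) :=
  univ.filter fun j => a ⟨i, j⟩ ≠ 0

lemma supp_eq_sigma (a : ((i : Fin k) × Fin (m i)) →₀ ℕ) :
    a.support = univ.sigma (fun i => Sblk a i) := by
  ext ⟨i, j⟩
  simp [Sblk, Finsupp.mem_support_iff]

/-- the symmetrization operator -/
noncomputable def Phi (p : MvPolynomial ((i : Fin k) × Fin (m i)) ℝ) :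
    MvPolynomial (Fin k) ℝ :=
  ∑ a ∈ p.support,
    C (p.coeff a * (∏ i, ((univ.filter fun σ : Equiv.Perm (Fin (m i)) =>
          ∀ j ∈ Sblk a i, σ j = j).card : ℝ))
        / (Fintype.card (∀ i, Equiv.Perm (Fin (m i))) : ℝ))
      * ∏ i, ∏ r ∈ Finset.range (Sblk a i).card, (X i - MvPolynomial.C (r : ℝ))

lemma ind_pow (b : Bool) (n : ℕ) (hn : n ≠ 0) :
    (if b then (1:ℝ) else 0) ^ n = (if b then (1:ℝ) else 0) := by
  cases b <;> simp [zero_pow hn]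

lemma mono_sum (a : ((i : Fin k) × Fin (m i)) →₀ ℕ) (x : ∀ i : Fin k, Fin (m i) → Bool) :
    ∑ σ : ∀ i, Equiv.Perm (Fin (m i)),
      ∏ v ∈ a.support, (if x v.1 (σ v.1 v.2) then (1:ℝ) else 0)
    = ∏ i, (((univ.filter fun σ : Equiv.Perm (Fin (m i)) =>
          ∀ j ∈ Sblk a i, σ j = j).card : ℝ)
        * (((univ.filter fun j => x i j).card).descFactorial (Sblk a i).card : ℝ)) := by
  classical
  have h1 : ∀ σ : ∀ i, Equiv.Perm (Fin (m i)),
      ∏ v ∈ a.support, (if x v.1 (σ v.1 v.2) then (1:ℝ) else 0)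
      = ∏ i, ∏ j ∈ Sblk a i, (if x i ((σ i) j) then (1:ℝ) else 0) := by
    intro σ
    rw [supp_eq_sigma, Finset.prod_sigma]
  simp only [h1]
  rw [← Fintype.piFinset_univ, ← Finset.prod_univ_sum (t := fun i => (univ : Finset (Equiv.Perm (Fin (m i)))))
      (f := fun i σi => ∏ j ∈ Sblk a i, if x i (σi j) then (1:ℝ) else 0)]
  exact Finset.prod_congr rfl fun i _ => block_sum (Sblk a i) (x i)

lemma eval_Phi (p : MvPolynomial ((i : Fin k) × Fin (m i)) ℝ) (x : ∀ i : Fin k, Fin (m i) → Bool) :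
    eval (fun i => ((univ.filter fun j => x i j).card : ℝ)) (Phi p)
      * (Fintype.card (∀ i, Equiv.Perm (Fin (m i))) : ℝ)
    = ∑ σ : ∀ i, Equiv.Perm (Fin (m i)),
        eval (fun v => if x v.1 (σ v.1 v.2) then (1:ℝ) else 0) p := by
  classical
  have hG : (Fintype.card (∀ i, Equiv.Perm (Fin (m i))) : ℝ) ≠ 0 := by
    exact_mod_cast Fintype.card_ne_zero
  have hterm : ∀ σ : ∀ i, Equiv.Perm (Fin (m i)),
      eval (fun v => if x v.1 (σ v.1 v.2) then (1:ℝ) else 0) p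
      = ∑ a ∈ p.support, p.coeff a
          * ∏ v ∈ a.support, (if x v.1 (σ v.1 v.2) then (1:ℝ) else 0) := by
    intro σ
    rw [eval_eq]
    refine Finset.sum_congr rfl fun a ha => ?_
    congr 1
    exact Finset.prod_congr rfl fun v hv => ind_pow _ _ (Finsupp.mem_support_iff.1 hv)
  simp only [hterm]
  rw [Finset.sum_comm]
  simp only [← Finset.mul_sum]
  simp only [fun a => mono_sum a x]
  rw [Phi, map_sum, Finset.sum_mul]
  refine Finset.sum_congr rfl fun a ha => ?_
  rw [eval_mul, eval_C, map_prod]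
  have hb : ∀ i : Fin k, eval (fun i => ((univ.filter fun j => x i j).card : ℝ))
      (∏ r ∈ Finset.range (Sblk a i).card, (X i - MvPolynomial.C (r : ℝ)))
      = (((univ.filter fun j => x i j).card).descFactorial (Sblk a i).card : ℝ) := by
    intro i
    rw [map_prod, castDescFactorial]
    exact Finset.prod_congr rfl fun r _ => by simp
  simp only [hb]
  rw [Finset.prod_mul_distrib]
  have hP : (∏ i : Fin k, (Fintype.card (Equiv.Perm (Fin (m i))) : ℝ)) ≠ 0 :=
    Finset.prod_ne_zero_iff.2 fun i _ => by exact_mod_cast Fintype.card_ne_zero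
  field_simp

lemma Phi_totalDegree (p : MvPolynomial ((i : Fin k) × Fin (m i)) ℝ) :
    (Phi p).totalDegree ≤ p.totalDegree := by
  classical
  refine (totalDegree_finset_sum _ _).trans (Finset.sup_le fun a ha => ?_)
  have h0 : ∀ (i : Fin k) (r : ℕ), (X i - MvPolynomial.C (r : ℝ) :
      MvPolynomial (Fin k) ℝ).totalDegree ≤ 1 := by
    intro i r
    rw [sub_eq_add_neg]
    refine (totalDegree_add _ _).trans (max_le ?_ ?_)
    · exact le_of_eq (totalDegree_X i)
    · rw [totalDegree_neg, totalDegree_C]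
      omega
  have h1 : (∏ i, ∏ r ∈ Finset.range (Sblk a i).card,
      (X i - MvPolynomial.C (r : ℝ))).totalDegree ≤ ∑ i, (Sblk a i).card := by
    refine (totalDegree_finset_prod _ _).trans (Finset.sum_le_sum fun i _ => ?_)
    refine (totalDegree_finset_prod _ _).trans ?_
    have := Finset.sum_le_sum (s := Finset.range (Sblk a i).card)
      (f := fun r : ℕ => (X i - MvPolynomial.C (r : ℝ) : MvPolynomial (Fin k) ℝ).totalDegree)
      (g := fun _ => 1) (fun r _ => h0 i r)
    simpa using this
  have h2 : ∑ i, (Sblk a i).card ≤ a.sum fun _ n => n := by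
    have : (a.sum fun _ n => n) = ∑ i, ∑ j ∈ Sblk a i, a ⟨i, j⟩ := by
      rw [Finsupp.sum, supp_eq_sigma a, Finset.sum_sigma]
    rw [this]
    refine Finset.sum_le_sum fun i _ => ?_
    calc (Sblk a i).card = ∑ j ∈ Sblk a i, 1 := by simp
      _ ≤ ∑ j ∈ Sblk a i, a ⟨i, j⟩ := Finset.sum_le_sum fun j hj => by
          have := (Finset.mem_filter.1 hj).2
          omega
  calc (MvPolynomial.C (p.coeff a * _ / _) * ∏ i, ∏ r ∈ Finset.range (Sblk a i).card,
      (X i - MvPolynomial.C (r : ℝ))).totalDegree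
      ≤ (MvPolynomial.C (p.coeff a * _ / _) : MvPolynomial (Fin k) ℝ).totalDegree
        + (∏ i, ∏ r ∈ Finset.range (Sblk a i).card,
            (X i - MvPolynomial.C (r : ℝ))).totalDegree := totalDegree_mul _ _
    _ ≤ 0 + ∑ i, (Sblk a i).card := by
        refine add_le_add ?_ h1
        simp [totalDegree_C]
    _ ≤ a.sum fun _ n => n := by simpa using h2
    _ ≤ p.totalDegree := le_totalDegree ha

lemma wt_comp (x : ∀ i : Fin k, Fin (m i) → Bool) (σ : ∀ i, Equiv.Perm (Fin (m i))) (i : Fin k) :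
    (univ.filter fun j => x i ((σ i) j)).card = (univ.filter fun j => x i j).card := by
  apply Finset.card_bij' (fun j _ => (σ i) j) (fun j _ => (σ i)⁻¹ j)
  · intro j hj
    simp only [mem_filter, mem_univ, true_and] at hj ⊢
    exact hj
  · intro j hj
    simp only [mem_filter, mem_univ, true_and] at hj ⊢
    simpa using hj
  · intro j _
    simp
  · intro j _
    simp

lemma wt_xpt (t : Fin k → ℕ) (h : ∀ i, t i ≤ m i) (i : Fin k) :
    (univ.filter fun j : Fin (m i) => ((j : ℕ) < t i)).card = t i := by
  have huniv : ((univ : Finset (Fin (t i)))).card = t i := by simp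
  conv_rhs => rw [← huniv]
  refine Finset.card_bij' (fun j hj => (⟨(j : ℕ), by simpa using hj⟩ : Fin (t i)))
    (fun j _ => (⟨(j : ℕ), lt_of_lt_of_le j.2 (h i)⟩ : Fin (m i))) ?_ ?_ ?_ ?_
  · intro j _
    exact mem_univ _
  · intro j _
    simp [j.2]
  · intro j _
    simp
  · intro j _
    simp

lemma totalDegree_bind₁_le {σ' τ : Type*} (g : σ' → MvPolynomial τ ℝ)
    (hg : ∀ i, (g i).totalDegree ≤ 1) (p : MvPolynomial σ' ℝ) :
    (bind₁ g p).totalDegree ≤ p.totalDegree := by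
  classical
  conv_lhs => rw [p.as_sum]
  rw [map_sum]
  refine (totalDegree_finset_sum _ _).trans (Finset.sup_le fun a ha => ?_)
  rw [bind₁_monomial]
  refine (totalDegree_mul _ _).trans ?_
  rw [totalDegree_C, zero_add]
  refine (totalDegree_finset_prod _ _).trans ?_
  calc ∑ i ∈ a.support, (g i ^ a i).totalDegree
      ≤ ∑ i ∈ a.support, a i * 1 := Finset.sum_le_sum fun i _ =>
        (totalDegree_pow _ _).trans (Nat.mul_le_mul_left _ (hg i))
    _ = a.sum fun _ n => n := by simp [Finsupp.sum]
    _ ≤ p.totalDegree := le_totalDegree ha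

lemma aeval_eq_eval' {σ' : Type*} (f : σ' → ℝ) (p : MvPolynomial σ' ℝ) :
    MvPolynomial.aeval f p = eval f p := by
  rw [← coe_aeval_eq_eval]
  rfl

lemma eval_bind₁' {σ' τ : Type*} (f : τ → ℝ) (g : σ' → MvPolynomial τ ℝ) (p : MvPolynomial σ' ℝ) :
    eval f (bind₁ g p) = eval (fun i => eval f (g i)) p := by
  have h := aeval_bind₁ (S := ℝ) f g p
  rw [aeval_eq_eval'] at h
  rw [h]
  simp only [aeval_eq_eval']

/-- `R⁺(F,d)` for `F` on `{0,1}^{n₁} × ⋯ × {0,1}^{n_k}`: least error of a degree-`d`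
multivariate rational approximant with positive denominator. -/
noncomputable def RposProd {k : ℕ} {m : Fin k → ℕ}
    (F : (∀ i : Fin k, Fin (m i) → Bool) → ℝ) (d : ℕ) : ℝ :=
  sInf { e : ℝ | ∃ p q : MvPolynomial ((i : Fin k) × Fin (m i)) ℝ,
    p.totalDegree ≤ d ∧ q.totalDegree ≤ d ∧
    ∀ x : ∀ i : Fin k, Fin (m i) → Bool,
      0 < MvPolynomial.eval (fun v => if x v.1 v.2 then (1 : ℝ) else 0) q ∧
      |F x - MvPolynomial.eval (fun v => if x v.1 v.2 then (1 : ℝ) else 0) p /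
          MvPolynomial.eval (fun v => if x v.1 v.2 then (1 : ℝ) else 0) q| ≤ e }

/-- `R⁺(f,d)` for `f` on `{0,…,n₁} × ⋯ × {0,…,n_k}`: least error of a degree-`d`
rational approximant (in `k` variables) with positive denominator. -/
noncomputable def RposWt {k : ℕ} (m : Fin k → ℕ) (f : (Fin k → ℕ) → ℝ) (d : ℕ) : ℝ :=
  sInf { e : ℝ | ∃ p q : MvPolynomial (Fin k) ℝ,
    p.totalDegree ≤ d ∧ q.totalDegree ≤ d ∧
    ∀ t : Fin k → ℕ, (∀ i, t i ≤ m i) →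
      0 < MvPolynomial.eval (fun i => (t i : ℝ)) q ∧
      |f t - MvPolynomial.eval (fun i => (t i : ℝ)) p /
          MvPolynomial.eval (fun i => (t i : ℝ)) q| ≤ e }

theorem stmt16 {k : ℕ} (m : Fin k → ℕ)
    (F : (∀ i : Fin k, Fin (m i) → Bool) → ℝ) (f : (Fin k → ℕ) → ℝ)
    (hF : ∀ x, F x = 1 ∨ F x = -1)
    (hf : ∀ t : Fin k → ℕ, (∀ i, t i ≤ m i) → (f t = 1 ∨ f t = -1))
    (hFf : ∀ x : ∀ i : Fin k, Fin (m i) → Bool,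
      F x = f fun i => (Finset.univ.filter fun j => x i j).card) :
    ∀ d : ℕ, RposProd F d = RposWt m f d := by
  classical
  intro d
  unfold RposProd RposWt
  congr 1
  ext e
  simp only [Set.mem_setOf_eq]
  constructor
  · rintro ⟨p, q, hp, hq, h⟩
    refine ⟨Phi p, Phi q, le_trans (Phi_totalDegree p) hp, le_trans (Phi_totalDegree q) hq, ?_⟩
    intro t ht
    set x : ∀ i : Fin k, Fin (m i) → Bool := fun i j => decide ((j : ℕ) < t i) with hxdef
    have hwt0 : ∀ i, (univ.filter fun j => x i j).card = t i := by
      intro i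
      have hfl : (univ.filter fun j => x i j) = (univ.filter fun j : Fin (m i) => ((j : ℕ) < t i)) := by
        apply Finset.filter_congr
        intro j _
        simp [hxdef]
      rw [hfl, wt_xpt t ht i]
    have hwt : ∀ (σ : ∀ i, Equiv.Perm (Fin (m i))) (i : Fin k),
        (univ.filter fun j => x i ((σ i) j)).card = t i :=
      fun σ i => (wt_comp x σ i).trans (hwt0 i)
    have hpt : (fun i => (((univ.filter fun j => x i j).card : ℕ) : ℝ)) = fun i => (t i : ℝ) := by
      funext i
      rw [hwt0 i]
    have hQ := eval_Phi q x
    have hP := eval_Phi p x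
    rw [hpt] at hQ hP
    set Pv := eval (fun i => (t i : ℝ)) (Phi p) with hPv
    set Qv := eval (fun i => (t i : ℝ)) (Phi q) with hQv
    set cG := (Fintype.card (∀ i, Equiv.Perm (Fin (m i))) : ℝ) with hcG
    have hcGpos : 0 < cG := by
      rw [hcG]
      exact_mod_cast Fintype.card_pos
    have hqσ : ∀ σ : ∀ i, Equiv.Perm (Fin (m i)),
        0 < eval (fun v => if x v.1 ((σ v.1) v.2) then (1:ℝ) else 0) q :=
      fun σ => (h (fun i j => x i ((σ i) j))).1
    have herrσ : ∀ σ : ∀ i, Equiv.Perm (Fin (m i)),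
        |f t - eval (fun v => if x v.1 ((σ v.1) v.2) then (1:ℝ) else 0) p /
          eval (fun v => if x v.1 ((σ v.1) v.2) then (1:ℝ) else 0) q| ≤ e := by
      intro σ
      have h2 := (h (fun i j => x i ((σ i) j))).2
      have h3 : F (fun i j => x i ((σ i) j)) = f t := by
        rw [hFf]
        congr 1
        funext i
        exact hwt σ i
      rwa [h3] at h2
    have hsumq : 0 < ∑ σ : ∀ i, Equiv.Perm (Fin (m i)),
        eval (fun v => if x v.1 ((σ v.1) v.2) then (1:ℝ) else 0) q :=
      Finset.sum_pos (fun σ _ => hqσ σ) Finset.univ_nonempty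
    have hQpos : 0 < Qv := by
      have hd := div_pos hsumq hcGpos
      rwa [← hQ, mul_div_cancel_right₀ _ (ne_of_gt hcGpos)] at hd
    refine ⟨hQpos, ?_⟩
    have hperσ : ∀ σ : ∀ i, Equiv.Perm (Fin (m i)),
        |f t * eval (fun v => if x v.1 ((σ v.1) v.2) then (1:ℝ) else 0) q
          - eval (fun v => if x v.1 ((σ v.1) v.2) then (1:ℝ) else 0) p|
        ≤ e * eval (fun v => if x v.1 ((σ v.1) v.2) then (1:ℝ) else 0) q := by
      intro σ
      set qv := eval (fun v => if x v.1 ((σ v.1) v.2) then (1:ℝ) else 0) q with hqv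
      set pv := eval (fun v => if x v.1 ((σ v.1) v.2) then (1:ℝ) else 0) p with hpv
      have hqvpos := hqσ σ
      have he := herrσ σ
      have hexp : f t - pv / qv = (f t * qv - pv) / qv := by
        have hq' : qv ≠ 0 := ne_of_gt hqvpos; field_simp
      rw [hexp, abs_div, abs_of_pos hqvpos, div_le_iff₀ hqvpos] at he
      exact he
    have key : |f t * Qv - Pv| * cG ≤ e * Qv * cG := by
      have h1 : |f t * Qv - Pv| * cG = |f t * (Qv * cG) - Pv * cG| := by
        rw [show f t * (Qv * cG) - Pv * cG = (f t * Qv - Pv) * cG from by ring, abs_mul,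
          abs_of_pos hcGpos]
      rw [h1, hQ, hP, Finset.mul_sum, ← Finset.sum_sub_distrib]
      calc |∑ σ : ∀ i, Equiv.Perm (Fin (m i)),
          (f t * eval (fun v => if x v.1 ((σ v.1) v.2) then (1:ℝ) else 0) q
            - eval (fun v => if x v.1 ((σ v.1) v.2) then (1:ℝ) else 0) p)|
          ≤ ∑ σ : ∀ i, Equiv.Perm (Fin (m i)),
            |f t * eval (fun v => if x v.1 ((σ v.1) v.2) then (1:ℝ) else 0) q
              - eval (fun v => if x v.1 ((σ v.1) v.2) then (1:ℝ) else 0) p| :=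
          Finset.abs_sum_le_sum_abs _ _
        _ ≤ ∑ σ : ∀ i, Equiv.Perm (Fin (m i)),
            e * eval (fun v => if x v.1 ((σ v.1) v.2) then (1:ℝ) else 0) q :=
          Finset.sum_le_sum fun σ _ => hperσ σ
        _ = e * Qv * cG := by
          rw [← Finset.mul_sum, ← hQ]
          ring
    have key' : |f t * Qv - Pv| ≤ e * Qv := le_of_mul_le_mul_right key hcGpos
    have hexp : f t - Pv / Qv = (f t * Qv - Pv) / Qv := by
      field_simp
    rw [hexp, abs_div, abs_of_pos hQpos, div_le_iff₀ hQpos]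
    exact key'
  · rintro ⟨p, q, hp, hq, h⟩
    set g : Fin k → MvPolynomial ((i : Fin k) × Fin (m i)) ℝ :=
      fun i => ∑ j : Fin (m i), X ⟨i, j⟩ with hgdef
    have hgdeg : ∀ i, (g i).totalDegree ≤ 1 := by
      intro i
      refine (totalDegree_finset_sum _ _).trans (Finset.sup_le fun j _ => ?_)
      exact le_of_eq (totalDegree_X _)
    refine ⟨bind₁ g p, bind₁ g q, (totalDegree_bind₁_le g hgdeg p).trans hp,
      (totalDegree_bind₁_le g hgdeg q).trans hq, ?_⟩
    intro x
    have heval : ∀ r : MvPolynomial (Fin k) ℝ,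
        eval (fun v => if x v.1 v.2 then (1:ℝ) else 0) (bind₁ g r)
        = eval (fun i => (((univ.filter fun j => x i j).card : ℕ) : ℝ)) r := by
      intro r
      rw [eval_bind₁']
      have hfun : (fun i : Fin k => eval (fun v => if x v.1 v.2 then (1:ℝ) else 0) (g i))
          = fun i => (((univ.filter fun j => x i j).card : ℕ) : ℝ) := by
        funext i
        rw [hgdef]
        simp only [map_sum, eval_X]
        rw [Finset.sum_boole]
      rw [hfun]
    have hle : ∀ i, (univ.filter fun j => x i j).card ≤ m i := by
      intro i
      have := Finset.card_filter_le (univ : Finset (Fin (m i))) (fun j => x i j)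
      simpa using this
    obtain ⟨h1, h2⟩ := h (fun i => (univ.filter fun j => x i j).card) hle
    refine ⟨by rw [heval q]; exact h1, ?_⟩
    rw [heval p, heval q, hFf x]
    exact h2
end

section
/- Minsky–Papert symmetrization: for any real polynomial φ on {0,1}^n of degree d, there exists a univariate polynomial p of degree at most d such that for every x ∈ {0,1}^n, the average of φ(σx) over all permutations σ ∈ S_n equals p(|x|), where |x| = x₁ + ⋯ + x_n. -/
open Finset Polynomial

lemma key_count {n : ℕ} (x : Fin n → Bool) (S : Finset (Fin n)) :
    ∑ σ : Equiv.Perm (Fin n), ∏ i ∈ S, (if x (σ i) then (1:ℝ) else 0) =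
      (n.factorial : ℝ) * ∏ j ∈ Finset.range S.card,
        (((Finset.univ.filter fun i => x i).card : ℝ) - j) / ((n : ℝ) - j) := by
  classical
  induction S using Finset.induction_on with
  | empty => simp [Fintype.card_perm]
  | @insert a S ha ih =>
    set ind : Fin n → ℝ := fun j => if x j then (1:ℝ) else 0 with hind
    set m : ℝ := ((Finset.univ.filter fun i => x i).card : ℝ) with hm
    have hkn : S.card < n := by
      have h1 : (insert a S).card ≤ Fintype.card (Fin n) := Finset.card_le_univ _
      simpa [Finset.card_insert_of_notMem ha, Fintype.card_fin] using h1
    have hsum_m : ∀ σ : Equiv.Perm (Fin n), ∑ j : Fin n, ind (σ j) = m := by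
      intro σ
      rw [Equiv.sum_comp σ ind]
      simp [hind, hm, Finset.sum_boole]
    -- independence of j
    have h1 : ∀ j ∉ S, (∑ σ : Equiv.Perm (Fin n), (∏ i ∈ S, ind (σ i)) * ind (σ j)) =
        ∑ σ : Equiv.Perm (Fin n), (∏ i ∈ S, ind (σ i)) * ind (σ a) := by
      intro j hj
      by_cases hja : j = a
      · rw [hja]
      · refine Fintype.sum_equiv (Equiv.mulRight (Equiv.swap a j)) _ _ ?_
        intro σ
        have h2 : ∀ i ∈ S, (σ * Equiv.swap a j) i = σ i := by
          intro i hi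
          have : Equiv.swap a j i = i :=
            Equiv.swap_apply_of_ne_of_ne (by rintro rfl; exact ha hi)
              (by rintro rfl; exact hj hi)
          simp [Equiv.Perm.mul_apply, this]
        have h2' : ∀ i ∈ S, ind ((σ * Equiv.swap a j) i) = ind (σ i) :=
          fun i hi => by rw [h2 i hi]
        have h3' : (σ * Equiv.swap a j) a = σ j := by
          simp [Equiv.Perm.mul_apply]
        simp only [Equiv.coe_mulRight]
        rw [Finset.prod_congr rfl h2', h3']
    -- sum over complement
    have h3 : ∑ j ∈ Sᶜ, ∑ σ : Equiv.Perm (Fin n), (∏ i ∈ S, ind (σ i)) * ind (σ j) =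
        ((n : ℝ) - S.card) * ∑ σ : Equiv.Perm (Fin n), (∏ i ∈ S, ind (σ i)) * ind (σ a) := by
      rw [Finset.sum_congr rfl (fun j hj => h1 j (by simpa using hj))]
      rw [Finset.sum_const, Finset.card_compl, Fintype.card_fin, nsmul_eq_mul,
        Nat.cast_sub hkn.le]
    have h4 : ∑ j ∈ Sᶜ, ∑ σ : Equiv.Perm (Fin n), (∏ i ∈ S, ind (σ i)) * ind (σ j) =
        (m - S.card) * ∑ σ : Equiv.Perm (Fin n), ∏ i ∈ S, ind (σ i) := by
      rw [Finset.sum_comm, Finset.mul_sum]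
      refine Finset.sum_congr rfl fun σ _ => ?_
      rw [← Finset.mul_sum]
      by_cases hall : ∀ i ∈ S, x (σ i) = true
      · have hp : ∏ i ∈ S, ind (σ i) = 1 := by
          apply Finset.prod_eq_one; intro i hi; simp [hind, hall i hi]
        have hs : ∑ j ∈ S, ind (σ j) = (S.card : ℝ) := by
          rw [Finset.sum_congr rfl (fun j hj => by simp [hind, hall j hj] : ∀ j ∈ S, ind (σ j) = 1)]
          simp
        have hcompl : ∑ j ∈ Sᶜ, ind (σ j) = m - S.card := by
          have := Finset.sum_add_sum_compl S (fun j => ind (σ j))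
          rw [hsum_m σ] at this
          linarith [hs, this]
        rw [hp, hcompl]; ring
      · push_neg at hall
        obtain ⟨i, hi, hxi⟩ := hall
        have hp : ∏ i ∈ S, ind (σ i) = 0 :=
          Finset.prod_eq_zero hi (by simp [hind, hxi])
        rw [hp]; ring
    have h5 : ∑ σ : Equiv.Perm (Fin n), ∏ i ∈ insert a S, ind (σ i) =
        ∑ σ : Equiv.Perm (Fin n), (∏ i ∈ S, ind (σ i)) * ind (σ a) := by
      refine Finset.sum_congr rfl fun σ _ => ?_
      rw [Finset.prod_insert ha]; ring
    have hne : (n : ℝ) - S.card ≠ 0 := by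
      have : (S.card : ℝ) < n := by exact_mod_cast hkn
      linarith
    have key : ∑ σ : Equiv.Perm (Fin n), ∏ i ∈ insert a S, ind (σ i) =
        ((m - S.card) / ((n:ℝ) - S.card)) * ∑ σ : Equiv.Perm (Fin n), ∏ i ∈ S, ind (σ i) := by
      rw [h5]
      field_simp
      rw [mul_comm, ← h3, h4]
    rw [key, ih, Finset.card_insert_of_notMem ha, Finset.prod_range_succ]
    ring

theorem stmt17 {n d : ℕ} (φ : MvPolynomial (Fin n) ℝ) (hφ : φ.totalDegree ≤ d) :
    ∃ p : Polynomial ℝ, p.natDegree ≤ d ∧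
      ∀ x : Fin n → Bool,
        (∑ σ : Equiv.Perm (Fin n),
            MvPolynomial.eval (fun i => if x (σ i) then (1 : ℝ) else 0) φ) /
            (Fintype.card (Equiv.Perm (Fin n)) : ℝ) =
          p.eval ((Finset.univ.filter fun i => x i).card : ℝ) := by
  classical
  set q : ℕ → Polynomial ℝ := fun k =>
    ∏ j ∈ Finset.range k,
      (Polynomial.C ((n:ℝ) - j)⁻¹ * (Polynomial.X - Polynomial.C (j:ℝ))) with hq
  refine ⟨∑ a ∈ φ.support, Polynomial.C (φ.coeff a) * q a.support.card, ?_, ?_⟩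
  · apply Polynomial.natDegree_sum_le_of_forall_le
    intro a ha
    refine (Polynomial.natDegree_C_mul_le _ _).trans ?_
    have hdq : (q a.support.card).natDegree ≤ a.support.card := by
      refine (Polynomial.natDegree_prod_le _ _).trans ?_
      have : ∀ j ∈ Finset.range a.support.card,
          (Polynomial.C ((n:ℝ) - j)⁻¹ * (Polynomial.X - Polynomial.C (j:ℝ))).natDegree ≤ 1 := by
        intro j _
        refine (Polynomial.natDegree_C_mul_le _ _).trans ?_
        simpa using Polynomial.natDegree_X_sub_C_le (j : ℝ)
      calc _ ≤ ∑ j ∈ Finset.range a.support.card, 1 := Finset.sum_le_sum this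
        _ = a.support.card := by simp
    refine hdq.trans ?_
    have h1 : a.support.card ≤ a.sum fun _ e => e := by
      rw [Finsupp.sum]
      calc a.support.card = ∑ i ∈ a.support, 1 := by simp
        _ ≤ ∑ i ∈ a.support, a i := by
            refine Finset.sum_le_sum fun i hi => ?_
            exact Nat.one_le_iff_ne_zero.mpr (Finsupp.mem_support_iff.mp hi)
    exact h1.trans ((MvPolynomial.le_totalDegree ha).trans hφ)
  · intro x
    set m : ℝ := ((Finset.univ.filter fun i => x i).card : ℝ) with hm
    have heval : ∀ σ : Equiv.Perm (Fin n),
        MvPolynomial.eval (fun i => if x (σ i) then (1:ℝ) else 0) φ =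
        ∑ a ∈ φ.support, φ.coeff a * ∏ i ∈ a.support, (if x (σ i) then (1:ℝ) else 0) := by
      intro σ
      rw [MvPolynomial.eval_eq']
      refine Finset.sum_congr rfl fun a ha => ?_
      congr 1
      rw [← Finset.prod_subset (Finset.subset_univ a.support)
        (fun i _ hi => by simp [Finsupp.notMem_support_iff.mp hi])]
      refine Finset.prod_congr rfl fun i hi => ?_
      have hne : a i ≠ 0 := Finsupp.mem_support_iff.mp hi
      by_cases hx : x (σ i) <;> simp [hx, hne, zero_pow]
    have hNfac : (Fintype.card (Equiv.Perm (Fin n)) : ℝ) = (n.factorial : ℝ) := by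
      rw [Fintype.card_perm, Fintype.card_fin]
    have hfacne : (n.factorial : ℝ) ≠ 0 := by
      exact_mod_cast n.factorial_ne_zero
    rw [Finset.sum_congr rfl fun σ _ => heval σ, Finset.sum_comm, hNfac]
    rw [Polynomial.eval_finset_sum]
    rw [Finset.sum_div]
    refine Finset.sum_congr rfl fun a ha => ?_
    rw [← Finset.mul_sum, key_count x a.support, ← hm]
    rw [Polynomial.eval_mul, Polynomial.eval_C, hq]
    rw [Polynomial.eval_prod]
    have hprod : ∏ j ∈ Finset.range a.support.card,
        Polynomial.eval m (Polynomial.C ((n:ℝ) - j)⁻¹ * (Polynomial.X - Polynomial.C (j:ℝ))) =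
        ∏ j ∈ Finset.range a.support.card, (m - j) / ((n:ℝ) - j) :=
      Finset.prod_congr rfl fun j _ => by simp [div_eq_inv_mul]
    rw [hprod, mul_div_assoc, mul_div_cancel_left₀ _ hfacne]
end
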